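/- arXiv:1708.08682 — 9 statements merged into one kernel-verified Lean document; each statement's English description precedes it below -/
import Mathlib

section
/- Suppose additionally that φ'(x) ≠ 0 for all x ∈ I. Then the identity E₁ = −q²·φ²·φ'³·( ((qφ')'·φ)/(q·φ'²) )' holds everywhere on I. -/
open Real Set MeasureTheory

/-- `A = (qφ')'φ − qφ'²` from Definition 1. -/
noncomputable def Afun (q φ : ℝ → ℝ) : ℝ → ℝ :=
  fun x => deriv (fun y => q y * deriv φ y) x * φ x - q x * (deriv φ x) ^ 2

/-- `B₀ = (qφ')'φ²` from Definition 1. -/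
noncomputable def B0fun (q φ : ℝ → ℝ) : ℝ → ℝ :=
  fun x => deriv (fun y => q y * deriv φ y) x * (φ x) ^ 2

/-- `B = (qφ'M)'φ²` from Definition 1. -/
noncomputable def Bfun (q φ M : ℝ → ℝ) : ℝ → ℝ :=
  fun x => deriv (fun y => q y * deriv φ y * M y) x * (φ x) ^ 2

/-- `C = qφ²φ'²M²` from Definition 1. -/
noncomputable def Cfun (q φ M : ℝ → ℝ) : ℝ → ℝ :=
  fun x => q x * (φ x) ^ 2 * (deriv φ x) ^ 2 * (M x) ^ 2

/-- `E₂ = A q φ φ'² − B₀' q φ φ' + (qφ')' φ q (φ²φ')'` from Definition 1. -/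
noncomputable def E2fun (q φ : ℝ → ℝ) : ℝ → ℝ :=
  fun x => Afun q φ x * q x * φ x * (deriv φ x) ^ 2
    - deriv (B0fun q φ) x * q x * φ x * deriv φ x
    + deriv (fun y => q y * deriv φ y) x * φ x * q x *
        deriv (fun y => (φ y) ^ 2 * deriv φ y) x

/-- `E₁ = A²φ + E₂` from Definition 1. -/
noncomputable def E1fun (q φ : ℝ → ℝ) : ℝ → ℝ :=
  fun x => (Afun q φ x) ^ 2 * φ x + E2fun q φ x

/-- `F₁ = (B − √(B²−4AC))/(2A)` from Definition 1. -/
noncomputable def F1fun (q φ M : ℝ → ℝ) : ℝ → ℝ :=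
  fun x => (Bfun q φ M x -
    Real.sqrt ((Bfun q φ M x) ^ 2 - 4 * Afun q φ x * Cfun q φ M x)) / (2 * Afun q φ x)

/-- `F₂ = (B + √(B²−4AC))/(2A)` from Definition 1. -/
noncomputable def F2fun (q φ M : ℝ → ℝ) : ℝ → ℝ :=
  fun x => (Bfun q φ M x +
    Real.sqrt ((Bfun q φ M x) ^ 2 - 4 * Afun q φ x * Cfun q φ M x)) / (2 * Afun q φ x)

/-- Lemma 3, identity (2): if `φ' ≠ 0` on `I` then
`E₁ = −q²·φ²·φ'³·( ((qφ')'·φ)/(q·φ'²) )'` on `I`. -/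
theorem stmt1 (I : Set ℝ) (hI : IsOpen I) (hne : I.Nonempty) (hconn : I.OrdConnected)
    (q φ : ℝ → ℝ)
    (hqpos : ∀ x ∈ I, 0 < q x)
    (hq1 : ∀ x ∈ I, DifferentiableAt ℝ q x)
    (hq2 : ∀ x ∈ I, DifferentiableAt ℝ (deriv q) x)
    (hφ1 : ∀ x ∈ I, DifferentiableAt ℝ φ x)
    (hφ2 : ∀ x ∈ I, DifferentiableAt ℝ (deriv φ) x)
    (hφ3 : ∀ x ∈ I, DifferentiableAt ℝ (deriv (deriv φ)) x)
    (hφ' : ∀ x ∈ I, deriv φ x ≠ 0) :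
    ∀ x ∈ I, E1fun q φ x =
      -(q x) ^ 2 * (φ x) ^ 2 * (deriv φ x) ^ 3 *
        deriv (fun y =>
          deriv (fun z => q z * deriv φ z) y * φ y / (q y * (deriv φ y) ^ 2)) x := by
  intro x hx
  have hqx : q x ≠ 0 := (hqpos x hx).ne'
  have hφx : deriv φ x ≠ 0 := hφ' x hx
  -- first derivative of q * φ'
  have hg : ∀ y ∈ I, HasDerivAt (fun z => q z * deriv φ z)
      (deriv q y * deriv φ y + q y * deriv (deriv φ) y) y :=
    fun y hy => (hq1 y hy).hasDerivAt.mul (hφ2 y hy).hasDerivAt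
  have hgderiv : Set.EqOn (fun y => deriv (fun z => q z * deriv φ z) y)
      (fun y => deriv q y * deriv φ y + q y * deriv (deriv φ) y) I :=
    fun y hy => (hg y hy).deriv
  -- second derivative of q * φ' at x
  have hgd2 : HasDerivAt (fun y => deriv (fun z => q z * deriv φ z) y)
      ((deriv (deriv q) x * deriv φ x + deriv q x * deriv (deriv φ) x) +
        (deriv q x * deriv (deriv φ) x + q x * deriv (deriv (deriv φ)) x)) x := by
    have h1 : HasDerivAt (fun y => deriv q y * deriv φ y + q y * deriv (deriv φ) y)
        ((deriv (deriv q) x * deriv φ x + deriv q x * deriv (deriv φ) x) +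
          (deriv q x * deriv (deriv φ) x + q x * deriv (deriv (deriv φ)) x)) x :=
      ((hq2 x hx).hasDerivAt.mul (hφ2 x hx).hasDerivAt).add
        ((hq1 x hx).hasDerivAt.mul (hφ3 x hx).hasDerivAt)
    exact h1.congr_of_eventuallyEq
      (Filter.eventuallyEq_of_mem (hI.mem_nhds hx) hgderiv)
  -- derivative of B0
  have hB0 : HasDerivAt (B0fun q φ)
      (((deriv (deriv q) x * deriv φ x + deriv q x * deriv (deriv φ) x) +
        (deriv q x * deriv (deriv φ) x + q x * deriv (deriv (deriv φ)) x)) * (φ x) ^ 2 +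
        deriv (fun z => q z * deriv φ z) x * (2 * φ x ^ 1 * deriv φ x)) x :=
    hgd2.mul ((hφ1 x hx).hasDerivAt.pow 2)
  -- derivative of φ² φ'
  have hP : HasDerivAt (fun y => (φ y) ^ 2 * deriv φ y)
      ((2 * φ x ^ 1 * deriv φ x) * deriv φ x + (φ x) ^ 2 * deriv (deriv φ) x) x :=
    ((hφ1 x hx).hasDerivAt.pow 2).mul (hφ2 x hx).hasDerivAt
  -- quotient
  have hN : HasDerivAt (fun y => deriv (fun z => q z * deriv φ z) y * φ y)
      (((deriv (deriv q) x * deriv φ x + deriv q x * deriv (deriv φ) x) +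
        (deriv q x * deriv (deriv φ) x + q x * deriv (deriv (deriv φ)) x)) * φ x +
        deriv (fun z => q z * deriv φ z) x * deriv φ x) x :=
    hgd2.mul (hφ1 x hx).hasDerivAt
  have hD : HasDerivAt (fun y => q y * (deriv φ y) ^ 2)
      (deriv q x * (deriv φ x) ^ 2 +
        q x * (2 * deriv φ x ^ 1 * deriv (deriv φ) x)) x :=
    (hq1 x hx).hasDerivAt.mul ((hφ2 x hx).hasDerivAt.pow 2)
  have hDx : q x * (deriv φ x) ^ 2 ≠ 0 := mul_ne_zero hqx (pow_ne_zero 2 hφx)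
  have hQ : deriv (fun y => deriv (fun z => q z * deriv φ z) y * φ y / (q y * (deriv φ y) ^ 2)) x = _ :=
    (hN.div hD hDx).deriv
  rw [hQ]
  simp only [E1fun, E2fun, Afun]
  rw [hB0.deriv, hP.deriv, (hg x hx).deriv]
  field_simp
  ring
end

section
/- The identity B'·q·φ²·φ'·M = B·(B − B₀·M) + B₀'·q·φ²·φ'·M² + (φ²φ')'·q·M·(B − B₀·M) + C·φ²·(q·M'/M)' holds everywhere on I. -/
open Real Set MeasureTheory

/-- Lemma 4, identity (4):
`B'·q·φ²·φ'·M = B·(B − B₀·M) + B₀'·q·φ²·φ'·M² + (φ²φ')'·q·M·(B − B₀·M) + C·φ²·(q·M'/M)'`. -/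
theorem stmt2 (I : Set ℝ) (hI : IsOpen I) (hne : I.Nonempty) (hconn : I.OrdConnected)
    (q φ : ℝ → ℝ)
    (hqpos : ∀ x ∈ I, 0 < q x)
    (hq1 : ∀ x ∈ I, DifferentiableAt ℝ q x)
    (hq2 : ∀ x ∈ I, DifferentiableAt ℝ (deriv q) x)
    (hφ1 : ∀ x ∈ I, DifferentiableAt ℝ φ x)
    (hφ2 : ∀ x ∈ I, DifferentiableAt ℝ (deriv φ) x)
    (hφ3 : ∀ x ∈ I, DifferentiableAt ℝ (deriv (deriv φ)) x)
    (M : ℝ → ℝ)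
    (hMpos : ∀ x ∈ I, 0 < M x)
    (hM1 : ∀ x ∈ I, DifferentiableAt ℝ M x)
    (hM2 : ∀ x ∈ I, DifferentiableAt ℝ (deriv M) x) :
    ∀ x ∈ I, deriv (Bfun q φ M) x * q x * (φ x) ^ 2 * deriv φ x * M x =
      Bfun q φ M x * (Bfun q φ M x - B0fun q φ x * M x)
        + deriv (B0fun q φ) x * q x * (φ x) ^ 2 * deriv φ x * (M x) ^ 2
        + deriv (fun y => (φ y) ^ 2 * deriv φ y) x * q x * M x *
            (Bfun q φ M x - B0fun q φ x * M x)
        + Cfun q φ M x * (φ x) ^ 2 * deriv (fun y => q y * deriv M y / M y) x := by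

  intro x hx
  have hIx : I ∈ nhds x := hI.mem_nhds hx
  have hmem : ∀ᶠ y in nhds x, y ∈ I := hIx
  have hM0 : M x ≠ 0 := (hMpos x hx).ne'
  have hq1' := (hq1 x hx).hasDerivAt
  have hq2' := (hq2 x hx).hasDerivAt
  have hφ1' := (hφ1 x hx).hasDerivAt
  have hφ2' := (hφ2 x hx).hasDerivAt
  have hφ3' := (hφ3 x hx).hasDerivAt
  have hM1' := (hM1 x hx).hasDerivAt
  have hM2' := (hM2 x hx).hasDerivAt
  have hu : ∀ y ∈ I, deriv (fun z => q z * deriv φ z) y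
      = deriv q y * deriv φ y + q y * deriv (deriv φ) y := fun y hy =>
    deriv_mul (hq1 y hy) (hφ2 y hy)
  have huM : ∀ y ∈ I, deriv (fun z => q z * deriv φ z * M z) y
      = (deriv q y * deriv φ y + q y * deriv (deriv φ) y) * M y
        + q y * deriv φ y * deriv M y := by
    intro y hy
    rw [deriv_fun_mul (c := fun z => q z * deriv φ z) ((hq1 y hy).mul (hφ2 y hy)) (hM1 y hy), hu y hy]
  -- derivative of B0fun at x
  have hB0ev : B0fun q φ =ᶠ[nhds x]
      fun y => (deriv q y * deriv φ y + q y * deriv (deriv φ) y) * (φ y) ^ 2 := by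
    filter_upwards [hmem] with y hy
    simp [B0fun, hu y hy]
  have hF0 := ((hq2'.mul hφ2').add (hq1'.mul hφ3')).mul (hφ1'.pow 2)
  have e2 := hB0ev.deriv_eq.trans hF0.deriv
  -- derivative of Bfun at x
  have hBev : Bfun q φ M =ᶠ[nhds x]
      fun y => ((deriv q y * deriv φ y + q y * deriv (deriv φ) y) * M y
        + q y * deriv φ y * deriv M y) * (φ y) ^ 2 := by
    filter_upwards [hmem] with y hy
    simp [Bfun, huM y hy]
  have hF1 := ((((hq2'.mul hφ2').add (hq1'.mul hφ3')).mul hM1').add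
    ((hq1'.mul hφ2').mul hM2')).mul (hφ1'.pow 2)
  have e1 := hBev.deriv_eq.trans hF1.deriv
  -- derivative of φ²φ'
  have e3 := ((hφ1'.fun_pow 2).fun_mul hφ2').deriv
  -- derivative of q M' / M
  have e4 := ((hq1'.fun_mul hM2').fun_div hM1' hM0).deriv
  simp only [Bfun, B0fun, Cfun]
  rw [e1, e2, e3, e4, huM x hx, hu x hx]
  simp only [Pi.mul_apply, Pi.add_apply, Pi.pow_apply]
  field_simp
  ring
end

section
/- Let h : I → ℝ satisfy h' = φ'·M on I, and let J ⊆ I be a nonempty open subinterval on which A(x) ≠ 0 for all x ∈ J and B² − 4AC ≥ 0 on J. Then the identity (h − F₁)'·A·(F₂ − F₁)·q·φ²·φ'·M = F₁·( (F₁ − φM)·(A²·(F₁ − φM) + E₁·M) + C·φ²·(q·M'/M)' ) holds everywhere on J. -/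
open Real Set MeasureTheory

lemma key1 (q0 q1 q2 f0 f1 f2 f3 m0 m1 m2 r g a a1 b b1 c c1 e1 : ℝ)
    (ha0 : a = (q1*f1+q0*f2)*f0 - q0*f1^2)
    (ha1 : a1 = (q2*f1+2*q1*f2+q0*f3)*f0 + (q1*f1+q0*f2)*f1 - q1*f1^2 - 2*q0*f1*f2)
    (hb0 : b = (q1*f1*m0+q0*f2*m0+q0*f1*m1)*f0^2)
    (hb1 : b1 = (q2*f1*m0+2*q1*f2*m0+2*q1*f1*m1+q0*f3*m0+2*q0*f2*m1+q0*f1*m2)*f0^2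
        + (q1*f1*m0+q0*f2*m0+q0*f1*m1)*(2*f0*f1))
    (hc0 : c = q0*f0^2*f1^2*m0^2)
    (hc1 : c1 = q1*f0^2*f1^2*m0^2 + 2*q0*f0*f1^3*m0^2 + 2*q0*f0^2*f1*f2*m0^2
        + 2*q0*f0^2*f1^2*m0*m1)
    (he1 : e1 = a^2*f0 + (a*q0*f0*f1^2
        - ((q2*f1+2*q1*f2+q0*f3)*f0^2 + (q1*f1+q0*f2)*(2*f0*f1))*q0*f0*f1
        + (q1*f1+q0*f2)*f0*q0*(2*f0*f1^2+f0^2*f2)))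
    (ha : a ≠ 0) (hm : m0 ≠ 0)
    (hquad : a*r^2 - b*r + c = 0)
    (hg : g*m0^2 = (q1*m1+q0*m2)*m0 - q0*m1^2) :
    (f1*m0*(b - 2*a*r) - (a1*r^2 - b1*r + c1)) * (q0*f0^2*f1*m0)
      = r*((r - f0*m0)*(a^2*(r - f0*m0) + e1*m0) + c*f0^2*g) := by
  have key : (a*m0^2) * ((f1*m0*(b - 2*a*r) - (a1*r^2 - b1*r + c1)) * (q0*f0^2*f1*m0))
      = (a*m0^2) * (r*((r - f0*m0)*(a^2*(r - f0*m0) + e1*m0) + c*f0^2*g)) := by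
    subst ha0 ha1 hb0 hb1 hc0 hc1 he1
    linear_combination ((-((q1*f1+q0*f2)*f0 - q0*f1^2)^2*r
      + (-(((q2*f1+2*q1*f2+q0*f3)*f0 + (q1*f1+q0*f2)*f1 - q1*f1^2 - 2*q0*f1*f2))*(q0*f0^2*f1*m0)
        + 2*(((q1*f1+q0*f2)*f0 - q0*f1^2))^2*f0*m0
        - ((((q1*f1+q0*f2)*f0 - q0*f1^2))^2*f0 + ((((q1*f1+q0*f2)*f0 - q0*f1^2))*q0*f0*f1^2
          - ((q2*f1+2*q1*f2+q0*f3)*f0^2 + (q1*f1+q0*f2)*(2*f0*f1))*q0*f0*f1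
          + (q1*f1+q0*f2)*f0*q0*(2*f0*f1^2+f0^2*f2)))*m0)
      - (((q1*f1+q0*f2)*f0 - q0*f1^2))*((q1*f1*m0+q0*f2*m0+q0*f1*m1)*f0^2))*m0^2) * hquad
      - ((((q1*f1+q0*f2)*f0 - q0*f1^2))*r*(q0*f0^2*f1^2*m0^2)*f0^2) * hg
  exact mul_left_cancel₀ (mul_ne_zero ha (pow_ne_zero 2 hm)) key

/-- Lemma 5, identity (6): on a subinterval `J` where `A ≠ 0` and `B² − 4AC ≥ 0`,
`(h−F₁)'·A·(F₂−F₁)·q·φ²·φ'·M = F₁·((F₁−φM)·(A²·(F₁−φM)+E₁·M)+C·φ²·(q·M'/M)')`. -/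
theorem stmt4 (I : Set ℝ) (hI : IsOpen I) (hne : I.Nonempty) (hconn : I.OrdConnected)
    (q φ : ℝ → ℝ)
    (hqpos : ∀ x ∈ I, 0 < q x)
    (hq1 : ∀ x ∈ I, DifferentiableAt ℝ q x)
    (hq2 : ∀ x ∈ I, DifferentiableAt ℝ (deriv q) x)
    (hφ1 : ∀ x ∈ I, DifferentiableAt ℝ φ x)
    (hφ2 : ∀ x ∈ I, DifferentiableAt ℝ (deriv φ) x)
    (hφ3 : ∀ x ∈ I, DifferentiableAt ℝ (deriv (deriv φ)) x)
    (M : ℝ → ℝ)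
    (hMpos : ∀ x ∈ I, 0 < M x)
    (hM1 : ∀ x ∈ I, DifferentiableAt ℝ M x)
    (hM2 : ∀ x ∈ I, DifferentiableAt ℝ (deriv M) x)
    (h : ℝ → ℝ) (hh : ∀ x ∈ I, HasDerivAt h (deriv φ x * M x) x)
    (J : Set ℝ) (hJ : IsOpen J) (hJne : J.Nonempty) (hJconn : J.OrdConnected)
    (hJI : J ⊆ I)
    (hA : ∀ x ∈ J, Afun q φ x ≠ 0)
    (hdisc : ∀ x ∈ J, 0 ≤ (Bfun q φ M x) ^ 2 - 4 * Afun q φ x * Cfun q φ M x) :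
    ∀ x ∈ J,
      deriv (fun y => h y - F1fun q φ M y) x * Afun q φ x *
          (F2fun q φ M x - F1fun q φ M x) * q x * (φ x) ^ 2 * deriv φ x * M x =
        F1fun q φ M x *
          ((F1fun q φ M x - φ x * M x) *
              ((Afun q φ x) ^ 2 * (F1fun q φ M x - φ x * M x) + E1fun q φ x * M x)
            + Cfun q φ M x * (φ x) ^ 2 * deriv (fun y => q y * deriv M y / M y) x) := by
  -- quadratic identity on J
  have hZJ : ∀ y ∈ J, Afun q φ y * (F1fun q φ M y)^2 - Bfun q φ M y * F1fun q φ M y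
      + Cfun q φ M y = 0 := by
    intro y hy
    have hay := hA y hy
    have hsqy := Real.sq_sqrt (hdisc y hy)
    have hry : 2 * Afun q φ y * F1fun q φ M y = Bfun q φ M y -
        Real.sqrt ((Bfun q φ M y) ^ 2 - 4 * Afun q φ y * Cfun q φ M y) := by
      simp only [F1fun]; field_simp
    have h4 : 4 * Afun q φ y * (Afun q φ y * (F1fun q φ M y)^2
        - Bfun q φ M y * F1fun q φ M y + Cfun q φ M y) = 0 := by
      linear_combination (2 * Afun q φ y * F1fun q φ M y + (Bfun q φ M y -
        Real.sqrt ((Bfun q φ M y) ^ 2 - 4 * Afun q φ y * Cfun q φ M y))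
        - 2 * Bfun q φ M y) * hry + hsqy
    exact (mul_eq_zero.mp h4).resolve_left (mul_ne_zero (by norm_num) hay)
  intro x hx
  have hxI : x ∈ I := hJI hx
  have ha := hA x hx
  have hmne : M x ≠ 0 := ne_of_gt (hMpos x hxI)
  -- pointwise HasDerivAt facts on I
  have hqφ : ∀ y ∈ I, HasDerivAt (fun z => q z * deriv φ z)
      (deriv q y * deriv φ y + q y * deriv (deriv φ) y) y :=
    fun y hy => ((hq1 y hy).hasDerivAt.mul (hφ2 y hy).hasDerivAt)
  have hqφM : ∀ y ∈ I, HasDerivAt (fun z => q z * deriv φ z * M z)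
      ((deriv q y * deriv φ y + q y * deriv (deriv φ) y) * M y
        + q y * deriv φ y * deriv M y) y :=
    fun y hy => (hqφ y hy).mul (hM1 y hy).hasDerivAt
  have hIx : I ∈ nhds x := hI.mem_nhds hxI
  -- eventual equalities
  have evA : Afun q φ =ᶠ[nhds x] (fun y =>
      (deriv q y * deriv φ y + q y * deriv (deriv φ) y) * φ y - q y * (deriv φ y) ^ 2) :=
    Filter.eventuallyEq_of_mem hIx (fun y hy => by
      simp only [Afun]; rw [(hqφ y hy).deriv])
  have evB : Bfun q φ M =ᶠ[nhds x] (fun y =>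
      ((deriv q y * deriv φ y + q y * deriv (deriv φ) y) * M y
        + q y * deriv φ y * deriv M y) * (φ y) ^ 2) :=
    Filter.eventuallyEq_of_mem hIx (fun y hy => by
      simp only [Bfun]; rw [(hqφM y hy).deriv])
  have evB0 : B0fun q φ =ᶠ[nhds x] (fun y =>
      (deriv q y * deriv φ y + q y * deriv (deriv φ) y) * (φ y) ^ 2) :=
    Filter.eventuallyEq_of_mem hIx (fun y hy => by
      simp only [B0fun]; rw [(hqφ y hy).deriv])
  -- HasDerivAt for the coefficient functions, with key1-shaped values
  have HW : HasDerivAt (fun y => deriv q y * deriv φ y + q y * deriv (deriv φ) y)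
      (deriv (deriv q) x * deriv φ x + deriv q x * deriv (deriv φ) x
        + (deriv q x * deriv (deriv φ) x + q x * deriv (deriv (deriv φ)) x)) x :=
    ((hq2 x hxI).hasDerivAt.mul (hφ2 x hxI).hasDerivAt).add
      ((hq1 x hxI).hasDerivAt.mul (hφ3 x hxI).hasDerivAt)
  have HA : HasDerivAt (Afun q φ)
      ((deriv (deriv q) x*deriv φ x+2*deriv q x*deriv (deriv φ) x
          +q x*deriv (deriv (deriv φ)) x)*φ x
        + (deriv q x*deriv φ x+q x*deriv (deriv φ) x)*deriv φ x
        - deriv q x*(deriv φ x)^2 - 2*q x*deriv φ x*deriv (deriv φ) x) x := by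
    have h1 := (HW.mul (hφ1 x hxI).hasDerivAt).sub
      ((hq1 x hxI).hasDerivAt.mul ((hφ2 x hxI).hasDerivAt.pow 2))
    have h2 : HasDerivAt (fun y =>
        (deriv q y * deriv φ y + q y * deriv (deriv φ) y) * φ y - q y * (deriv φ y) ^ 2)
        ((deriv (deriv q) x*deriv φ x+2*deriv q x*deriv (deriv φ) x
          +q x*deriv (deriv (deriv φ)) x)*φ x
        + (deriv q x*deriv φ x+q x*deriv (deriv φ) x)*deriv φ x
        - deriv q x*(deriv φ x)^2 - 2*q x*deriv φ x*deriv (deriv φ) x) x := by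
      refine h1.congr_deriv ?_; simp only [Pi.pow_apply, Nat.cast_ofNat, Nat.reduceSub, pow_one]; ring
    exact h2.congr_of_eventuallyEq evA
  have HB : HasDerivAt (Bfun q φ M)
      ((deriv (deriv q) x*deriv φ x*M x+2*deriv q x*deriv (deriv φ) x*M x
          +2*deriv q x*deriv φ x*deriv M x+q x*deriv (deriv (deriv φ)) x*M x
          +2*q x*deriv (deriv φ) x*deriv M x+q x*deriv φ x*deriv (deriv M) x)*(φ x)^2
        + (deriv q x*deriv φ x*M x+q x*deriv (deriv φ) x*M x+q x*deriv φ x*deriv M x)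
          *(2*φ x*deriv φ x)) x := by
    have h1 := ((HW.mul (hM1 x hxI).hasDerivAt).add
        ((hqφ x hxI).mul (hM2 x hxI).hasDerivAt)).mul ((hφ1 x hxI).hasDerivAt.pow 2)
    have h2 : HasDerivAt (fun y =>
        ((deriv q y * deriv φ y + q y * deriv (deriv φ) y) * M y
          + q y * deriv φ y * deriv M y) * (φ y) ^ 2)
        ((deriv (deriv q) x*deriv φ x*M x+2*deriv q x*deriv (deriv φ) x*M x
          +2*deriv q x*deriv φ x*deriv M x+q x*deriv (deriv (deriv φ)) x*M x
          +2*q x*deriv (deriv φ) x*deriv M x+q x*deriv φ x*deriv (deriv M) x)*(φ x)^2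
        + (deriv q x*deriv φ x*M x+q x*deriv (deriv φ) x*M x+q x*deriv φ x*deriv M x)
          *(2*φ x*deriv φ x)) x := by
      refine h1.congr_deriv ?_; simp only [Pi.pow_apply, Pi.mul_apply, Pi.add_apply, Nat.cast_ofNat, Nat.reduceSub, pow_one]; ring
    exact h2.congr_of_eventuallyEq evB
  have HC : HasDerivAt (Cfun q φ M)
      (deriv q x*(φ x)^2*(deriv φ x)^2*(M x)^2 + 2*q x*φ x*(deriv φ x)^3*(M x)^2
        + 2*q x*(φ x)^2*deriv φ x*deriv (deriv φ) x*(M x)^2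
        + 2*q x*(φ x)^2*(deriv φ x)^2*(M x)*deriv M x) x := by
    have h1 := (((hq1 x hxI).hasDerivAt.mul ((hφ1 x hxI).hasDerivAt.pow 2)).mul
      ((hφ2 x hxI).hasDerivAt.pow 2)).mul ((hM1 x hxI).hasDerivAt.pow 2)
    have h2 : HasDerivAt (fun y => q y * (φ y) ^ 2 * (deriv φ y) ^ 2 * (M y) ^ 2)
        (deriv q x*(φ x)^2*(deriv φ x)^2*(M x)^2 + 2*q x*φ x*(deriv φ x)^3*(M x)^2
        + 2*q x*(φ x)^2*deriv φ x*deriv (deriv φ) x*(M x)^2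
        + 2*q x*(φ x)^2*(deriv φ x)^2*(M x)*deriv M x) x := by
      refine h1.congr_deriv ?_; simp only [Pi.pow_apply, Pi.mul_apply, Pi.add_apply, Nat.cast_ofNat, Nat.reduceSub, pow_one]; ring
    exact h2
  have HB0 : HasDerivAt (B0fun q φ)
      ((deriv (deriv q) x*deriv φ x+2*deriv q x*deriv (deriv φ) x
          +q x*deriv (deriv (deriv φ)) x)*(φ x)^2
        + (deriv q x*deriv φ x+q x*deriv (deriv φ) x)*(2*φ x*deriv φ x)) x := by
    have h1 := HW.mul ((hφ1 x hxI).hasDerivAt.pow 2)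
    have h2 : HasDerivAt (fun y =>
        (deriv q y * deriv φ y + q y * deriv (deriv φ) y) * (φ y) ^ 2)
        ((deriv (deriv q) x*deriv φ x+2*deriv q x*deriv (deriv φ) x
          +q x*deriv (deriv (deriv φ)) x)*(φ x)^2
        + (deriv q x*deriv φ x+q x*deriv (deriv φ) x)*(2*φ x*deriv φ x)) x := by
      refine h1.congr_deriv ?_; simp only [Pi.pow_apply, Nat.cast_ofNat, Nat.reduceSub, pow_one]; ring
    exact h2.congr_of_eventuallyEq evB0
  have Hffp : HasDerivAt (fun y => (φ y) ^ 2 * deriv φ y)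
      (2*φ x*(deriv φ x)^2 + (φ x)^2*deriv (deriv φ) x) x := by
    have h1 := ((hφ1 x hxI).hasDerivAt.pow 2).mul (hφ2 x hxI).hasDerivAt
    refine h1.congr_deriv ?_; simp only [Pi.pow_apply, Nat.cast_ofNat, Nat.reduceSub, pow_one]; ring
  -- values
  have ha0v : Afun q φ x = (deriv q x*deriv φ x+q x*deriv (deriv φ) x)*φ x
      - q x*(deriv φ x)^2 := by
    simp only [Afun]; rw [(hqφ x hxI).deriv]
  have hb0v : Bfun q φ M x = (deriv q x*deriv φ x*M x+q x*deriv (deriv φ) x*M x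
      +q x*deriv φ x*deriv M x)*(φ x)^2 := by
    simp only [Bfun]; rw [(hqφM x hxI).deriv]; ring
  have hc0v : Cfun q φ M x = q x*(φ x)^2*(deriv φ x)^2*(M x)^2 := rfl
  have he1v : E1fun q φ x = (Afun q φ x)^2*φ x + (Afun q φ x*q x*φ x*(deriv φ x)^2
      - ((deriv (deriv q) x*deriv φ x+2*deriv q x*deriv (deriv φ) x
          +q x*deriv (deriv (deriv φ)) x)*(φ x)^2
        + (deriv q x*deriv φ x+q x*deriv (deriv φ) x)*(2*φ x*deriv φ x))*q x*φ x*deriv φ x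
      + (deriv q x*deriv φ x+q x*deriv (deriv φ) x)*φ x*q x
          *(2*φ x*(deriv φ x)^2+(φ x)^2*deriv (deriv φ) x)) := by
    simp only [E1fun, E2fun]
    rw [(hqφ x hxI).deriv, HB0.deriv, Hffp.deriv]
  have hgv : deriv (fun y => q y * deriv M y / M y) x * (M x)^2
      = (deriv q x*deriv M x+q x*deriv (deriv M) x)*M x - q x*(deriv M x)^2 := by
    have HDg : HasDerivAt (fun y => q y * deriv M y / M y)
        (((deriv q x * deriv M x + q x * deriv (deriv M) x) * M x
          - q x * deriv M x * deriv M x) / (M x) ^ 2) x :=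
      ((hq1 x hxI).hasDerivAt.mul (hM2 x hxI).hasDerivAt).div (hM1 x hxI).hasDerivAt hmne
    rw [HDg.deriv]; field_simp
  -- sqrt facts
  have hsq : (Real.sqrt ((Bfun q φ M x) ^ 2 - 4 * Afun q φ x * Cfun q φ M x))^2
      = (Bfun q φ M x) ^ 2 - 4 * Afun q φ x * Cfun q φ M x := Real.sq_sqrt (hdisc x hx)
  have hr : 2 * Afun q φ x * F1fun q φ M x = Bfun q φ M x -
      Real.sqrt ((Bfun q φ M x) ^ 2 - 4 * Afun q φ x * Cfun q φ M x) := by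
    simp only [F1fun]; field_simp
  have hquad : Afun q φ x * (F1fun q φ M x)^2 - Bfun q φ M x * F1fun q φ M x
      + Cfun q φ M x = 0 := hZJ x hx
  -- the key algebraic identity instantiated
  have E := key1 (q x) (deriv q x) (deriv (deriv q) x) (φ x) (deriv φ x)
    (deriv (deriv φ) x) (deriv (deriv (deriv φ)) x) (M x) (deriv M x) (deriv (deriv M) x)
    (F1fun q φ M x) (deriv (fun y => q y * deriv M y / M y) x)
    (Afun q φ x)
    ((deriv (deriv q) x*deriv φ x+2*deriv q x*deriv (deriv φ) x
        +q x*deriv (deriv (deriv φ)) x)*φ x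
      + (deriv q x*deriv φ x+q x*deriv (deriv φ) x)*deriv φ x
      - deriv q x*(deriv φ x)^2 - 2*q x*deriv φ x*deriv (deriv φ) x)
    (Bfun q φ M x)
    ((deriv (deriv q) x*deriv φ x*M x+2*deriv q x*deriv (deriv φ) x*M x
        +2*deriv q x*deriv φ x*deriv M x+q x*deriv (deriv (deriv φ)) x*M x
        +2*q x*deriv (deriv φ) x*deriv M x+q x*deriv φ x*deriv (deriv M) x)*(φ x)^2
      + (deriv q x*deriv φ x*M x+q x*deriv (deriv φ) x*M x+q x*deriv φ x*deriv M x)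
        *(2*φ x*deriv φ x))
    (Cfun q φ M x)
    (deriv q x*(φ x)^2*(deriv φ x)^2*(M x)^2 + 2*q x*φ x*(deriv φ x)^3*(M x)^2
      + 2*q x*(φ x)^2*deriv φ x*deriv (deriv φ) x*(M x)^2
      + 2*q x*(φ x)^2*(deriv φ x)^2*(M x)*deriv M x)
    (E1fun q φ x)
    ha0v rfl hb0v rfl hc0v rfl he1v
    ha hmne hquad hgv
  rcases eq_or_lt_of_le (hdisc x hx) with hdd | hdd
  · -- discriminant zero case
    have hseq : Real.sqrt ((Bfun q φ M x) ^ 2 - 4 * Afun q φ x * Cfun q φ M x) = 0 := by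
      rw [← hdd, Real.sqrt_zero]
    have hF21 : F2fun q φ M x - F1fun q φ M x = 0 := by
      simp only [F1fun, F2fun]; rw [hseq]; ring
    rw [hF21]
    have hb2 : (Bfun q φ M x)^2 = 4 * Afun q φ x * Cfun q φ M x := by linear_combination -hdd
    rw [hseq, sub_zero] at hr
    -- local minimum of the discriminant
    have hmin : IsLocalMin (fun y => (Bfun q φ M y) ^ 2 - 4 * Afun q φ y * Cfun q φ M y) x := by
      have hmo : IsMinOn (fun y => (Bfun q φ M y) ^ 2 - 4 * Afun q φ y * Cfun q φ M y) J x := by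
        rw [isMinOn_iff]
        intro y hy
        have h1 := hdisc y hy
        linarith [hdd]
      exact hmo.isLocalMin (hJ.mem_nhds hx)
    have hd0 : deriv (fun y => (Bfun q φ M y) ^ 2 - 4 * Afun q φ y * Cfun q φ M y) x = 0 :=
      hmin.deriv_eq_zero
    have HD := (HB.pow 2).sub ((HA.const_mul 4).mul HC)
    have h9 := HD.deriv
    simp only [Pi.pow_apply, Nat.cast_ofNat, Nat.reduceSub, pow_one] at h9
    rw [show (Bfun q φ M ^ 2 - (fun y => 4 * Afun q φ y) * Cfun q φ M) = (fun y =>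
      (Bfun q φ M y) ^ 2 - 4 * Afun q φ y * Cfun q φ M y) from rfl, hd0] at h9
    have hd' : 2*Bfun q φ M x*((deriv (deriv q) x*deriv φ x*M x
          +2*deriv q x*deriv (deriv φ) x*M x
          +2*deriv q x*deriv φ x*deriv M x+q x*deriv (deriv (deriv φ)) x*M x
          +2*q x*deriv (deriv φ) x*deriv M x+q x*deriv φ x*deriv (deriv M) x)*(φ x)^2
        + (deriv q x*deriv φ x*M x+q x*deriv (deriv φ) x*M x+q x*deriv φ x*deriv M x)
          *(2*φ x*deriv φ x))
      - 4*((deriv (deriv q) x*deriv φ x+2*deriv q x*deriv (deriv φ) x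
          +q x*deriv (deriv (deriv φ)) x)*φ x
        + (deriv q x*deriv φ x+q x*deriv (deriv φ) x)*deriv φ x
        - deriv q x*(deriv φ x)^2 - 2*q x*deriv φ x*deriv (deriv φ) x)*Cfun q φ M x
      - 4*Afun q φ x*(deriv q x*(φ x)^2*(deriv φ x)^2*(M x)^2
          + 2*q x*φ x*(deriv φ x)^3*(M x)^2
          + 2*q x*(φ x)^2*deriv φ x*deriv (deriv φ) x*(M x)^2
          + 2*q x*(φ x)^2*(deriv φ x)^2*(M x)*deriv M x) = 0 := by
      linear_combination -h9
    -- show the key LHS vanishes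
    have hEl40 : 4*(Afun q φ x)^2*((deriv φ x*M x*(Bfun q φ M x
          - 2*Afun q φ x*F1fun q φ M x)
        - (((deriv (deriv q) x*deriv φ x+2*deriv q x*deriv (deriv φ) x
            +q x*deriv (deriv (deriv φ)) x)*φ x
          + (deriv q x*deriv φ x+q x*deriv (deriv φ) x)*deriv φ x
          - deriv q x*(deriv φ x)^2 - 2*q x*deriv φ x*deriv (deriv φ) x)*(F1fun q φ M x)^2
          - ((deriv (deriv q) x*deriv φ x*M x+2*deriv q x*deriv (deriv φ) x*M x
            +2*deriv q x*deriv φ x*deriv M x+q x*deriv (deriv (deriv φ)) x*M x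
            +2*q x*deriv (deriv φ) x*deriv M x+q x*deriv φ x*deriv (deriv M) x)*(φ x)^2
            + (deriv q x*deriv φ x*M x+q x*deriv (deriv φ) x*M x
              +q x*deriv φ x*deriv M x)*(2*φ x*deriv φ x))*F1fun q φ M x
          + (deriv q x*(φ x)^2*(deriv φ x)^2*(M x)^2 + 2*q x*φ x*(deriv φ x)^3*(M x)^2
            + 2*q x*(φ x)^2*deriv φ x*deriv (deriv φ) x*(M x)^2
            + 2*q x*(φ x)^2*(deriv φ x)^2*(M x)*deriv M x)))
        * (q x*(φ x)^2*deriv φ x*M x)) = 0 := by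
      linear_combination (-(q x*(φ x)^2*deriv φ x*M x)
          *(((deriv (deriv q) x*deriv φ x+2*deriv q x*deriv (deriv φ) x
            +q x*deriv (deriv (deriv φ)) x)*φ x
          + (deriv q x*deriv φ x+q x*deriv (deriv φ) x)*deriv φ x
          - deriv q x*(deriv φ x)^2 - 2*q x*deriv φ x*deriv (deriv φ) x)
            *(2*Afun q φ x*F1fun q φ M x + Bfun q φ M x)
          - 2*Afun q φ x*((deriv (deriv q) x*deriv φ x*M x
            +2*deriv q x*deriv (deriv φ) x*M x
            +2*deriv q x*deriv φ x*deriv M x+q x*deriv (deriv (deriv φ)) x*M x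
            +2*q x*deriv (deriv φ) x*deriv M x+q x*deriv φ x*deriv (deriv M) x)*(φ x)^2
            + (deriv q x*deriv φ x*M x+q x*deriv (deriv φ) x*M x
              +q x*deriv φ x*deriv M x)*(2*φ x*deriv φ x)))
        - 4*(Afun q φ x)^2*deriv φ x*M x*(q x*(φ x)^2*deriv φ x*M x)) * hr
        + (-(q x*(φ x)^2*deriv φ x*M x)*((deriv (deriv q) x*deriv φ x
            +2*deriv q x*deriv (deriv φ) x
            +q x*deriv (deriv (deriv φ)) x)*φ x
          + (deriv q x*deriv φ x+q x*deriv (deriv φ) x)*deriv φ x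
          - deriv q x*(deriv φ x)^2 - 2*q x*deriv φ x*deriv (deriv φ) x)) * hb2
        + (Afun q φ x*(q x*(φ x)^2*deriv φ x*M x)) * hd'
    have hEl := (mul_eq_zero.mp hEl40).resolve_left
      (mul_ne_zero (by norm_num) (pow_ne_zero 2 ha))
    have : deriv (fun y => h y - F1fun q φ M y) x * Afun q φ x * 0 * q x * (φ x) ^ 2
        * deriv φ x * M x = 0 := by ring
    rw [this]
    exact (E.symm.trans hEl).symm
  · -- positive discriminant case
    have hdA : DifferentiableAt ℝ (Afun q φ) x := HA.differentiableAt
    have hdB : DifferentiableAt ℝ (Bfun q φ M) x := HB.differentiableAt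
    have hdC : DifferentiableAt ℝ (Cfun q φ M) x := HC.differentiableAt
    have hdD : DifferentiableAt ℝ
        (fun y => (Bfun q φ M y) ^ 2 - 4 * Afun q φ y * Cfun q φ M y) x :=
      (hdB.pow 2).sub ((hdA.const_mul 4).mul hdC)
    have hdS : DifferentiableAt ℝ
        (fun y => Real.sqrt ((Bfun q φ M y) ^ 2 - 4 * Afun q φ y * Cfun q φ M y)) x :=
      hdD.sqrt (ne_of_gt hdd)
    have hdF1 : DifferentiableAt ℝ (F1fun q φ M) x := by
      have h1 : DifferentiableAt ℝ (fun y => (Bfun q φ M y -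
          Real.sqrt ((Bfun q φ M y) ^ 2 - 4 * Afun q φ y * Cfun q φ M y))
          / (2 * Afun q φ y)) x :=
        (hdB.sub hdS).div (hdA.const_mul 2) (mul_ne_zero two_ne_zero ha)
      exact h1
    have HF1 := hdF1.hasDerivAt
    have HZ := ((HA.mul (HF1.pow 2)).sub (HB.mul HF1)).add HC
    have hZ0 : deriv (fun y => Afun q φ y * (F1fun q φ M y)^2
        - Bfun q φ M y * F1fun q φ M y + Cfun q φ M y) x = 0 := by
      have hev : (fun y => Afun q φ y * (F1fun q φ M y)^2
          - Bfun q φ M y * F1fun q φ M y + Cfun q φ M y) =ᶠ[nhds x]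
          (fun _ => (0:ℝ)) :=
        Filter.eventuallyEq_of_mem (hJ.mem_nhds hx) (fun y hy => hZJ y hy)
      rw [hev.deriv_eq]
      simp
    have h9 := HZ.deriv
    simp only [Pi.pow_apply, Nat.cast_ofNat, Nat.reduceSub, pow_one] at h9
    rw [show (Afun q φ * F1fun q φ M ^ 2 - Bfun q φ M * F1fun q φ M + Cfun q φ M) = (fun y =>
      Afun q φ y * (F1fun q φ M y)^2 - Bfun q φ M y * F1fun q φ M y + Cfun q φ M y)
      from rfl, hZ0] at h9
    have himp : ((deriv (deriv q) x*deriv φ x+2*deriv q x*deriv (deriv φ) x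
          +q x*deriv (deriv (deriv φ)) x)*φ x
        + (deriv q x*deriv φ x+q x*deriv (deriv φ) x)*deriv φ x
        - deriv q x*(deriv φ x)^2 - 2*q x*deriv φ x*deriv (deriv φ) x)*(F1fun q φ M x)^2
      + 2*Afun q φ x*F1fun q φ M x*deriv (F1fun q φ M) x
      - ((deriv (deriv q) x*deriv φ x*M x+2*deriv q x*deriv (deriv φ) x*M x
          +2*deriv q x*deriv φ x*deriv M x+q x*deriv (deriv (deriv φ)) x*M x
          +2*q x*deriv (deriv φ) x*deriv M x+q x*deriv φ x*deriv (deriv M) x)*(φ x)^2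
        + (deriv q x*deriv φ x*M x+q x*deriv (deriv φ) x*M x
          +q x*deriv φ x*deriv M x)*(2*φ x*deriv φ x))*F1fun q φ M x
      - Bfun q φ M x*deriv (F1fun q φ M) x
      + (deriv q x*(φ x)^2*(deriv φ x)^2*(M x)^2 + 2*q x*φ x*(deriv φ x)^3*(M x)^2
        + 2*q x*(φ x)^2*deriv φ x*deriv (deriv φ) x*(M x)^2
        + 2*q x*(φ x)^2*(deriv φ x)^2*(M x)*deriv M x) = 0 := by
      linear_combination -h9
    have hder : deriv (fun y => h y - F1fun q φ M y) x
        = deriv φ x * M x - deriv (F1fun q φ M) x := ((hh x hxI).sub HF1).deriv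
    have hat : Afun q φ x * (F2fun q φ M x - F1fun q φ M x)
        = Real.sqrt ((Bfun q φ M x) ^ 2 - 4 * Afun q φ x * Cfun q φ M x) := by
      simp only [F1fun, F2fun]
      field_simp
      ring
    have hG2 : (deriv φ x * M x - deriv (F1fun q φ M) x)
        * Real.sqrt ((Bfun q φ M x) ^ 2 - 4 * Afun q φ x * Cfun q φ M x)
        * (q x*(φ x)^2*deriv φ x*M x)
        = F1fun q φ M x *
          ((F1fun q φ M x - φ x * M x) *
              ((Afun q φ x) ^ 2 * (F1fun q φ M x - φ x * M x) + E1fun q φ x * M x)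
            + Cfun q φ M x * (φ x) ^ 2 * deriv (fun y => q y * deriv M y / M y) x) := by
      linear_combination E + ((deriv φ x * M x - deriv (F1fun q φ M) x)
        *(q x*(φ x)^2*deriv φ x*M x)) * hr + (q x*(φ x)^2*deriv φ x*M x) * himp
    rw [hder]
    linear_combination hG2 + ((deriv φ x * M x - deriv (F1fun q φ M) x)
      *(q x*(φ x)^2*deriv φ x*M x)) * hat
end

section
/- Let h : I → ℝ satisfy h' = φ'·M on I, and let J ⊆ I be a nonempty open subinterval on which A = 0 and φ' > 0 everywhere and B(x) ≠ 0 for all x ∈ J. Then the identity (h − C/B)'·B²·q·φ'·M = C²·(q·M'/M)' holds everywhere on J. -/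
open Real Set MeasureTheory

/-- Lemma 6: on a subinterval `J` where `A = 0`, `φ' > 0` and `B ≠ 0`,
`(h − C/B)'·B²·q·φ'·M = C²·(q·M'/M)'`. -/
theorem stmt6 (I : Set ℝ) (hI : IsOpen I) (hne : I.Nonempty) (hconn : I.OrdConnected)
    (q φ : ℝ → ℝ)
    (hqpos : ∀ x ∈ I, 0 < q x)
    (hq1 : ∀ x ∈ I, DifferentiableAt ℝ q x)
    (hq2 : ∀ x ∈ I, DifferentiableAt ℝ (deriv q) x)
    (hφ1 : ∀ x ∈ I, DifferentiableAt ℝ φ x)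
    (hφ2 : ∀ x ∈ I, DifferentiableAt ℝ (deriv φ) x)
    (hφ3 : ∀ x ∈ I, DifferentiableAt ℝ (deriv (deriv φ)) x)
    (M : ℝ → ℝ)
    (hMpos : ∀ x ∈ I, 0 < M x)
    (hM1 : ∀ x ∈ I, DifferentiableAt ℝ M x)
    (hM2 : ∀ x ∈ I, DifferentiableAt ℝ (deriv M) x)
    (h : ℝ → ℝ) (hh : ∀ x ∈ I, HasDerivAt h (deriv φ x * M x) x)
    (J : Set ℝ) (hJ : IsOpen J) (hJne : J.Nonempty) (hJconn : J.OrdConnected)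
    (hJI : J ⊆ I)
    (hA0 : ∀ x ∈ J, Afun q φ x = 0)
    (hφ'pos : ∀ x ∈ J, 0 < deriv φ x)
    (hB : ∀ x ∈ J, Bfun q φ M x ≠ 0) :
    ∀ x ∈ J,
      deriv (fun y => h y - Cfun q φ M y / Bfun q φ M y) x * (Bfun q φ M x) ^ 2 *
          q x * deriv φ x * M x =
        (Cfun q φ M x) ^ 2 * deriv (fun y => q y * deriv M y / M y) x := by
  intro x hx
  have hxI : x ∈ I := hJI hx
  have hIx : I ∈ nhds x := hI.mem_nhds hxI
  have hq1' := (hq1 x hxI).hasDerivAt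
  have hq2' := (hq2 x hxI).hasDerivAt
  have hφ1' := (hφ1 x hxI).hasDerivAt
  have hφ2' := (hφ2 x hxI).hasDerivAt
  have hφ3' := (hφ3 x hxI).hasDerivAt
  have hM1' := (hM1 x hxI).hasDerivAt
  have hM2' := (hM2 x hxI).hasDerivAt
  have hMne : M x ≠ 0 := ne_of_gt (hMpos x hxI)
  -- derivative of (q φ') at any point of I
  have hKval : deriv (fun z => q z * deriv φ z) x
      = deriv q x * deriv φ x + q x * deriv (deriv φ) x := (hq1'.mul hφ2').deriv
  -- derivative of (q φ' M) at any point of I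
  have hDval : deriv (fun z => q z * deriv φ z * M z) x
      = (deriv q x * deriv φ x + q x * deriv (deriv φ) x) * M x
        + q x * deriv φ x * deriv M x := ((hq1'.mul hφ2').mul hM1').deriv
  -- HasDerivAt of y ↦ deriv (q φ') y at x
  have t1 : HasDerivAt (fun y => deriv q y * deriv φ y + q y * deriv (deriv φ) y) _ x :=
    (hq2'.mul hφ2').add (hq1'.mul hφ3')
  have hKev : (fun y => deriv (fun z => q z * deriv φ z) y)
      =ᶠ[nhds x] (fun y => deriv q y * deriv φ y + q y * deriv (deriv φ) y) := by
    filter_upwards [hIx] with y hy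
    exact (((hq1 y hy).hasDerivAt.mul (hφ2 y hy).hasDerivAt)).deriv
  have hKx : HasDerivAt (fun y => deriv (fun z => q z * deriv φ z) y) _ x :=
    t1.congr_of_eventuallyEq hKev
  -- HasDerivAt of y ↦ deriv (q φ' M) y at x
  have hgD : HasDerivAt (fun y => (deriv q y * deriv φ y + q y * deriv (deriv φ) y) * M y
      + q y * deriv φ y * deriv M y) _ x :=
    (t1.mul hM1').add ((hq1'.mul hφ2').mul hM2')
  have hDev : (fun y => deriv (fun z => q z * deriv φ z * M z) y)
      =ᶠ[nhds x] (fun y => (deriv q y * deriv φ y + q y * deriv (deriv φ) y) * M y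
        + q y * deriv φ y * deriv M y) := by
    filter_upwards [hIx] with y hy
    exact ((((hq1 y hy).hasDerivAt.mul (hφ2 y hy).hasDerivAt)).mul (hM1 y hy).hasDerivAt).deriv
  have hDx : HasDerivAt (fun y => deriv (fun z => q z * deriv φ z * M z) y) _ x :=
    hgD.congr_of_eventuallyEq hDev
  -- B and C
  have hBx : HasDerivAt (fun y => deriv (fun z => q z * deriv φ z * M z) y * φ y ^ 2) _ x :=
    hDx.mul (hφ1'.pow 2)
  have hCx : HasDerivAt (fun y => q y * φ y ^ 2 * deriv φ y ^ 2 * M y ^ 2) _ x :=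
    (((hq1'.mul (hφ1'.pow 2)).mul (hφ2'.pow 2)).mul (hM1'.pow 2))
  have hbne : deriv (fun z => q z * deriv φ z * M z) x * φ x ^ 2 ≠ 0 := by
    have := hB x hx; simpa [Bfun] using this
  have hQuot : HasDerivAt (fun y => q y * φ y ^ 2 * deriv φ y ^ 2 * M y ^ 2
      / (deriv (fun z => q z * deriv φ z * M z) y * φ y ^ 2)) _ x := hCx.div hBx hbne
  have hsub : HasDerivAt (fun y => h y - q y * φ y ^ 2 * deriv φ y ^ 2 * M y ^ 2
      / (deriv (fun z => q z * deriv φ z * M z) y * φ y ^ 2)) _ x := (hh x hxI).sub hQuot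
  have hR : HasDerivAt (fun y => q y * deriv M y / M y) _ x :=
    (hq1'.mul hM2').div hM1' hMne
  -- A = 0 and A' = 0 at x
  have hA0eq : (deriv q x * deriv φ x + q x * deriv (deriv φ) x) * φ x
      - q x * deriv φ x ^ 2 = 0 := by
    have := hA0 x hx
    simp only [Afun] at this
    rw [hKval] at this
    linarith
  have hAx : HasDerivAt (Afun q φ) _ x :=
    HasDerivAt.sub (hKx.mul hφ1') (hq1'.mul (hφ2'.pow 2))
  have hAder : deriv (Afun q φ) x = 0 := by
    have hev : Afun q φ =ᶠ[nhds x] (fun _ => (0:ℝ)) := by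
      filter_upwards [hJ.mem_nhds hx] with y hy using hA0 y hy
    rw [hev.deriv_eq]; simp
  have hA'eq := hAx.deriv.symm.trans hAder
  rw [hKval] at hA'eq
  simp only [Cfun, Bfun]
  rw [hsub.deriv, hR.deriv, hDval]

  rw [hDval] at hbne
  have hb1 := left_ne_zero_of_mul hbne
  have hb2 : φ x ≠ 0 := pow_ne_zero_iff (by norm_num) |>.mp (right_ne_zero_of_mul hbne)
  simp only [Pi.mul_apply, Pi.pow_apply, Nat.cast_ofNat, Nat.add_one_sub_one, pow_one] at hA'eq ⊢
  have hb3 : M x * (deriv φ x * deriv q x + q x * deriv (deriv φ) x)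
      + deriv φ x * q x * deriv M x ≠ 0 := by
    convert hb1 using 1; ring
  field_simp
  linear_combination (q x ^ 2 * deriv φ x ^ 2 * M x ^ 2) *
    (deriv φ x * hA'eq - deriv (deriv φ) x * hA0eq)
end

section
/- Let J ⊆ I be a nonempty open subinterval on which A = 0 and φ' > 0 everywhere. Then ( (qφ')'/φ' )' = 0 everywhere on J and φ(x) ≠ 0 for all x ∈ J. -/
open Real Set MeasureTheory

/-- Claim in the proof of Lemma 6: on a subinterval `J` where `A = 0` and `φ' > 0`,
one has `((qφ')'/φ')' = 0` on `J` and `φ(x) ≠ 0` for all `x ∈ J`. -/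
theorem stmt7 (I : Set ℝ) (hI : IsOpen I) (hne : I.Nonempty) (hconn : I.OrdConnected)
    (q φ : ℝ → ℝ)
    (hqpos : ∀ x ∈ I, 0 < q x)
    (hq1 : ∀ x ∈ I, DifferentiableAt ℝ q x)
    (hq2 : ∀ x ∈ I, DifferentiableAt ℝ (deriv q) x)
    (hφ1 : ∀ x ∈ I, DifferentiableAt ℝ φ x)
    (hφ2 : ∀ x ∈ I, DifferentiableAt ℝ (deriv φ) x)
    (hφ3 : ∀ x ∈ I, DifferentiableAt ℝ (deriv (deriv φ)) x)
    (J : Set ℝ) (hJ : IsOpen J) (hJne : J.Nonempty) (hJconn : J.OrdConnected)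
    (hJI : J ⊆ I)
    (hA0 : ∀ x ∈ J, Afun q φ x = 0)
    (hφ'pos : ∀ x ∈ J, 0 < deriv φ x) :
    ∀ x ∈ J,
      deriv (fun y => deriv (fun z => q z * deriv φ z) y / deriv φ y) x = 0 ∧
      φ x ≠ 0 := by
  intro x hx
  have hxI := hJI hx
  have hφx : φ x ≠ 0 := by
    intro h0
    have hAx := hA0 x hx
    simp only [Afun, h0, mul_zero, zero_sub, neg_eq_zero] at hAx
    linarith [mul_pos (hqpos x hxI) (pow_pos (hφ'pos x hx) 2)]
  refine ⟨?_, hφx⟩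
  have heq : (fun y => deriv (fun z => q z * deriv φ z) y / deriv φ y) =ᶠ[nhds x]
      (fun y => q y * deriv φ y / φ y) := by
    filter_upwards [hJ.mem_nhds hx] with y hy
    have hAy := hA0 y hy
    simp only [Afun] at hAy
    have hφy : φ y ≠ 0 := by
      intro h0
      rw [h0, mul_zero, zero_sub, neg_eq_zero] at hAy
      linarith [mul_pos (hqpos y (hJI hy)) (pow_pos (hφ'pos y hy) 2)]
    have hφ'y : deriv φ y ≠ 0 := ne_of_gt (hφ'pos y hy)
    have hd : deriv (fun z => q z * deriv φ z) y = q y * (deriv φ y) ^ 2 / φ y := by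
      field_simp
      linarith
    rw [hd]
    field_simp
  rw [heq.deriv_eq]
  have hprod : HasDerivAt (fun y => q y * deriv φ y)
      (deriv (fun y => q y * deriv φ y) x) x :=
    ((hq1 x hxI).mul (hφ2 x hxI)).hasDerivAt
  have hquot := hprod.div (hφ1 x hxI).hasDerivAt hφx
  have hAx := hA0 x hx
  simp only [Afun] at hAx
  have : (deriv (fun y => q y * deriv φ y) x * φ x
      - q x * deriv φ x * deriv φ x) / φ x ^ 2 = 0 := by
    rw [show deriv (fun y => q y * deriv φ y) x * φ x
      - q x * deriv φ x * deriv φ x = Afun q φ x by simp [Afun]; ring, hA0 x hx, zero_div]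
  exact hquot.deriv.trans this
end

section
/- Under the stated hypotheses, the quotient h/φ and log(h/φ) are both twice differentiable on (0,∞), and moreover (h/φ)' < 0 and (log(h/φ))'' > 0 everywhere on (0,∞). -/
open Real Set Filter Topology MeasureTheory Asymptotics

set_option maxHeartbeats 4000000 in
/-- Theorem 6 (Theorem 2 of the paper): under hypotheses (i)–(vi), with base point `0`,
the quotient `h/φ` and `log (h/φ)` are twice differentiable on `(0,∞)`,
`(h/φ)' < 0` and `(log (h/φ))'' > 0` on `(0,∞)`. -/
theorem stmt9
    (φ M h : ℝ → ℝ)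
    (hφnn : ∀ x ∈ Ici (0:ℝ), 0 ≤ φ x)
    (hMpos : ∀ x ∈ Ici (0:ℝ), 0 < M x)
    (hhnn : ∀ x ∈ Ici (0:ℝ), 0 ≤ h x)
    (hφ1 : ∀ x ∈ Ioi (0:ℝ), DifferentiableAt ℝ φ x)
    (hφ2 : ∀ x ∈ Ioi (0:ℝ), DifferentiableAt ℝ (deriv φ) x)
    (hφ3 : ∀ x ∈ Ioi (0:ℝ), DifferentiableAt ℝ (deriv (deriv φ)) x)
    (hM1 : ∀ x ∈ Ioi (0:ℝ), DifferentiableAt ℝ M x)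
    (hM2 : ∀ x ∈ Ioi (0:ℝ), DifferentiableAt ℝ (deriv M) x)
    -- (i) the right-hand limit of φ''φ/φ'² at 0 is < 1
    (hlim : ∃ L : ℝ, L < 1 ∧
      Tendsto (fun x => deriv (deriv φ) x * φ x / (deriv φ x) ^ 2) (𝓝[>] (0:ℝ)) (𝓝 L))
    -- (ii) M and M' are continuous from the right at 0 (with finite values)
    (hMright : ContinuousWithinAt M (Ici (0:ℝ)) 0)
    (hM'right : ContinuousWithinAt (deriv M) (Ici (0:ℝ)) 0)
    -- (iii)
    (hM' : ∀ x ∈ Ioi (0:ℝ), deriv M x < 0)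
    (hlogM : ∀ x ∈ Ioi (0:ℝ), 0 ≤ deriv (deriv (fun y => Real.log (M y))) x)
    -- (iv)
    (hφ' : ∀ x ∈ Ioi (0:ℝ), 0 < deriv φ x)
    (hφint : ∀ x ∈ Ioi (0:ℝ), φ x = ∫ t in (0:ℝ)..x, deriv φ t)
    -- (v)
    (hE1 : ∀ x ∈ Ioi (0:ℝ),
      (deriv φ x) ^ 2 * deriv (deriv φ) x
        + φ x * deriv φ x * deriv (deriv (deriv φ)) x
        - 2 * φ x * (deriv (deriv φ) x) ^ 2 ≤ 0)
    -- (vi)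
    (hh : ∀ x ∈ Ioi (0:ℝ), h x = ∫ t in (0:ℝ)..x, deriv φ t * M t) :
    let g : ℝ → ℝ := fun x => h x / φ x
    (∀ x ∈ Ioi (0:ℝ), DifferentiableAt ℝ g x ∧ DifferentiableAt ℝ (deriv g) x) ∧
    (∀ x ∈ Ioi (0:ℝ), DifferentiableAt ℝ (fun y => Real.log (g y)) x ∧
      DifferentiableAt ℝ (deriv (fun y => Real.log (g y))) x) ∧
    (∀ x ∈ Ioi (0:ℝ), deriv g x < 0) ∧
    (∀ x ∈ Ioi (0:ℝ), 0 < deriv (deriv (fun y => Real.log (g y))) x) := by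
  intro g
  obtain ⟨L, hL1, hLlim⟩ := hlim
  -- continuity facts
  have hφcont : ContinuousOn φ (Ioi 0) := fun x hx => (hφ1 x hx).continuousAt.continuousWithinAt
  have hφ'cont : ContinuousOn (deriv φ) (Ioi 0) := fun x hx => (hφ2 x hx).continuousAt.continuousWithinAt
  have hφ''cont : ContinuousOn (deriv (deriv φ)) (Ioi 0) := fun x hx => (hφ3 x hx).continuousAt.continuousWithinAt
  have hMcont : ContinuousOn M (Ioi 0) := fun x hx => (hM1 x hx).continuousAt.continuousWithinAt
  have hM'cont : ContinuousOn (deriv M) (Ioi 0) := fun x hx => (hM2 x hx).continuousAt.continuousWithinAt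
  -- φ strictly increasing, positive
  have hφmono : StrictMonoOn φ (Ioi 0) := by
    apply strictMonoOn_of_deriv_pos (convex_Ioi 0) hφcont
    intro x hx
    exact hφ' x (by simpa using hx)
  have hφpos : ∀ x ∈ Ioi (0:ℝ), 0 < φ x := by
    intro x hx
    rcases lt_or_ge 0 (φ x) with h1 | h1
    · exact h1
    · exfalso
      have h2 : φ (x/2) < φ x := hφmono (by simp [Set.mem_Ioi]; linarith [hx.out]) hx (by linarith [hx.out])
      have := hφnn (x/2) (le_of_lt (by linarith [hx.out] : (0:ℝ) < x/2))
      linarith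
  -- integrability of deriv φ
  have hφ'int : ∀ x ∈ Ioi (0:ℝ), IntervalIntegrable (deriv φ) volume 0 x := by
    intro x hx
    by_contra hcon
    have := intervalIntegral.integral_undef hcon
    have h2 := hφint x hx
    rw [this] at h2
    exact absurd h2 (ne_of_gt (hφpos x hx))
  -- φ tends to 0 at 0+
  have hφ0 : Tendsto φ (𝓝[>] (0:ℝ)) (𝓝 0) := by
    have hInt1 : IntervalIntegrable (deriv φ) volume 0 1 := hφ'int 1 (by norm_num)
    have hF : ContinuousWithinAt (fun b => ∫ t in (0:ℝ)..b, deriv φ t) (Icc (0:ℝ) 1) 0 := by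
      apply intervalIntegral.continuousWithinAt_primitive (by simp)
      simpa using hInt1
    have hF0 : (∫ t in (0:ℝ)..(0:ℝ), deriv φ t) = 0 := intervalIntegral.integral_same
    have h1 : Tendsto (fun b => ∫ t in (0:ℝ)..b, deriv φ t) (𝓝[Icc (0:ℝ) 1] 0) (𝓝 0) := by
      have := hF.tendsto
      rwa [hF0] at this
    have h2 : Tendsto (fun b => ∫ t in (0:ℝ)..b, deriv φ t) (𝓝[>] (0:ℝ)) (𝓝 0) := by
      apply h1.mono_left
      apply nhdsWithin_le_of_mem
      exact mem_of_superset (Ioo_mem_nhdsGT zero_lt_one) Ioo_subset_Icc_self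
    apply h2.congr'
    filter_upwards [self_mem_nhdsWithin] with t ht
    exact (hφint t ht).symm
  -- M is antitone, bounded by M 0
  have hManti : AntitoneOn M (Ioi 0) := by
    apply antitoneOn_of_deriv_nonpos (convex_Ioi 0) hMcont
    · intro x hx
      exact (hM1 x (by simpa using hx)).differentiableWithinAt
    · intro x hx
      exact le_of_lt (hM' x (by simpa using hx))
  have hMle0 : ∀ x ∈ Ioi (0:ℝ), M x ≤ M 0 := by
    intro x hx
    have ht : Tendsto M (𝓝[>] (0:ℝ)) (𝓝 (M 0)) :=
      hMright.tendsto.mono_left (nhdsWithin_mono _ Ioi_subset_Ici_self)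
    apply ge_of_tendsto ht
    filter_upwards [Ioo_mem_nhdsGT hx.out] with t htt
    exact hManti htt.1 hx htt.2.le
  -- ψ := φ''φ/φ'^2 : derivative and antitonicity
  have hψhd : ∀ t ∈ Ioi (0:ℝ), HasDerivAt (fun s => deriv (deriv φ) s * φ s / (deriv φ s) ^ 2)
      (((deriv φ t) ^ 2 * deriv (deriv φ) t + φ t * deriv φ t * deriv (deriv (deriv φ)) t
        - 2 * φ t * (deriv (deriv φ) t) ^ 2) / (deriv φ t) ^ 3) t := by
    intro t ht
    have hne : deriv φ t ≠ 0 := ne_of_gt (hφ' t ht)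
    have hd := ((hφ3 t ht).hasDerivAt.mul (hφ1 t ht).hasDerivAt).div
      ((hφ2 t ht).hasDerivAt.pow 2) (pow_ne_zero 2 hne)
    refine hd.congr_deriv ?_
    simp only [Pi.mul_apply, Pi.pow_apply]
    field_simp
    ring
  have hψanti : AntitoneOn (fun s => deriv (deriv φ) s * φ s / (deriv φ s) ^ 2) (Ioi 0) := by
    apply antitoneOn_of_deriv_nonpos (convex_Ioi 0)
    · exact ((hφ''cont.mul hφcont).div (hφ'cont.pow 2)
        (fun x hx => pow_ne_zero 2 (ne_of_gt (hφ' x hx))))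
    · intro x hx
      rw [interior_Ioi] at hx
      exact (hψhd x hx).differentiableAt.differentiableWithinAt
    · intro x hx
      rw [interior_Ioi] at hx
      rw [(hψhd x hx).deriv]
      apply div_nonpos_of_nonpos_of_nonneg (hE1 x hx)
      have := hφ' x hx
      positivity
  have hψleL : ∀ x ∈ Ioi (0:ℝ), deriv (deriv φ) x * φ x / (deriv φ x) ^ 2 ≤ L := by
    intro x hx
    apply ge_of_tendsto hLlim
    filter_upwards [Ioo_mem_nhdsGT hx.out] with t htt
    exact hψanti htt.1 hx htt.2.le
  -- φ/φ' monotone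
  have hratio_hd : ∀ t ∈ Ioi (0:ℝ), HasDerivAt (fun s => φ s / deriv φ s)
      (1 - deriv (deriv φ) t * φ t / (deriv φ t) ^ 2) t := by
    intro t ht
    have hne : deriv φ t ≠ 0 := ne_of_gt (hφ' t ht)
    have hd := (hφ1 t ht).hasDerivAt.div (hφ2 t ht).hasDerivAt hne
    refine hd.congr_deriv ?_
    field_simp
  have hratio_mono : MonotoneOn (fun s => φ s / deriv φ s) (Ioi 0) := by
    apply monotoneOn_of_deriv_nonneg (convex_Ioi 0)
    · exact hφcont.div hφ'cont (fun x hx => ne_of_gt (hφ' x hx))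
    · intro x hx
      rw [interior_Ioi] at hx
      exact (hratio_hd x hx).differentiableAt.differentiableWithinAt
    · intro x hx
      rw [interior_Ioi] at hx
      rw [(hratio_hd x hx).deriv]
      have := hψleL x hx
      linarith
  -- boundedness helpers
  have hM'bdd : ∀ x ∈ Ioi (0:ℝ), ∃ C : ℝ, 0 ≤ C ∧ ∀ t ∈ Ioc (0:ℝ) x, |deriv M t| ≤ C := by
    intro x hx
    have ht : Tendsto (deriv M) (𝓝[>] (0:ℝ)) (𝓝 (deriv M 0)) :=
      hM'right.tendsto.mono_left (nhdsWithin_mono _ Ioi_subset_Ici_self)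
    have hev : ∀ᶠ t in 𝓝[>] (0:ℝ), |deriv M t| ≤ |deriv M 0| + 1 := by
      filter_upwards [ht (Metric.closedBall_mem_nhds _ one_pos)] with t htt
      have : dist (deriv M t) (deriv M 0) ≤ 1 := htt
      rw [Real.dist_eq] at this
      calc |deriv M t| = |deriv M t - deriv M 0 + deriv M 0| := by ring_nf
        _ ≤ |deriv M t - deriv M 0| + |deriv M 0| := abs_add_le _ _
        _ ≤ |deriv M 0| + 1 := by linarith
    obtain ⟨δ, hδ, hsub⟩ := mem_nhdsGT_iff_exists_Ioo_subset.mp hev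
    have hδ0 : (0:ℝ) < δ := hδ.out
    set m := min (δ/2) x with hm
    have hm0 : 0 < m := lt_min (by linarith) hx.out
    have hcomp : IsCompact (Icc m x) := isCompact_Icc
    obtain ⟨C₂, hC₂⟩ := hcomp.exists_bound_of_continuousOn
      (hM'cont.mono (fun t htt => lt_of_lt_of_le hm0 htt.1))
    refine ⟨max (|deriv M 0| + 1) C₂, le_max_of_le_left (by positivity), ?_⟩
    intro t htt
    rcases lt_or_ge t δ with h1 | h1
    · exact le_max_of_le_left (hsub ⟨htt.1, h1⟩)
    · apply le_max_of_le_right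
      have : t ∈ Icc m x := ⟨le_trans (le_trans (min_le_left _ _) (by linarith)) h1, htt.2⟩
      simpa using hC₂ t this
  -- generic integrability
  have hIIgen : ∀ (f : ℝ → ℝ), ContinuousOn f (Ioi 0) → ∀ x ∈ Ioi (0:ℝ),
      (∃ C : ℝ, ∀ t ∈ Ioc (0:ℝ) x, |f t| ≤ C) → IntervalIntegrable f volume 0 x := by
    intro f hf x hx hC
    obtain ⟨C, hC⟩ := hC
    rw [intervalIntegrable_iff_integrableOn_Ioc_of_le hx.out.le]
    apply Integrable.mono' (g := fun _ => C)
    · exact integrableOn_const measure_Ioc_lt_top.ne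
    · exact ((hf.mono (Ioc_subset_Ioi_self)).aemeasurable measurableSet_Ioc).aestronglyMeasurable
    · filter_upwards [ae_restrict_mem measurableSet_Ioc] with t htt
      exact hC t htt
  -- small-integral helper
  have hsmall : ∀ (f : ℝ → ℝ) (C x : ℝ), 0 < x → (∀ t ∈ Ioc (0:ℝ) x, |f t| ≤ C) →
      Tendsto (fun ε => ∫ t in (0:ℝ)..ε, f t) (𝓝[>] (0:ℝ)) (𝓝 0) := by
    intro f C x hx hC
    apply squeeze_zero_norm'
    · filter_upwards [Ioo_mem_nhdsGT hx] with ε hε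
      have : ∀ t ∈ Set.uIoc (0:ℝ) ε, ‖f t‖ ≤ C := by
        intro t ht
        rw [uIoc_of_le hε.1.le] at ht
        exact hC t ⟨ht.1, le_trans ht.2 hε.2.le⟩
      calc ‖∫ t in (0:ℝ)..ε, f t‖ ≤ C * |ε - 0| := intervalIntegral.norm_integral_le_of_norm_le_const this
        _ = C * ε := by rw [sub_zero, abs_of_pos hε.1]
    · have : Tendsto (fun ε : ℝ => C * ε) (𝓝 (0:ℝ)) (𝓝 (C * 0)) :=
        (continuous_const.mul continuous_id).tendsto 0
      rw [mul_zero] at this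
      exact this.mono_left nhdsWithin_le_nhds
  -- integrability of φ' * M
  have hint1 : ∀ x ∈ Ioi (0:ℝ), IntervalIntegrable (fun t => deriv φ t * M t) volume 0 x := by
    intro x hx
    rw [intervalIntegrable_iff_integrableOn_Ioc_of_le hx.out.le]
    have hφint' : IntegrableOn (deriv φ) (Ioc 0 x) volume := by
      rw [← intervalIntegrable_iff_integrableOn_Ioc_of_le hx.out.le]
      exact hφ'int x hx
    apply Integrable.mono' (hφint'.const_mul (M 0))
    · exact (((hφ'cont.mul hMcont).mono (Ioc_subset_Ioi_self)).aemeasurable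
        measurableSet_Ioc).aestronglyMeasurable
    · filter_upwards [ae_restrict_mem measurableSet_Ioc] with t htt
      have h1 : 0 < deriv φ t := hφ' t htt.1
      have h2 : 0 < M t := hMpos t (le_of_lt htt.1)
      have h3 : M t ≤ M 0 := hMle0 t htt.1
      rw [Real.norm_eq_abs, abs_of_pos (by positivity)]
      calc deriv φ t * M t ≤ deriv φ t * M 0 := by nlinarith
        _ = M 0 * deriv φ t := mul_comm _ _
  -- derivative of h
  have hhd : ∀ x ∈ Ioi (0:ℝ), HasDerivAt h (deriv φ x * M x) x := by
    intro x hx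
    have hca : ContinuousAt (fun t => deriv φ t * M t) x :=
      ((hφ'cont.mul hMcont) x hx).continuousAt (isOpen_Ioi.mem_nhds hx)
    have hd := intervalIntegral.integral_hasDerivAt_right (hint1 x hx)
      ((hφ'cont.mul hMcont).stronglyMeasurableAtFilter isOpen_Ioi x hx) hca
    apply hd.congr_of_eventuallyEq
    filter_upwards [isOpen_Ioi.mem_nhds hx] with y hy
    exact hh y hy
  have hhpos : ∀ x ∈ Ioi (0:ℝ), 0 < h x := by
    intro x hx
    rw [hh x hx]
    apply intervalIntegral.intervalIntegral_pos_of_pos_on (hint1 x hx) _ hx.out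
    intro t htt
    have h1 : 0 < deriv φ t := hφ' t htt.1
    have h2 : 0 < M t := hMpos t (le_of_lt htt.1)
    positivity
  -- integrability of M' * φ
  have hint2 : ∀ x ∈ Ioi (0:ℝ), IntervalIntegrable (fun t => deriv M t * φ t) volume 0 x := by
    intro x hx
    obtain ⟨C, hC0, hC⟩ := hM'bdd x hx
    apply hIIgen _ (hM'cont.mul hφcont) x hx
    refine ⟨C * φ x, ?_⟩
    intro t htt
    have h1 : 0 < φ t := hφpos t htt.1
    have h2 : φ t ≤ φ x := by
      rcases eq_or_lt_of_le htt.2 with he | hlt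
      · rw [he]
      · exact le_of_lt (hφmono htt.1 hx hlt)
    rw [Pi.mul_apply, abs_mul, abs_of_pos h1]
    calc |deriv M t| * φ t ≤ C * φ t := by
          apply mul_le_mul_of_nonneg_right (hC t htt) h1.le
      _ ≤ C * φ x := by nlinarith
  -- integration by parts identity
  have ha1 : ∀ x ∈ Ioi (0:ℝ), ∫ t in (0:ℝ)..x, deriv M t * φ t = M x * φ x - h x := by
    intro x hx
    obtain ⟨C, hC0, hC⟩ := hM'bdd x hx
    -- the two tendsto statements
    have key : ∀ ε ∈ Ioo (0:ℝ) x, ∫ t in ε..x, deriv M t * φ t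
        = M x * φ x - M ε * φ ε - ∫ t in ε..x, deriv φ t * M t := by
      intro ε hε
      have hsub : Icc ε x ⊆ Ioi 0 := fun t ht => lt_of_lt_of_le hε.1 ht.1
      have huIcc : uIcc ε x = Icc ε x := uIcc_of_le hε.2.le
      have h1 : ∀ t ∈ uIcc ε x, HasDerivAt M (deriv M t) t := by
        intro t ht; rw [huIcc] at ht; exact (hM1 t (hsub ht)).hasDerivAt
      have h2 : ∀ t ∈ uIcc ε x, HasDerivAt φ (deriv φ t) t := by
        intro t ht; rw [huIcc] at ht; exact (hφ1 t (hsub ht)).hasDerivAt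
      have h3 : IntervalIntegrable (deriv M) volume ε x :=
        (hM'cont.mono (huIcc ▸ hsub)).intervalIntegrable
      have h4 : IntervalIntegrable (deriv φ) volume ε x :=
        (hφ'cont.mono (huIcc ▸ hsub)).intervalIntegrable
      have := intervalIntegral.integral_mul_deriv_eq_deriv_mul h1 h2 h3 h4
      -- this : ∫ M * deriv φ = M x * φ x - M ε * φ ε - ∫ deriv M * φ
      have heq : ∫ t in ε..x, M t * deriv φ t = ∫ t in ε..x, deriv φ t * M t := by
        apply intervalIntegral.integral_congr
        intro t ht; exact mul_comm _ _
      linarith [this, heq]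
    have ht1 : Tendsto (fun ε => ∫ t in ε..x, deriv M t * φ t) (𝓝[>] (0:ℝ))
        (𝓝 (∫ t in (0:ℝ)..x, deriv M t * φ t)) := by
      have hb : ∀ t ∈ Ioc (0:ℝ) x, |deriv M t * φ t| ≤ C * φ x := by
        intro t htt
        have h1 : 0 < φ t := hφpos t htt.1
        have h2 : φ t ≤ φ x := by
          rcases eq_or_lt_of_le htt.2 with he | hlt
          · rw [he]
          · exact le_of_lt (hφmono htt.1 hx hlt)
        rw [abs_mul, abs_of_pos h1]
        calc |deriv M t| * φ t ≤ C * φ t := mul_le_mul_of_nonneg_right (hC t htt) h1.le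
          _ ≤ C * φ x := by nlinarith
      have hz := hsmall _ _ _ hx.out hb
      have : Tendsto (fun ε => (∫ t in (0:ℝ)..x, deriv M t * φ t) - ∫ t in (0:ℝ)..ε, deriv M t * φ t)
          (𝓝[>] (0:ℝ)) (𝓝 ((∫ t in (0:ℝ)..x, deriv M t * φ t) - 0)) := tendsto_const_nhds.sub hz
      rw [sub_zero] at this
      apply this.congr'
      filter_upwards [Ioo_mem_nhdsGT hx.out] with ε hε
      have hsubε : IntervalIntegrable (fun t => deriv M t * φ t) volume 0 ε := by
        apply (hint2 x hx).mono_set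
        rw [uIcc_of_le hε.1.le, uIcc_of_le hx.out.le]
        exact Icc_subset_Icc (le_refl _) hε.2.le
      exact intervalIntegral.integral_interval_sub_left (hint2 x hx) hsubε
    have ht2 : Tendsto (fun ε => M x * φ x - M ε * φ ε - ∫ t in ε..x, deriv φ t * M t) (𝓝[>] (0:ℝ))
        (𝓝 (M x * φ x - 0 - h x)) := by
      have hMφ : Tendsto (fun ε => M ε * φ ε) (𝓝[>] (0:ℝ)) (𝓝 0) := by
        apply squeeze_zero'
        · filter_upwards [self_mem_nhdsWithin] with ε hε
          have := hMpos ε (le_of_lt hε.out)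
          have := hφpos ε hε
          positivity
        · filter_upwards [self_mem_nhdsWithin] with ε hε
          have h1 := hMle0 ε hε
          have h2 := hφpos ε hε
          have h0 : 0 < M ε := hMpos ε (le_of_lt hε.out)
          calc M ε * φ ε ≤ M 0 * φ ε := by nlinarith
            _ = M 0 * φ ε := rfl
        · have : Tendsto (fun ε => M 0 * φ ε) (𝓝[>] (0:ℝ)) (𝓝 (M 0 * 0)) :=
            hφ0.const_mul (M 0)
          rwa [mul_zero] at this
      have hup : Tendsto (fun ε => ∫ t in (0:ℝ)..ε, deriv φ t * M t) (𝓝[>] (0:ℝ)) (𝓝 0) := by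
        apply squeeze_zero'
        · filter_upwards [Ioo_mem_nhdsGT hx.out] with ε hε
          rw [intervalIntegral.integral_of_le hε.1.le]
          apply setIntegral_nonneg measurableSet_Ioc
          intro t htt
          have h1 : 0 < deriv φ t := hφ' t htt.1
          have h2 : 0 < M t := hMpos t (le_of_lt htt.1)
          positivity
        · filter_upwards [Ioo_mem_nhdsGT hx.out] with ε hε
          have hIε : IntervalIntegrable (fun t => deriv φ t * M t) volume 0 ε := by
            apply (hint1 x hx).mono_set
            rw [uIcc_of_le hε.1.le, uIcc_of_le hx.out.le]
            exact Icc_subset_Icc (le_refl _) hε.2.le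
          have hIε2 : IntervalIntegrable (fun t => M 0 * deriv φ t) volume 0 ε := by
            apply IntervalIntegrable.const_mul
            apply (hφ'int x hx).mono_set
            rw [uIcc_of_le hε.1.le, uIcc_of_le hx.out.le]
            exact Icc_subset_Icc (le_refl _) hε.2.le
          have hmono := intervalIntegral.integral_mono_on hε.1.le hIε hIε2 ?_
          · calc (∫ t in (0:ℝ)..ε, deriv φ t * M t) ≤ ∫ t in (0:ℝ)..ε, M 0 * deriv φ t := hmono
              _ = M 0 * ∫ t in (0:ℝ)..ε, deriv φ t := intervalIntegral.integral_const_mul _ _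
              _ = M 0 * φ ε := by rw [← hφint ε hε.1]
          · intro t htt
            rcases eq_or_lt_of_le htt.1 with he | hlt
            · rw [← he]; rw [mul_comm]
            · have h2 : 0 < M t := hMpos t (le_of_lt hlt)
              have h3 : M t ≤ M 0 := hMle0 t hlt
              have h1 : 0 < deriv φ t := hφ' t hlt
              nlinarith
        · have : Tendsto (fun ε => M 0 * φ ε) (𝓝[>] (0:ℝ)) (𝓝 (M 0 * 0)) := hφ0.const_mul (M 0)
          rwa [mul_zero] at this
      have hεx : Tendsto (fun ε => ∫ t in ε..x, deriv φ t * M t) (𝓝[>] (0:ℝ)) (𝓝 (h x)) := by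
        have : Tendsto (fun ε => (∫ t in (0:ℝ)..x, deriv φ t * M t) - ∫ t in (0:ℝ)..ε, deriv φ t * M t)
            (𝓝[>] (0:ℝ)) (𝓝 ((∫ t in (0:ℝ)..x, deriv φ t * M t) - 0)) := tendsto_const_nhds.sub hup
        rw [sub_zero, ← hh x hx] at this
        apply this.congr'
        filter_upwards [Ioo_mem_nhdsGT hx.out] with ε hε
        have hsubε : IntervalIntegrable (fun t => deriv φ t * M t) volume 0 ε := by
          apply (hint1 x hx).mono_set
          rw [uIcc_of_le hε.1.le, uIcc_of_le hx.out.le]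
          exact Icc_subset_Icc (le_refl _) hε.2.le
        rw [hh x hx]
        exact intervalIntegral.integral_interval_sub_left (hint1 x hx) hsubε
      exact (tendsto_const_nhds.sub hMφ).sub hεx
    have := tendsto_nhds_unique ((ht1.congr' (by
      filter_upwards [Ioo_mem_nhdsGT hx.out] with ε hε
      exact key ε hε))) ht2
    rw [this, sub_zero]
  -- h dominates M x * φ x
  have ha1neg : ∀ x ∈ Ioi (0:ℝ), M x * φ x < h x := by
    intro x hx
    have hpos : 0 < ∫ t in (0:ℝ)..x, -(deriv M t * φ t) := by
      apply intervalIntegral.intervalIntegral_pos_of_pos_on ((hint2 x hx).neg) _ hx.out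
      intro t htt
      have h1 := hM' t htt.1
      have h2 := hφpos t htt.1
      have := mul_pos (neg_pos.mpr h1) h2
      show (0:ℝ) < -(deriv M t * φ t)
      nlinarith
    rw [intervalIntegral.integral_neg, ha1 x hx] at hpos
    linarith
  -- integrability of (M')² φ² / (M φ')
  have hint3 : ∀ x ∈ Ioi (0:ℝ),
      IntervalIntegrable (fun t => (deriv M t)^2 * (φ t)^2 / (M t * deriv φ t)) volume 0 x := by
    intro x hx
    obtain ⟨C, hC0, hC⟩ := hM'bdd x hx
    apply hIIgen _ ?_ x hx ?_
    · apply ContinuousOn.div ((hM'cont.pow 2).mul (hφcont.pow 2)) (hMcont.mul hφ'cont)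
      intro t ht
      have h1 := hMpos t (le_of_lt ht.out)
      have h2 := hφ' t ht
      rw [Pi.mul_apply]; positivity
    · refine ⟨C^2 * φ x * (φ x / deriv φ x) / M x, ?_⟩
      intro t htt
      have ht0 : t ∈ Ioi (0:ℝ) := htt.1
      have h1 : 0 < M t := hMpos t (le_of_lt htt.1)
      have h2 : 0 < deriv φ t := hφ' t ht0
      have h3 : 0 < φ t := hφpos t ht0
      have hMx : M x ≤ M t := by
        rcases eq_or_lt_of_le htt.2 with he | hlt
        · rw [he]
        · exact hManti ht0 hx htt.2
      have hφx : φ t ≤ φ x := by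
        rcases eq_or_lt_of_le htt.2 with he | hlt
        · rw [he]
        · exact le_of_lt (hφmono ht0 hx hlt)
      have hrx : φ t / deriv φ t ≤ φ x / deriv φ x := hratio_mono ht0 hx htt.2
      have hMxpos : 0 < M x := hMpos x (le_of_lt hx.out)
      have hrw : (deriv M t)^2 * (φ t)^2 / (M t * deriv φ t)
          = (deriv M t)^2 * (φ t * (φ t / deriv φ t)) / M t := by
        field_simp
      rw [hrw, abs_of_nonneg (by positivity)]
      have hnum : (deriv M t)^2 * (φ t * (φ t / deriv φ t)) ≤ C^2 * (φ x * (φ x / deriv φ x)) := by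
        have e1 : (deriv M t)^2 ≤ C^2 := by
          calc (deriv M t)^2 = |deriv M t|^2 := (sq_abs _).symm
            _ ≤ C^2 := pow_le_pow_left₀ (abs_nonneg _) (hC t htt) 2
        have e2 : 0 < φ t / deriv φ t := by positivity
        have e3 : φ t * (φ t / deriv φ t) ≤ φ x * (φ x / deriv φ x) := by
          apply mul_le_mul hφx hrx (le_of_lt e2) (le_of_lt (lt_of_lt_of_le h3 hφx))
        exact mul_le_mul e1 e3 (mul_nonneg h3.le e2.le) (sq_nonneg C)
      have h4 := hφpos x hx
      have h5 := hφ' x hx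
      calc (deriv M t)^2 * (φ t * (φ t / deriv φ t)) / M t
          ≤ C^2 * (φ x * (φ x / deriv φ x)) / M x := by
            apply div_le_div₀ (mul_nonneg (sq_nonneg C) (le_of_lt (mul_pos h4 (div_pos h4 h5)))) hnum hMxpos hMx
        _ = C^2 * φ x * (φ x / deriv φ x) / M x := by ring
  -- strict Cauchy-Schwarz / variance positivity
  have hvar : ∀ x ∈ Ioi (0:ℝ), (M x * φ x - h x)^2
      < h x * ∫ t in (0:ℝ)..x, (deriv M t)^2 * (φ t)^2 / (M t * deriv φ t) := by
    intro x hx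
    set θ : ℝ := (M x * φ x - h x) / h x with hθdef
    have hH : 0 < h x := hhpos x hx
    have ha1x : M x * φ x - h x < 0 := by linarith [ha1neg x hx]
    have hθneg : θ < 0 := div_neg_of_neg_of_pos ha1x hH
    -- pointwise identity for the quadratic form
    have hqid : ∀ t ∈ Ioi (0:ℝ),
        (deriv M t)^2 * (φ t)^2 / (M t * deriv φ t) - (2*θ) * (deriv M t * φ t)
          + θ^2 * (deriv φ t * M t)
        = (deriv φ t * M t) * (deriv M t * φ t / (M t * deriv φ t) - θ)^2 := by
      intro t ht
      have h1 : M t ≠ 0 := ne_of_gt (hMpos t (le_of_lt ht.out))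
      have h2 : deriv φ t ≠ 0 := ne_of_gt (hφ' t ht)
      field_simp
      ring
    have hqnn : ∀ t ∈ Ioi (0:ℝ),
        0 ≤ (deriv M t)^2 * (φ t)^2 / (M t * deriv φ t) - (2*θ) * (deriv M t * φ t)
          + θ^2 * (deriv φ t * M t) := by
      intro t ht
      rw [hqid t ht]
      have h1 : 0 < M t := hMpos t (le_of_lt ht.out)
      have h2 : 0 < deriv φ t := hφ' t ht
      positivity
    -- there is a point where v ≠ θ
    have hz : ∃ z ∈ Ioo (0:ℝ) x, deriv M z * φ z / (M z * deriv φ z) ≠ θ := by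
      by_contra hcon
      push_neg at hcon
      set k : ℝ := -θ with hkdef
      have hk : 0 < k := by simp [hkdef]; linarith
      -- log M + k log φ is constant on Ioo 0 x
      have hud : ∀ t ∈ Ioo (0:ℝ) x, HasDerivAt (fun s => Real.log (M s) + k * Real.log (φ s)) 0 t := by
        intro t ht
        have ht0 : t ∈ Ioi (0:ℝ) := ht.1
        have h1 : 0 < M t := hMpos t (le_of_lt ht.1)
        have h2 : 0 < φ t := hφpos t ht0
        have h3 : 0 < deriv φ t := hφ' t ht0
        have hd1 : HasDerivAt (fun s => Real.log (M s)) (deriv M t / M t) t :=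
          (hM1 t ht0).hasDerivAt.log (ne_of_gt h1)
        have hd2 : HasDerivAt (fun s => Real.log (φ s)) (deriv φ t / φ t) t :=
          (hφ1 t ht0).hasDerivAt.log (ne_of_gt h2)
        have := hd1.add (hd2.const_mul k)
        refine this.congr_deriv ?_
        have hv := hcon t ht
        have : deriv M t / M t = θ * (deriv φ t / φ t) := by
          have hne : M t * deriv φ t ≠ 0 := by positivity
          field_simp at hv ⊢
          nlinarith [hv]
        rw [this, hkdef]
        ring
      have huc : ∀ s ∈ Ioo (0:ℝ) x, ∀ t ∈ Ioo (0:ℝ) x,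
          Real.log (M s) + k * Real.log (φ s) = Real.log (M t) + k * Real.log (φ t) := by
        intro s hs t ht
        have hmon := monotoneOn_of_deriv_nonneg (convex_Ioo (0:ℝ) x)
          (fun y hy => ((hud y hy).continuousAt.continuousWithinAt))
          (fun y hy => ((hud y (by rwa [interior_Ioo] at hy)).differentiableAt.differentiableWithinAt))
          (fun y hy => by rw [(hud y (by rwa [interior_Ioo] at hy)).deriv])
        have hant := antitoneOn_of_deriv_nonpos (convex_Ioo (0:ℝ) x)
          (fun y hy => ((hud y hy).continuousAt.continuousWithinAt))
          (fun y hy => ((hud y (by rwa [interior_Ioo] at hy)).differentiableAt.differentiableWithinAt))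
          (fun y hy => by rw [(hud y (by rwa [interior_Ioo] at hy)).deriv])
        rcases le_total s t with hst | hst
        · exact le_antisymm (hmon hs ht hst) (hant hs ht hst)
        · exact (le_antisymm (hmon ht hs hst) (hant ht hs hst)).symm
      set c : ℝ := Real.log (M (x/2)) + k * Real.log (φ (x/2)) with hcdef
      have hx2 : x/2 ∈ Ioo (0:ℝ) x := ⟨by linarith [hx.out], by linarith [hx.out]⟩
      have hMeq : ∀ t ∈ Ioo (0:ℝ) x, M t = Real.exp (c - k * Real.log (φ t)) := by
        intro t ht
        have h1 : 0 < M t := hMpos t (le_of_lt ht.1)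
        have := huc t ht (x/2) hx2
        rw [← hcdef] at this
        rw [← Real.exp_log h1]
        congr 1
        linarith
      -- contradiction with boundedness of M
      have htop : Tendsto (fun t => Real.exp (c - k * Real.log (φ t))) (𝓝[>] (0:ℝ)) atTop := by
        apply Real.tendsto_exp_atTop.comp
        have hlog : Tendsto (fun t => Real.log (φ t)) (𝓝[>] (0:ℝ)) atBot := by
          apply Real.tendsto_log_nhdsGT_zero.comp
          apply tendsto_nhdsWithin_of_tendsto_nhds_of_eventually_within _ (hφ0.mono_left ?_)
          · filter_upwards [self_mem_nhdsWithin] with t ht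
            exact hφpos t ht
          · exact le_refl _
        have h1 : Tendsto (fun t => k * Real.log (φ t)) (𝓝[>] (0:ℝ)) atBot :=
          hlog.const_mul_atBot hk
        have h2 : Tendsto (fun t => -(k * Real.log (φ t))) (𝓝[>] (0:ℝ)) atTop :=
          tendsto_neg_atBot_atTop.comp h1
        have h3 := tendsto_atTop_add_const_left _ c h2
        apply h3.congr
        intro t
        ring
      have hbad : ∀ᶠ t in 𝓝[>] (0:ℝ), M 0 < Real.exp (c - k * Real.log (φ t)) :=
        htop.eventually (eventually_gt_atTop (M 0))
      have hmem : ∀ᶠ t in 𝓝[>] (0:ℝ), t ∈ Ioo (0:ℝ) x :=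
        Ioo_mem_nhdsGT hx.out
      obtain ⟨t, h1t, h2t⟩ := (hbad.and hmem).exists
      have := hMle0 t h2t.1
      rw [hMeq t h2t] at this
      linarith
    obtain ⟨z, hzmem, hzne⟩ := hz
    -- the quadratic-form integral is positive
    have hq : (0:ℝ) < ∫ t in (0:ℝ)..x, ((deriv M t)^2 * (φ t)^2 / (M t * deriv φ t)
        - (2*θ) * (deriv M t * φ t) + θ^2 * (deriv φ t * M t)) := by
      set q : ℝ → ℝ := fun t => (deriv M t)^2 * (φ t)^2 / (M t * deriv φ t)
        - (2*θ) * (deriv M t * φ t) + θ^2 * (deriv φ t * M t) with hqdef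
      have hz0 : z ∈ Ioi (0:ℝ) := hzmem.1
      have hqint : IntervalIntegrable q volume 0 x :=
        ((hint3 x hx).sub ((hint2 x hx).const_mul (2*θ))).add ((hint1 x hx).const_mul (θ^2))
      have hqcont : ContinuousOn q (Ioi 0) := by
        apply ContinuousOn.add
        apply ContinuousOn.sub
        · apply ContinuousOn.div ((hM'cont.pow 2).mul (hφcont.pow 2)) (hMcont.mul hφ'cont)
          intro t ht
          have h1 := hMpos t (le_of_lt ht.out)
          have h2 := hφ' t ht
          rw [Pi.mul_apply]; positivity
        · exact continuousOn_const.mul (hM'cont.mul hφcont)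
        · exact continuousOn_const.mul (hφ'cont.mul hMcont)
      have hqz : 0 < q z := by
        have hid := hqid z hz0
        rw [hqdef]
        simp only []
        rw [hid]
        have hp : 0 < deriv φ z * M z := mul_pos (hφ' z hz0) (hMpos z (le_of_lt hz0.out))
        have hne : deriv M z * φ z / (M z * deriv φ z) - θ ≠ 0 := sub_ne_zero.mpr hzne
        have hsq : 0 < (deriv M z * φ z / (M z * deriv φ z) - θ)^2 :=
          lt_of_le_of_ne (sq_nonneg _) (Ne.symm (pow_ne_zero 2 hne))
        exact mul_pos hp hsq
      have hev : ∀ᶠ y in 𝓝 z, q y ∈ Ioi (0:ℝ) :=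
        (hqcont.continuousAt (isOpen_Ioi.mem_nhds hz0)).eventually_mem (isOpen_Ioi.mem_nhds hqz)
      obtain ⟨δ0, hδ0, hball⟩ := Metric.eventually_nhds_iff.mp hev
      set δ : ℝ := min (δ0/2) (min (z/2) ((x - z)/2)) with hδdef
      have hδpos : 0 < δ := by
        apply lt_min (by linarith)
        exact lt_min (by linarith [hzmem.1]) (by linarith [hzmem.2])
      have hδle1 : δ ≤ δ0/2 := min_le_left _ _
      have hδle2 : δ ≤ z/2 := le_trans (min_le_right _ _) (min_le_left _ _)
      have hδle3 : δ ≤ (x-z)/2 := le_trans (min_le_right _ _) (min_le_right _ _)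
      have hzd1 : 0 < z - δ := by linarith [hzmem.1]
      have hzd2 : z - δ < z + δ := by linarith
      have hzd3 : z + δ < x := by linarith [hzmem.2]
      have hII1 : IntervalIntegrable q volume 0 (z-δ) := by
        apply hqint.mono_set
        rw [uIcc_of_le hzd1.le, uIcc_of_le hx.out.le]
        exact Icc_subset_Icc (le_refl _) (by linarith)
      have hII2 : IntervalIntegrable q volume (z-δ) (z+δ) := by
        apply hqint.mono_set
        rw [uIcc_of_le hzd2.le, uIcc_of_le hx.out.le]
        exact Icc_subset_Icc hzd1.le hzd3.le
      have hII3 : IntervalIntegrable q volume (z+δ) x := by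
        apply hqint.mono_set
        rw [uIcc_of_le hzd3.le, uIcc_of_le hx.out.le]
        exact Icc_subset_Icc (by linarith [hzmem.1]) (le_refl _)
      have e2 : ∫ t in (z-δ)..x, q t = (∫ t in (z-δ)..(z+δ), q t) + ∫ t in (z+δ)..x, q t :=
        (intervalIntegral.integral_add_adjacent_intervals hII2 hII3).symm
      have e1 : ∫ t in (0:ℝ)..x, q t = (∫ t in (0:ℝ)..(z-δ), q t) + ∫ t in (z-δ)..x, q t :=
        (intervalIntegral.integral_add_adjacent_intervals hII1 (hII2.trans hII3)).symm
      have hmid : 0 < ∫ t in (z-δ)..(z+δ), q t := by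
        apply intervalIntegral.intervalIntegral_pos_of_pos_on hII2 _ hzd2
        intro y hy
        apply hball
        rw [Real.dist_eq, abs_lt]
        constructor <;> [linarith [hy.1]; linarith [hy.2]]
      have hside1 : 0 ≤ ∫ t in (0:ℝ)..(z-δ), q t := by
        rw [intervalIntegral.integral_of_le hzd1.le]
        apply setIntegral_nonneg measurableSet_Ioc
        intro t ht
        exact hqnn t ht.1
      have hside2 : 0 ≤ ∫ t in (z+δ)..x, q t := by
        rw [intervalIntegral.integral_of_le hzd3.le]
        apply setIntegral_nonneg measurableSet_Ioc
        intro t ht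
        exact hqnn t (lt_trans (by linarith [hzmem.1]) ht.1)
      rw [e1, e2]
      linarith
    have hqval : (∫ t in (0:ℝ)..x, ((deriv M t)^2 * (φ t)^2 / (M t * deriv φ t)
        - (2*θ) * (deriv M t * φ t) + θ^2 * (deriv φ t * M t)))
        = (∫ t in (0:ℝ)..x, (deriv M t)^2 * (φ t)^2 / (M t * deriv φ t))
          - (2*θ) * (M x * φ x - h x) + θ^2 * h x := by
      rw [intervalIntegral.integral_add (((hint3 x hx).sub ((hint2 x hx).const_mul (2*θ))))
        ((hint1 x hx).const_mul (θ^2)),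
        intervalIntegral.integral_sub (hint3 x hx) ((hint2 x hx).const_mul (2*θ)),
        intervalIntegral.integral_const_mul, intervalIntegral.integral_const_mul,
        ha1 x hx, ← hh x hx]
    rw [hqval] at hq
    have hid : (2*θ) * (M x * φ x - h x) - θ^2 * h x = (M x * φ x - h x)^2 / h x := by
      rw [hθdef]
      field_simp
      ring
    have key : (M x * φ x - h x)^2 / h x
        < ∫ t in (0:ℝ)..x, (deriv M t)^2 * (φ t)^2 / (M t * deriv φ t) := by linarith
    rw [div_lt_iff₀ hH] at key
    exact key.trans_eq (mul_comm _ _)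
  -- log-convexity of M pointwise
  have hlogM2 : ∀ t ∈ Ioi (0:ℝ), (deriv M t)^2 ≤ deriv (deriv M) t * M t := by
    intro t ht
    have hMt : 0 < M t := hMpos t (le_of_lt ht.out)
    have hdlog : ∀ s ∈ Ioi (0:ℝ), deriv (fun y => Real.log (M y)) s = deriv M s / M s := by
      intro s hs
      exact ((hM1 s hs).hasDerivAt.log (ne_of_gt (hMpos s (le_of_lt hs.out)))).deriv
    have heq : deriv (fun y => Real.log (M y)) =ᶠ[𝓝 t] fun s => deriv M s / M s := by
      filter_upwards [isOpen_Ioi.mem_nhds ht] with s hs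
      exact hdlog s hs
    have hd2 : deriv (deriv (fun y => Real.log (M y))) t = deriv (fun s => deriv M s / M s) t :=
      heq.deriv_eq
    have hq : HasDerivAt (fun s => deriv M s / M s)
        ((deriv (deriv M) t * M t - deriv M t * deriv M t) / (M t)^2) t :=
      (hM2 t ht).hasDerivAt.div (hM1 t ht).hasDerivAt (ne_of_gt hMt)
    have h0 := hlogM t ht
    rw [hd2, hq.deriv] at h0
    have h1 : 0 ≤ deriv (deriv M) t * M t - deriv M t * deriv M t := by
      by_contra hcon
      push_neg at hcon
      have : (deriv (deriv M) t * M t - deriv M t * deriv M t) / (M t)^2 < 0 :=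
        div_neg_of_neg_of_pos hcon (by positivity)
      linarith
    nlinarith
  -- the function E = (-M') φ²/φ' : derivative and limit at 0
  have hEd : ∀ t ∈ Ioi (0:ℝ), HasDerivAt (fun s => (-deriv M s) * ((φ s)^2 / deriv φ s))
      ((-(deriv (deriv M) t)) * ((φ t)^2 / deriv φ t)
        + (-deriv M t) * ((2 - deriv (deriv φ) t * φ t / (deriv φ t)^2) * φ t)) t := by
    intro t ht
    have hne : deriv φ t ≠ 0 := ne_of_gt (hφ' t ht)
    have h1 : HasDerivAt (fun s => -deriv M s) (-(deriv (deriv M) t)) t := (hM2 t ht).hasDerivAt.neg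
    have h2 : HasDerivAt (fun s => (φ s)^2 / deriv φ s)
        ((2 * φ t ^ (2-1) * deriv φ t * deriv φ t - (φ t)^2 * deriv (deriv φ) t) / (deriv φ t)^2) t :=
      ((hφ1 t ht).hasDerivAt.pow 2).div (hφ2 t ht).hasDerivAt hne
    have heq : (2 * φ t ^ (2-1) * deriv φ t * deriv φ t - (φ t)^2 * deriv (deriv φ) t) / (deriv φ t)^2
        = (2 - deriv (deriv φ) t * φ t / (deriv φ t)^2) * φ t := by
      rw [show (2-1 : ℕ) = 1 from rfl, pow_one]
      field_simp
    rw [heq] at h2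
    exact h1.mul h2
  have hE0 : Tendsto (fun t => (-deriv M t) * ((φ t)^2 / deriv φ t)) (𝓝[>] (0:ℝ)) (𝓝 0) := by
    obtain ⟨C, hC0, hC⟩ := hM'bdd 1 (by norm_num)
    set R : ℝ := φ 1 / deriv φ 1 with hR
    have hRpos : 0 < R := div_pos (hφpos 1 (by norm_num)) (hφ' 1 (by norm_num))
    apply squeeze_zero_norm' (a := fun t => (C * R) * φ t)
    · filter_upwards [Ioo_mem_nhdsGT zero_lt_one]
        with t ht
      have ht0 : t ∈ Ioi (0:ℝ) := ht.1
      have h1 : 0 < φ t := hφpos t ht0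
      have h2 : 0 < deriv φ t := hφ' t ht0
      have hrle : φ t / deriv φ t ≤ R := hratio_mono ht0 (by norm_num) ht.2.le
      have hsplit : (φ t)^2 / deriv φ t = φ t * (φ t / deriv φ t) := by
        field_simp
      rw [Real.norm_eq_abs, abs_mul, hsplit, abs_of_pos (mul_pos h1 (div_pos h1 h2))]
      calc |(-deriv M t)| * (φ t * (φ t / deriv φ t))
          ≤ C * (φ t * R) :=
            mul_le_mul (by rw [abs_neg]; exact hC t ⟨ht0, ht.2.le⟩)
              (mul_le_mul_of_nonneg_left hrle h1.le)
              (le_of_lt (mul_pos h1 (div_pos h1 h2)))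
              hC0
        _ = (C * R) * φ t := by ring
    · have : Tendsto (fun t => (C * R) * φ t) (𝓝[>] (0:ℝ)) (𝓝 ((C*R) * 0)) := hφ0.const_mul _
      rwa [mul_zero] at this
  -- the key inequality
  have hkey : ∀ x ∈ Ioi (0:ℝ), (-deriv M x) * ((φ x)^2 / deriv φ x)
      ≤ (2 - deriv (deriv φ) x * φ x / (deriv φ x)^2) * (h x - M x * φ x)
        - ∫ t in (0:ℝ)..x, (deriv M t)^2 * (φ t)^2 / (M t * deriv φ t) := by
    intro x hx
    set c : ℝ := deriv (deriv φ) x * φ x / (deriv φ x)^2 with hcdef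
    set Jf : ℝ → ℝ := fun t => (c - 2) * (deriv M t * φ t)
      - (deriv M t)^2 * (φ t)^2 / (M t * deriv φ t) with hJdef
    have hJcont : ContinuousOn Jf (Ioi 0) := by
      apply ContinuousOn.sub
      · exact continuousOn_const.mul (hM'cont.mul hφcont)
      · apply ContinuousOn.div ((hM'cont.pow 2).mul (hφcont.pow 2)) (hMcont.mul hφ'cont)
        intro t ht
        have h1 := hMpos t (le_of_lt ht.out)
        have h2 := hφ' t ht
        rw [Pi.mul_apply]; positivity
    have hcleL : c ≤ L := hψleL x hx
    have hJbdd : ∃ B : ℝ, ∀ t ∈ Ioc (0:ℝ) x, |Jf t| ≤ B := by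
      obtain ⟨C, hC0, hC⟩ := hM'bdd x hx
      refine ⟨|c - 2| * (C * φ x) + C^2 * φ x * (φ x / deriv φ x) / M x, ?_⟩
      intro t htt
      have ht0 : t ∈ Ioi (0:ℝ) := htt.1
      have h1 : 0 < M t := hMpos t (le_of_lt htt.1)
      have h2 : 0 < deriv φ t := hφ' t ht0
      have h3 : 0 < φ t := hφpos t ht0
      have hMx : M x ≤ M t := by
        rcases eq_or_lt_of_le htt.2 with he | hlt
        · rw [he]
        · exact hManti ht0 hx htt.2
      have hφx : φ t ≤ φ x := by
        rcases eq_or_lt_of_le htt.2 with he | hlt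
        · rw [he]
        · exact le_of_lt (hφmono ht0 hx hlt)
      have hrx : φ t / deriv φ t ≤ φ x / deriv φ x := hratio_mono ht0 hx htt.2
      have hMxpos : 0 < M x := hMpos x (le_of_lt hx.out)
      have b1 : |(c - 2) * (deriv M t * φ t)| ≤ |c - 2| * (C * φ x) := by
        rw [abs_mul, abs_mul, abs_of_pos h3]
        apply mul_le_mul_of_nonneg_left _ (abs_nonneg _)
        calc |deriv M t| * φ t ≤ C * φ t := mul_le_mul_of_nonneg_right (hC t htt) h3.le
          _ ≤ C * φ x := by nlinarith
      have b2 : |(deriv M t)^2 * (φ t)^2 / (M t * deriv φ t)|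
          ≤ C^2 * φ x * (φ x / deriv φ x) / M x := by
        have hrw : (deriv M t)^2 * (φ t)^2 / (M t * deriv φ t)
            = (deriv M t)^2 * (φ t * (φ t / deriv φ t)) / M t := by
          field_simp
        rw [hrw, abs_of_nonneg (by positivity)]
        have e1 : (deriv M t)^2 ≤ C^2 := by
          calc (deriv M t)^2 = |deriv M t|^2 := (sq_abs _).symm
            _ ≤ C^2 := pow_le_pow_left₀ (abs_nonneg _) (hC t htt) 2
        have e2 : 0 < φ t / deriv φ t := div_pos h3 h2
        have e3 : φ t * (φ t / deriv φ t) ≤ φ x * (φ x / deriv φ x) :=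
          mul_le_mul hφx hrx e2.le (le_of_lt (lt_of_lt_of_le h3 hφx))
        have h4 := hφpos x hx
        have h5 := hφ' x hx
        calc (deriv M t)^2 * (φ t * (φ t / deriv φ t)) / M t
            ≤ C^2 * (φ x * (φ x / deriv φ x)) / M x :=
              div_le_div₀ (mul_nonneg (sq_nonneg C) (le_of_lt (mul_pos h4 (div_pos h4 h5))))
                (mul_le_mul e1 e3 (mul_nonneg h3.le e2.le) (sq_nonneg C)) hMxpos hMx
          _ = C^2 * φ x * (φ x / deriv φ x) / M x := by ring
      calc |Jf t| ≤ |(c - 2) * (deriv M t * φ t)|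
            + |(deriv M t)^2 * (φ t)^2 / (M t * deriv φ t)| := abs_sub _ _
        _ ≤ |c - 2| * (C * φ x) + C^2 * φ x * (φ x / deriv φ x) / M x := add_le_add b1 b2
    have hJint : IntervalIntegrable Jf volume 0 x := hIIgen Jf hJcont x hx hJbdd
    -- monotonicity step: for ε ∈ Ioo 0 x
    have hstep : ∀ ε ∈ Ioo (0:ℝ) x,
        (-deriv M x) * ((φ x)^2 / deriv φ x) - (-deriv M ε) * ((φ ε)^2 / deriv φ ε)
          ≤ ∫ t in ε..x, Jf t := by
      intro ε hε
      have hε0 : (0:ℝ) < ε := hε.1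
      have hIccsub : Icc ε x ⊆ Ioi (0:ℝ) := fun s hs => lt_of_lt_of_le hε0 hs.1
      have hprim : ∀ s ∈ Ioi (0:ℝ), HasDerivAt (fun r => ∫ t in ε..r, Jf t) (Jf s) s := by
        intro s hs
        apply intervalIntegral.integral_hasDerivAt_right
        · apply (hJcont.mono ?_).intervalIntegrable
          intro y hy
          rcases le_total ε s with hles | hles
          · rw [uIcc_of_le hles] at hy; exact lt_of_lt_of_le hε0 hy.1
          · rw [uIcc_of_ge hles] at hy; exact lt_of_lt_of_le hs.out hy.1
        · exact hJcont.stronglyMeasurableAtFilter isOpen_Ioi s hs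
        · exact (hJcont s hs).continuousAt (isOpen_Ioi.mem_nhds hs)
      have hK : MonotoneOn (fun s => (∫ t in ε..s, Jf t)
          - (-deriv M s) * ((φ s)^2 / deriv φ s)) (Icc ε x) := by
        apply monotoneOn_of_deriv_nonneg (convex_Icc ε x)
        · intro s hs
          exact (((hprim s (hIccsub hs)).sub (hEd s (hIccsub hs))).continuousAt).continuousWithinAt
        · intro s hs
          rw [interior_Icc] at hs
          have hs0 : s ∈ Ioi (0:ℝ) := lt_trans hε0 hs.1
          exact ((hprim s hs0).sub (hEd s hs0)).differentiableAt.differentiableWithinAt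
        · intro s hs
          rw [interior_Icc] at hs
          have hs0 : s ∈ Ioi (0:ℝ) := lt_trans hε0 hs.1
          rw [HasDerivAt.deriv (f := fun s => (∫ t in ε..s, Jf t) - (-deriv M s) * ((φ s)^2 / deriv φ s)) ((hprim s hs0).sub (hEd s hs0))]
          have hMs : 0 < M s := hMpos s (le_of_lt hs0.out)
          have hφs : 0 < φ s := hφpos s hs0
          have hφ's : 0 < deriv φ s := hφ' s hs0
          have hψs : c ≤ deriv (deriv φ) s * φ s / (deriv φ s)^2 :=
            hψanti hs0 hx (le_of_lt hs.2)
          have hM's := hM' s hs0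
          have t1 : 0 ≤ (-deriv M s) * φ s * (deriv (deriv φ) s * φ s / (deriv φ s)^2 - c) :=
            mul_nonneg (mul_nonneg (by linarith) hφs.le) (by linarith)
          have t2 : 0 ≤ ((φ s)^2 / deriv φ s) * (deriv (deriv M) s - (deriv M s)^2 / M s) := by
            apply mul_nonneg (by positivity)
            have := hlogM2 s hs0
            rw [sub_nonneg, div_le_iff₀ hMs]
            linarith
          have hid : Jf s - ((-(deriv (deriv M) s)) * ((φ s)^2 / deriv φ s)
              + (-deriv M s) * ((2 - deriv (deriv φ) s * φ s / (deriv φ s)^2) * φ s))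
              = (-deriv M s) * φ s * (deriv (deriv φ) s * φ s / (deriv φ s)^2 - c)
                + ((φ s)^2 / deriv φ s) * (deriv (deriv M) s - (deriv M s)^2 / M s) := by
            rw [hJdef]
            field_simp
            ring
          linarith
      have hKle := hK (left_mem_Icc.mpr hε.2.le) (right_mem_Icc.mpr hε.2.le) hε.2.le
      simp only [] at hKle
      rw [intervalIntegral.integral_same] at hKle
      linarith
    -- pass to the limit
    have hlim2 : (-deriv M x) * ((φ x)^2 / deriv φ x) ≤ ∫ t in (0:ℝ)..x, Jf t := by
      obtain ⟨B, hB⟩ := hJbdd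
      have hf1 : Tendsto (fun ε => (-deriv M x) * ((φ x)^2 / deriv φ x)
          - (-deriv M ε) * ((φ ε)^2 / deriv φ ε)) (𝓝[>] (0:ℝ))
          (𝓝 ((-deriv M x) * ((φ x)^2 / deriv φ x) - 0)) := tendsto_const_nhds.sub hE0
      have hf2 : Tendsto (fun ε => (∫ t in (0:ℝ)..x, Jf t) - ∫ t in (0:ℝ)..ε, Jf t) (𝓝[>] (0:ℝ))
          (𝓝 ((∫ t in (0:ℝ)..x, Jf t) - 0)) := tendsto_const_nhds.sub (hsmall Jf B x hx.out hB)
      have hle := le_of_tendsto_of_tendsto hf1 hf2 ?_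
      · linarith
      · filter_upwards [Ioo_mem_nhdsGT hx.out] with ε hε
        have hIε : IntervalIntegrable Jf volume 0 ε := by
          apply hJint.mono_set
          rw [uIcc_of_le hε.1.le, uIcc_of_le hx.out.le]
          exact Icc_subset_Icc (le_refl _) hε.2.le
        calc (-deriv M x) * ((φ x)^2 / deriv φ x) - (-deriv M ε) * ((φ ε)^2 / deriv φ ε)
            ≤ ∫ t in ε..x, Jf t := hstep ε hε
          _ = (∫ t in (0:ℝ)..x, Jf t) - ∫ t in (0:ℝ)..ε, Jf t :=
              (intervalIntegral.integral_interval_sub_left hJint hIε).symm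
    have hJval : ∫ t in (0:ℝ)..x, Jf t = (2 - c) * (h x - M x * φ x)
        - ∫ t in (0:ℝ)..x, (deriv M t)^2 * (φ t)^2 / (M t * deriv φ t) := by
      rw [hJdef]
      rw [intervalIntegral.integral_sub ((hint2 x hx).const_mul (c-2)) (hint3 x hx),
        intervalIntegral.integral_const_mul, ha1 x hx]
      ring
    rw [hJval] at hlim2
    exact hlim2
  -- derivative of g on Ioi 0
  have hgd : ∀ y ∈ Ioi (0:ℝ), HasDerivAt g ((M y * φ y - h y) * deriv φ y / (φ y)^2) y := by
    intro y hy
    have hφy : 0 < φ y := hφpos y hy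
    have hd := (hhd y hy).div (hφ1 y hy).hasDerivAt (ne_of_gt hφy)
    refine hd.congr_deriv ?_
    ring
  have hderivg : ∀ y ∈ Ioi (0:ℝ), deriv g y = (M y * φ y - h y) * deriv φ y / (φ y)^2 :=
    fun y hy => (hgd y hy).deriv
  -- derivative of log ∘ g on Ioi 0
  have hlogd : ∀ y ∈ Ioi (0:ℝ), HasDerivAt (fun s => Real.log (g s))
      (M y * deriv φ y / h y - deriv φ y / φ y) y := by
    intro y hy
    have hφy : 0 < φ y := hφpos y hy
    have hhy : 0 < h y := hhpos y hy
    have hgy : g y ≠ 0 := by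
      show h y / φ y ≠ 0
      positivity
    have hd := (hgd y hy).log hgy
    convert hd using 1
    show M y * deriv φ y / h y - deriv φ y / φ y
      = (M y * φ y - h y) * deriv φ y / (φ y)^2 / (h y / φ y)
    field_simp
  -- second derivative data at a point
  have hΛd : ∀ x ∈ Ioi (0:ℝ), HasDerivAt (fun y => M y * deriv φ y / h y - deriv φ y / φ y)
      (((deriv M x * deriv φ x + M x * deriv (deriv φ) x) * h x
          - M x * deriv φ x * (deriv φ x * M x)) / (h x)^2
        - (deriv (deriv φ) x * φ x - deriv φ x * deriv φ x) / (φ x)^2) x := by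
    intro x hx
    have hφx : 0 < φ x := hφpos x hx
    have hhx : 0 < h x := hhpos x hx
    exact (((hM1 x hx).hasDerivAt.mul (hφ2 x hx).hasDerivAt).div (hhd x hx) (ne_of_gt hhx)).sub
      ((hφ2 x hx).hasDerivAt.div (hφ1 x hx).hasDerivAt (ne_of_gt hφx))
  have hlogeq : ∀ x ∈ Ioi (0:ℝ), deriv (fun y => Real.log (g y)) =ᶠ[𝓝 x]
      fun y => M y * deriv φ y / h y - deriv φ y / φ y := by
    intro x hx
    filter_upwards [isOpen_Ioi.mem_nhds hx] with y hy
    exact (hlogd y hy).deriv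
  have hgeq : ∀ x ∈ Ioi (0:ℝ), deriv g =ᶠ[𝓝 x]
      fun y => (M y * φ y - h y) * deriv φ y / (φ y)^2 := by
    intro x hx
    filter_upwards [isOpen_Ioi.mem_nhds hx] with y hy
    exact hderivg y hy
  -- final positivity of the second derivative of log ∘ g
  have hfinal : ∀ x ∈ Ioi (0:ℝ), 0 < ((deriv M x * deriv φ x + M x * deriv (deriv φ) x) * h x
          - M x * deriv φ x * (deriv φ x * M x)) / (h x)^2
        - (deriv (deriv φ) x * φ x - deriv φ x * deriv φ x) / (φ x)^2 := by
    intro x hx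
    have hφx : 0 < φ x := hφpos x hx
    have hhx : 0 < h x := hhpos x hx
    have hφ'x : 0 < deriv φ x := hφ' x hx
    have hv := hvar x hx
    have hk := hkey x hx
    set A2 : ℝ := ∫ t in (0:ℝ)..x, (deriv M t)^2 * (φ t)^2 / (M t * deriv φ t) with hA2
    set F : ℝ := (2 - deriv (deriv φ) x * φ x / (deriv φ x)^2) * (h x - M x * φ x) - A2
      - (-deriv M x) * ((φ x)^2 / deriv φ x) with hF
    have hFnn : 0 ≤ F := by rw [hF]; linarith
    have hid : ((deriv M x * deriv φ x + M x * deriv (deriv φ) x) * h x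
          - M x * deriv φ x * (deriv φ x * M x)) / (h x)^2
        - (deriv (deriv φ) x * φ x - deriv φ x * deriv φ x) / (φ x)^2
        = ((deriv φ x)^2 * (h x * F)
          + (deriv φ x)^2 * (h x * A2 - (M x * φ x - h x)^2)) / ((h x)^2 * (φ x)^2) := by
      rw [hF]
      field_simp
      ring
    rw [hid]
    apply div_pos _ (by positivity)
    have t1 : 0 ≤ (deriv φ x)^2 * (h x * F) := by positivity
    have t2 : 0 < (deriv φ x)^2 * (h x * A2 - (M x * φ x - h x)^2) := by
      apply mul_pos (by positivity)
      linarith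
    linarith
  refine ⟨fun x hx => ⟨(hgd x hx).differentiableAt, ?_⟩,
    fun x hx => ⟨(hlogd x hx).differentiableAt, ?_⟩,
    fun x hx => ?_, fun x hx => ?_⟩
  · rw [(hgeq x hx).differentiableAt_iff]
    have hφx : 0 < φ x := hφpos x hx
    exact ((((hM1 x hx).mul (hφ1 x hx)).sub (hhd x hx).differentiableAt).mul (hφ2 x hx)).div
      ((hφ1 x hx).pow 2) (by positivity)
  · rw [(hlogeq x hx).differentiableAt_iff]
    exact (hΛd x hx).differentiableAt
  · rw [hderivg x hx]
    have hφx : 0 < φ x := hφpos x hx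
    have hnum : (M x * φ x - h x) * deriv φ x < 0 :=
      mul_neg_of_neg_of_pos (by linarith [ha1neg x hx]) (hφ' x hx)
    exact div_neg_of_neg_of_pos hnum (by positivity)
  · have heq2 : deriv (deriv (fun y => Real.log (g y))) x
        = deriv (fun y => M y * deriv φ y / h y - deriv φ y / φ y) x :=
      (hlogeq x hx).deriv_eq
    rw [heq2, (hΛd x hx).deriv]
    exact hfinal x hx
end

section
/- Under the stated hypotheses, the quotient h/φ admits the asymptotic expansion h(x)/φ(x) = M(1) + (1/2)·M'(1)·(x−1) + (1/6)·( M''(1) + (φ''(1)/(2φ'(1)))·M'(1) )·(x−1)² + o((x−1)²) as x → 1; in particular, with the value at x = 1 defined to be M(1), the function h/φ is twice differentiable on (0,∞) with (h/φ)'(1) = (1/2)·M'(1) and (h/φ)''(1) = (1/3)·( M''(1) + (φ''(1)/(2φ'(1)))·M'(1) ). -/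
open Real Set Filter Topology MeasureTheory Asymptotics


lemma peano1 {f : ℝ → ℝ} {a d : ℝ} (hf : HasDerivAt f d a) :
    Tendsto (fun x => (f x - f a - d * (x - a)) / (x - a)) (𝓝[≠] a) (𝓝 0) := by
  have hs := hasDerivAt_iff_tendsto_slope.1 hf
  have := hs.sub_const d
  rw [sub_self] at this
  refine this.congr' ?_
  filter_upwards [self_mem_nhdsWithin] with x hx
  have hx' : x - a ≠ 0 := sub_ne_zero.2 hx
  simp only [slope_def_field, div_sub' hx']
  ring_nf

lemma peano2 {f f' : ℝ → ℝ} {a d : ℝ}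
    (hf : ∀ᶠ x in 𝓝 a, HasDerivAt f (f' x) x)
    (hf' : HasDerivAt f' d a) :
    Tendsto (fun x => (f x - f a - f' a * (x - a) - d / 2 * (x - a) ^ 2) / (x - a) ^ 2)
      (𝓝[≠] a) (𝓝 0) := by
  have hF : ∀ᶠ x in 𝓝 a, HasDerivAt
      (fun y => f y - f a - f' a * (y - a) - d / 2 * (y - a) ^ 2)
      (f' x - f' a - d * (x - a)) x := by
    filter_upwards [hf] with x hx
    have h1 : HasDerivAt (fun y : ℝ => f' a * (y - a)) (f' a) x := by
      simpa using (((hasDerivAt_id x).sub_const a).const_mul (f' a))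
    have h2 : HasDerivAt (fun y : ℝ => d / 2 * (y - a) ^ 2) (d * (x - a)) x := by
      have := (((hasDerivAt_id x).sub_const a).fun_pow 2).const_mul (d / 2)
      simp only [id_eq] at this
      refine this.congr_deriv ?_
      ring
    simpa using ((hx.sub_const (f a)).fun_sub h1).fun_sub h2
  have hG : ∀ᶠ x in 𝓝 a, HasDerivAt (fun y : ℝ => (y - a) ^ 2) (2 * (x - a)) x := by
    filter_upwards with x
    have := ((hasDerivAt_id x).sub_const a).fun_pow 2
    simp only [id_eq] at this
    refine this.congr_deriv ?_
    ring
  have h1 := peano1 hf'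
  apply HasDerivAt.lhopital_zero_nhdsNE (hF.filter_mono nhdsWithin_le_nhds)
    (hG.filter_mono nhdsWithin_le_nhds)
  · filter_upwards [self_mem_nhdsWithin] with x hx
    have : x - a ≠ 0 := sub_ne_zero.2 hx
    positivity
  · have hc : ContinuousAt (fun y => f y - f a - f' a * (y - a) - d / 2 * (y - a) ^ 2) a := by
      have := (hf.self_of_nhds).continuousAt
      fun_prop
    have := hc.tendsto.mono_left (nhdsWithin_le_nhds (s := {a}ᶜ))
    simpa using this
  · have hc : ContinuousAt (fun y : ℝ => (y - a) ^ 2) a := by fun_prop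
    have := hc.tendsto.mono_left (nhdsWithin_le_nhds (s := {a}ᶜ))
    simpa using this
  · have h2 := h1.mul (tendsto_const_nhds (x := (2:ℝ)⁻¹))
    rw [zero_mul] at h2
    refine h2.congr' ?_
    filter_upwards [self_mem_nhdsWithin] with x hx
    have hx' : x - a ≠ 0 := sub_ne_zero.2 hx
    simp only [div_eq_mul_inv, mul_inv]
    ring

lemma peano3 {f f' f'' : ℝ → ℝ} {a d : ℝ}
    (hf : ∀ᶠ x in 𝓝 a, HasDerivAt f (f' x) x)
    (hf' : ∀ᶠ x in 𝓝 a, HasDerivAt f' (f'' x) x)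
    (hf'' : HasDerivAt f'' d a) :
    Tendsto (fun x => (f x - f a - f' a * (x - a) - f'' a / 2 * (x - a) ^ 2
        - d / 6 * (x - a) ^ 3) / (x - a) ^ 3) (𝓝[≠] a) (𝓝 0) := by
  have hF : ∀ᶠ x in 𝓝 a, HasDerivAt
      (fun y => f y - f a - f' a * (y - a) - f'' a / 2 * (y - a) ^ 2 - d / 6 * (y - a) ^ 3)
      (f' x - f' a - f'' a * (x - a) - d / 2 * (x - a) ^ 2) x := by
    filter_upwards [hf] with x hx
    have h1 : HasDerivAt (fun y : ℝ => f' a * (y - a)) (f' a) x := by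
      simpa using (((hasDerivAt_id x).sub_const a).const_mul (f' a))
    have h2 : HasDerivAt (fun y : ℝ => f'' a / 2 * (y - a) ^ 2) (f'' a * (x - a)) x := by
      have := (((hasDerivAt_id x).sub_const a).fun_pow 2).const_mul (f'' a / 2)
      simp only [id_eq] at this
      refine this.congr_deriv ?_
      ring
    have h3 : HasDerivAt (fun y : ℝ => d / 6 * (y - a) ^ 3) (d / 2 * (x - a) ^ 2) x := by
      have := (((hasDerivAt_id x).sub_const a).fun_pow 3).const_mul (d / 6)
      simp only [id_eq] at this
      refine this.congr_deriv ?_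
      ring
    simpa using (((hx.sub_const (f a)).fun_sub h1).fun_sub h2).fun_sub h3
  have hG : ∀ᶠ x in 𝓝 a, HasDerivAt (fun y : ℝ => (y - a) ^ 3) (3 * (x - a) ^ 2) x := by
    filter_upwards with x
    have := ((hasDerivAt_id x).sub_const a).fun_pow 3
    simp only [id_eq] at this
    refine this.congr_deriv ?_
    ring
  have h1 := peano2 hf' hf''
  apply HasDerivAt.lhopital_zero_nhdsNE (hF.filter_mono nhdsWithin_le_nhds)
    (hG.filter_mono nhdsWithin_le_nhds)
  · filter_upwards [self_mem_nhdsWithin] with x hx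
    have : x - a ≠ 0 := sub_ne_zero.2 hx
    positivity
  · have hc : ContinuousAt (fun y => f y - f a - f' a * (y - a) - f'' a / 2 * (y - a) ^ 2
        - d / 6 * (y - a) ^ 3) a := by
      have := (hf.self_of_nhds).continuousAt
      fun_prop
    have := hc.tendsto.mono_left (nhdsWithin_le_nhds (s := {a}ᶜ))
    simpa using this
  · have hc : ContinuousAt (fun y : ℝ => (y - a) ^ 3) a := by fun_prop
    have := hc.tendsto.mono_left (nhdsWithin_le_nhds (s := {a}ᶜ))
    simpa using this
  · have h2 := h1.mul (tendsto_const_nhds (x := (3:ℝ)⁻¹))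
    rw [zero_mul] at h2
    refine h2.congr' ?_
    filter_upwards [self_mem_nhdsWithin] with x hx
    have hx' : x - a ≠ 0 := sub_ne_zero.2 hx
    simp only [div_eq_mul_inv, mul_inv]
    ring


set_option maxHeartbeats 4000000 in
/-- Claim in the proof of Theorem 1: asymptotic expansion of `h/φ` at `x = 1`:
`h/φ = M(1) + ½M'(1)(x−1) + ⅙(M''(1) + φ''(1)/(2φ'(1))·M'(1))(x−1)² + o((x−1)²)`;
in particular `h/φ` (with value `M 1` at `1`) is twice differentiable on `(0,∞)`
with the indicated first and second derivatives at `x = 1`. -/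
theorem stmt12
    (φ M h : ℝ → ℝ)
    (hφ1 : ∀ x ∈ Ioi (0:ℝ), DifferentiableAt ℝ φ x)
    (hφ2 : ∀ x ∈ Ioi (0:ℝ), DifferentiableAt ℝ (deriv φ) x)
    (hφ3 : ∀ x ∈ Ioi (0:ℝ), DifferentiableAt ℝ (deriv (deriv φ)) x)
    (hMpos : ∀ x ∈ Ioi (0:ℝ), 0 < M x)
    (hM1 : ∀ x ∈ Ioi (0:ℝ), DifferentiableAt ℝ M x)
    (hM2 : ∀ x ∈ Ioi (0:ℝ), DifferentiableAt ℝ (deriv M) x)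
    (hM' : ∀ x ∈ Ioi (0:ℝ), deriv M x < 0)
    (hlogM : ∀ x ∈ Ioi (0:ℝ), 0 ≤ deriv (deriv (fun y => Real.log (M y))) x)
    (hφ' : ∀ x ∈ Ioi (0:ℝ), 0 < deriv φ x)
    (hφint : ∀ x ∈ Ioi (0:ℝ), φ x = ∫ t in (1:ℝ)..x, deriv φ t)
    (hE1 : ∀ x ∈ Ioi (0:ℝ),
      (deriv φ x) ^ 2 * deriv (deriv φ) x
        + φ x * deriv φ x * deriv (deriv (deriv φ)) x
        - 2 * φ x * (deriv (deriv φ) x) ^ 2 ≤ 0)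
    (hh : ∀ x ∈ Ioi (0:ℝ), h x = ∫ t in (1:ℝ)..x, deriv φ t * M t) :
    let g : ℝ → ℝ := fun x => if x = 1 then M 1 else h x / φ x
    (fun x => h x / φ x -
        (M 1 + (1/2) * deriv M 1 * (x - 1)
          + (1/6) * (deriv (deriv M) 1 + deriv (deriv φ) 1 / (2 * deriv φ 1) * deriv M 1)
              * (x - 1) ^ 2))
      =o[𝓝[≠] (1:ℝ)] (fun x => (x - 1) ^ 2) ∧
    (∀ x ∈ Ioi (0:ℝ), DifferentiableAt ℝ g x ∧ DifferentiableAt ℝ (deriv g) x) ∧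
    deriv g 1 = (1/2) * deriv M 1 ∧
    deriv (deriv g) 1 =
      (1/3) * (deriv (deriv M) 1 + deriv (deriv φ) 1 / (2 * deriv φ 1) * deriv M 1) := by
  intro g
  have h1mem : (1:ℝ) ∈ Ioi (0:ℝ) := mem_Ioi.2 one_pos
  set a1 := deriv φ 1 with ha1def
  set a2 := deriv (deriv φ) 1 with ha2def
  set a3 := deriv (deriv (deriv φ)) 1 with ha3def
  set m0 := M 1 with hm0def
  set m1 := deriv M 1 with hm1def
  set m2 := deriv (deriv M) 1 with hm2def
  have ha1pos : 0 < a1 := hφ' 1 h1mem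
  have ha1 : a1 ≠ 0 := ne_of_gt ha1pos
  set c1 : ℝ := (1/2) * m1 with hc1def
  set c2 : ℝ := (1/6) * (m2 + a2 / (2 * a1) * m1) with hc2def
  set K : ℝ := (1/3) * (m2 + a2 / (2 * a1) * m1) with hKdef
  -- basic continuity / integrability
  have contφ' : ContinuousOn (deriv φ) (Ioi (0:ℝ)) :=
    fun x hx => (hφ2 x hx).continuousAt.continuousWithinAt
  have contM : ContinuousOn M (Ioi (0:ℝ)) :=
    fun x hx => (hM1 x hx).continuousAt.continuousWithinAt
  have contφ'M : ContinuousOn (fun t => deriv φ t * M t) (Ioi (0:ℝ)) := contφ'.mul contM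
  have hsub : ∀ x : ℝ, x ∈ Ioi (0:ℝ) → uIcc (1:ℝ) x ⊆ Ioi (0:ℝ) := by
    intro x hx t ht
    have h1 : min 1 x ≤ t := ht.1
    have : (0:ℝ) < min 1 x := lt_min one_pos hx
    exact lt_of_lt_of_le this h1
  have hφ1val : φ 1 = 0 := by rw [hφint 1 h1mem, intervalIntegral.integral_same]
  have hh1val : h 1 = 0 := by rw [hh 1 h1mem, intervalIntegral.integral_same]
  -- derivative of h on Ioi
  have hhd : ∀ x ∈ Ioi (0:ℝ), HasDerivAt h (deriv φ x * M x) x := by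
    intro x hx
    have hint : IntervalIntegrable (fun t => deriv φ t * M t) volume 1 x :=
      (contφ'M.mono (hsub x hx)).intervalIntegrable
    have hmeas : StronglyMeasurableAtFilter (fun t => deriv φ t * M t) (𝓝 x) volume :=
      ContinuousOn.stronglyMeasurableAtFilter isOpen_Ioi contφ'M x hx
    have hca : ContinuousAt (fun t => deriv φ t * M t) x :=
      ((hφ2 x hx).continuousAt).mul ((hM1 x hx).continuousAt)
    have hder := intervalIntegral.integral_hasDerivAt_right hint hmeas hca
    refine hder.congr_of_eventuallyEq ?_
    filter_upwards [isOpen_Ioi.mem_nhds hx] with y hy using hh y hy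
  have hφd : ∀ x ∈ Ioi (0:ℝ), HasDerivAt φ (deriv φ x) x := fun x hx => (hφ1 x hx).hasDerivAt
  have hφ'd : ∀ x ∈ Ioi (0:ℝ), HasDerivAt (deriv φ) (deriv (deriv φ) x) x :=
    fun x hx => (hφ2 x hx).hasDerivAt
  have hφ''d : ∀ x ∈ Ioi (0:ℝ), HasDerivAt (deriv (deriv φ)) (deriv (deriv (deriv φ)) x) x :=
    fun x hx => (hφ3 x hx).hasDerivAt
  have hMd : ∀ x ∈ Ioi (0:ℝ), HasDerivAt M (deriv M x) x := fun x hx => (hM1 x hx).hasDerivAt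
  have hM'd : ∀ x ∈ Ioi (0:ℝ), HasDerivAt (deriv M) (deriv (deriv M) x) x :=
    fun x hx => (hM2 x hx).hasDerivAt
  have hnb : Ioi (0:ℝ) ∈ 𝓝 (1:ℝ) := isOpen_Ioi.mem_nhds h1mem
  -- Peano expansions
  have Tφ : Tendsto (fun x => (φ x - (a1 * (x-1) + a2/2 * (x-1)^2 + a3/6 * (x-1)^3)) / (x-1)^3)
      (𝓝[≠] (1:ℝ)) (𝓝 0) := by
    have hf : ∀ᶠ x in 𝓝 (1:ℝ), HasDerivAt φ (deriv φ x) x := by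
      filter_upwards [hnb] with x hx using hφd x hx
    have hf' : ∀ᶠ x in 𝓝 (1:ℝ), HasDerivAt (deriv φ) (deriv (deriv φ) x) x := by
      filter_upwards [hnb] with x hx using hφ'd x hx
    have := peano3 hf hf' (hφ''d 1 h1mem)
    rw [hφ1val] at this
    refine this.congr (fun x => ?_)
    simp only [ha1def, ha2def, ha3def, hm0def, hm1def, hm2def]
    ring_nf
  have Th : Tendsto (fun x => (h x - (a1*m0 * (x-1) + (a2*m0 + a1*m1)/2 * (x-1)^2
      + (a3*m0 + 2*a2*m1 + a1*m2)/6 * (x-1)^3)) / (x-1)^3) (𝓝[≠] (1:ℝ)) (𝓝 0) := by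
    have hf : ∀ᶠ x in 𝓝 (1:ℝ), HasDerivAt h (deriv φ x * M x) x := by
      filter_upwards [hnb] with x hx using hhd x hx
    have hf' : ∀ᶠ x in 𝓝 (1:ℝ), HasDerivAt (fun y => deriv φ y * M y)
        (deriv (deriv φ) x * M x + deriv φ x * deriv M x) x := by
      filter_upwards [hnb] with x hx using (hφ'd x hx).mul (hMd x hx)
    have hf'' : HasDerivAt (fun y => deriv (deriv φ) y * M y + deriv φ y * deriv M y)
        (a3*m0 + 2*a2*m1 + a1*m2) 1 := by
      have := ((hφ''d 1 h1mem).mul (hMd 1 h1mem)).add ((hφ'd 1 h1mem).mul (hM'd 1 h1mem))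
      refine this.congr_deriv ?_
      ring
    have := peano3 hf hf' hf''
    rw [hh1val] at this
    refine this.congr (fun x => ?_)
    simp only [ha1def, ha2def, ha3def, hm0def, hm1def, hm2def]
    ring_nf
  have TM : Tendsto (fun x => (M x - (m0 + m1 * (x-1) + m2/2 * (x-1)^2)) / (x-1)^2)
      (𝓝[≠] (1:ℝ)) (𝓝 0) := by
    have hf : ∀ᶠ x in 𝓝 (1:ℝ), HasDerivAt M (deriv M x) x := by
      filter_upwards [hnb] with x hx using hMd x hx
    have := peano2 hf (hM'd 1 h1mem)
    refine this.congr (fun x => ?_)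
    simp only [ha1def, ha2def, ha3def, hm0def, hm1def, hm2def]
    ring_nf
  have TΦ' : Tendsto (fun x => (deriv φ x - a1 - a2 * (x-1)) / (x-1)) (𝓝[≠] (1:ℝ)) (𝓝 0) := by
    have := peano1 (hφ'd 1 h1mem)
    refine this.congr (fun x => ?_)
    simp only [ha1def, ha2def, ha3def, hm0def, hm1def, hm2def]
  -- filter events
  have evne : ∀ᶠ x in 𝓝[≠] (1:ℝ), x ≠ 1 := self_mem_nhdsWithin
  have evIoi : ∀ᶠ x in 𝓝[≠] (1:ℝ), x ∈ Ioi (0:ℝ) :=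
    eventually_nhdsWithin_of_eventually_nhds (eventually_of_mem hnb (fun y hy => hy))
  have Tu : Tendsto (fun x : ℝ => x - 1) (𝓝[≠] (1:ℝ)) (𝓝 0) := by
    have hc : ContinuousAt (fun x : ℝ => x - 1) 1 := by fun_prop
    have := hc.tendsto.mono_left (nhdsWithin_le_nhds (s := {(1:ℝ)}ᶜ))
    simpa using this
  have Tφu : Tendsto (fun x => φ x / (x-1)) (𝓝[≠] (1:ℝ)) (𝓝 a1) := by
    have hE : Tendsto (fun x => ((φ x - (a1 * (x-1) + a2/2 * (x-1)^2 + a3/6 * (x-1)^3)) / (x-1)^3)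
        * (x-1)^2 + (a1 + a2/2 * (x-1) + a3/6 * (x-1)^2)) (𝓝[≠] (1:ℝ)) (𝓝 a1) := by
      have h1 := Tφ.mul (Tu.pow 2)
      have h2 : Tendsto (fun x : ℝ => a1 + a2/2 * (x-1) + a3/6 * (x-1)^2) (𝓝[≠] (1:ℝ)) (𝓝 a1) := by
        have hc : ContinuousAt (fun x : ℝ => a1 + a2/2 * (x-1) + a3/6 * (x-1)^2) 1 := by fun_prop
        have := hc.tendsto.mono_left (nhdsWithin_le_nhds (s := {(1:ℝ)}ᶜ))
        simpa using this
      have := h1.add h2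
      simpa using this
    refine hE.congr' ?_
    filter_upwards [evne] with x hx
    have hu : x - 1 ≠ 0 := sub_ne_zero.2 hx
    field_simp
    ring
  have Tuφ : Tendsto (fun x => (x-1) / φ x) (𝓝[≠] (1:ℝ)) (𝓝 a1⁻¹) := by
    have := Tφu.inv₀ ha1
    refine this.congr (fun x => ?_)
    rw [inv_div]
  have evφ : ∀ᶠ x in 𝓝[≠] (1:ℝ), φ x ≠ 0 := by
    filter_upwards [Tφu.eventually_ne ha1] with x hx
    intro h0
    exact hx (by rw [h0, zero_div])
  -- KEY quotient expansion
  have T1 : Tendsto (fun x => (h x / φ x - (m0 + c1 * (x-1) + c2 * (x-1)^2)) / (x-1)^2)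
      (𝓝[≠] (1:ℝ)) (𝓝 0) := by
    have hE : Tendsto (fun x =>
        ((h x - (a1*m0 * (x-1) + (a2*m0 + a1*m1)/2 * (x-1)^2
            + (a3*m0 + 2*a2*m1 + a1*m2)/6 * (x-1)^3)) / (x-1)^3
          - (m0 + c1 * (x-1) + c2 * (x-1)^2)
            * ((φ x - (a1 * (x-1) + a2/2 * (x-1)^2 + a3/6 * (x-1)^3)) / (x-1)^3)
          + (-(c1*(a3/6) + c2*(a2/2)) + (-(c2*(a3/6))) * (x-1)) * (x-1))
        * ((x-1) / φ x)) (𝓝[≠] (1:ℝ)) (𝓝 0) := by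
      have hcp : Tendsto (fun x : ℝ => m0 + c1 * (x-1) + c2 * (x-1)^2) (𝓝[≠] (1:ℝ)) (𝓝 m0) := by
        have hc : ContinuousAt (fun x : ℝ => m0 + c1 * (x-1) + c2 * (x-1)^2) 1 := by fun_prop
        have := hc.tendsto.mono_left (nhdsWithin_le_nhds (s := {(1:ℝ)}ᶜ))
        simpa using this
      have hd : Tendsto (fun x : ℝ => (-(c1*(a3/6) + c2*(a2/2)) + (-(c2*(a3/6))) * (x-1)))
          (𝓝[≠] (1:ℝ)) (𝓝 (-(c1*(a3/6) + c2*(a2/2)))) := by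
        have hc : ContinuousAt (fun x : ℝ => (-(c1*(a3/6) + c2*(a2/2)) + (-(c2*(a3/6))) * (x-1))) 1 := by
          fun_prop
        have := hc.tendsto.mono_left (nhdsWithin_le_nhds (s := {(1:ℝ)}ᶜ))
        simpa using this
      have := ((Th.sub (hcp.mul Tφ)).add (hd.mul Tu)).mul Tuφ
      simpa using this
    refine hE.congr' ?_
    filter_upwards [evne, evφ] with x hx hφx
    have hu : x - 1 ≠ 0 := sub_ne_zero.2 hx
    rw [hc1def, hc2def]
    field_simp
    ring
  -- conjunct 1
  have conj1 : (fun x => h x / φ x -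
      (m0 + c1 * (x - 1) + c2 * (x - 1) ^ 2)) =o[𝓝[≠] (1:ℝ)] (fun x => (x - 1) ^ 2) := by
    rw [isLittleO_iff_tendsto']
    · exact T1
    · filter_upwards [evne] with x hx h0
      exact absurd ((pow_eq_zero_iff (by norm_num)).1 h0) (sub_ne_zero.2 hx)
  -- g basics
  have hg1 : g 1 = m0 := if_pos rfl
  have hgne : ∀ x : ℝ, x ≠ 1 → g x = h x / φ x := fun x hx => if_neg hx
  have Tg : Tendsto (fun x => (g x - (m0 + c1 * (x-1) + c2 * (x-1)^2)) / (x-1)^2)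
      (𝓝[≠] (1:ℝ)) (𝓝 0) := by
    refine T1.congr' ?_
    filter_upwards [evne] with x hx
    rw [hgne x hx]
  -- quadratic little-o of g at full neighborhood
  have oG : (fun x => g x - (m0 + c1 * (x-1) + c2 * (x-1)^2)) =o[𝓝 (1:ℝ)]
      (fun x => (x - 1)^2) := by
    rw [← nhdsNE_sup_pure, isLittleO_sup]
    constructor
    · rw [isLittleO_iff_tendsto']
      · exact Tg
      · filter_upwards [evne] with x hx h0
        exact absurd ((pow_eq_zero_iff (by norm_num)).1 h0) (sub_ne_zero.2 hx)
    · rw [isLittleO_pure]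
      show g 1 - (m0 + c1 * ((1:ℝ) - 1) + c2 * ((1:ℝ) - 1)^2) = 0
      rw [hg1]; ring
  have osq : (fun x : ℝ => (x - 1)^2) =o[𝓝 (1:ℝ)] (fun x => x - 1) := by
    rw [isLittleO_iff_tendsto (fun x hx => by rw [hx]; ring)]
    have hT : Tendsto (fun x : ℝ => x - 1) (𝓝 (1:ℝ)) (𝓝 0) := by
      have hc : ContinuousAt (fun x : ℝ => x - 1) 1 := by fun_prop
      simpa using hc.tendsto
    refine hT.congr (fun x => ?_)
    rcases eq_or_ne (x - 1) 0 with h0 | h0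
    · rw [h0]; simp
    · field_simp
  have hg'1 : HasDerivAt g c1 1 := by
    rw [hasDerivAt_iff_isLittleO]
    have := (oG.trans osq).add (osq.const_mul_left c2)
    refine this.congr (fun x => ?_) (fun x => rfl)
    simp only [hg1, smul_eq_mul]
    ring
  have hderivg1 : deriv g 1 = c1 := hg'1.deriv
  -- sign of φ away from 1
  have φne : ∀ x ∈ Ioi (0:ℝ), x ≠ 1 → φ x ≠ 0 := by
    intro x hx hx1
    rcases lt_or_gt_of_ne hx1 with hlt | hgt
    · -- x < 1 : φ x < 0
      have hii : IntervalIntegrable (deriv φ) volume x 1 :=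
        ((contφ'.mono (hsub x hx)).intervalIntegrable).symm
      have hpos : 0 < ∫ t in x..(1:ℝ), deriv φ t := by
        refine intervalIntegral.intervalIntegral_pos_of_pos_on hii (fun t ht => hφ' t ?_) hlt
        exact lt_trans hx ht.1
      have : φ x < 0 := by
        rw [hφint x hx, intervalIntegral.integral_symm]
        linarith
      exact ne_of_lt this
    · have hii : IntervalIntegrable (deriv φ) volume 1 x :=
        (contφ'.mono (hsub x hx)).intervalIntegrable
      have hpos : 0 < ∫ t in (1:ℝ)..x, deriv φ t := by
        refine intervalIntegral.intervalIntegral_pos_of_pos_on hii (fun t ht => hφ' t ?_) hgt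
        exact lt_trans one_pos ht.1
      have : 0 < φ x := by rw [hφint x hx]; exact hpos
      exact ne_of_gt this
  -- derivative of g away from 1
  have hgdx : ∀ x, x ∈ Ioi (0:ℝ) → x ≠ 1 →
      HasDerivAt g ((deriv φ x * M x * φ x - h x * deriv φ x) / (φ x)^2) x := by
    intro x hx hx1
    have hdiv := (hhd x hx).div (hφd x hx) (φne x hx hx1)
    refine hdiv.congr_of_eventuallyEq ?_
    have hmem : {y : ℝ | y ≠ 1} ∩ Ioi 0 ∈ 𝓝 x :=
      (IsOpen.inter isOpen_ne isOpen_Ioi).mem_nhds ⟨hx1, hx⟩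
    filter_upwards [hmem] with y hy using hgne y hy.1
  have hdg_eq : ∀ x, x ∈ Ioi (0:ℝ) → x ≠ 1 →
      deriv g x = (deriv φ x * M x * φ x - h x * deriv φ x) / (φ x)^2 :=
    fun x hx hx1 => (hgdx x hx hx1).deriv
  -- limits for second derivative
  have TS : Tendsto (fun x => (M x - g x - c1 * (x-1)) / (x-1)^2) (𝓝[≠] (1:ℝ))
      (𝓝 (m2/2 - c2)) := by
    have hE := (TM.sub Tg).add (tendsto_const_nhds (x := m2/2 - c2) (f := 𝓝[≠] (1:ℝ)))
    rw [sub_zero, zero_add] at hE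
    refine hE.congr' ?_
    filter_upwards [evne] with x hx
    have hu : x - 1 ≠ 0 := sub_ne_zero.2 hx
    rw [hc1def, hc2def]
    field_simp
    ring
  have TRr : Tendsto (fun x => (φ x - a1 * (x-1)) / (x-1)^2) (𝓝[≠] (1:ℝ)) (𝓝 (a2/2)) := by
    have h2 : Tendsto (fun x : ℝ => a2/2 + a3/6 * (x-1)) (𝓝[≠] (1:ℝ)) (𝓝 (a2/2)) := by
      have hc : ContinuousAt (fun x : ℝ => a2/2 + a3/6 * (x-1)) 1 := by fun_prop
      have := hc.tendsto.mono_left (nhdsWithin_le_nhds (s := {(1:ℝ)}ᶜ))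
      simpa using this
    have hE := (Tφ.mul Tu).add h2
    rw [zero_mul, zero_add] at hE
    refine hE.congr' ?_
    filter_upwards [evne] with x hx
    have hu : x - 1 ≠ 0 := sub_ne_zero.2 hx
    field_simp
    ring
  have TW : Tendsto (fun x => (deriv φ x - a1) / (x-1)) (𝓝[≠] (1:ℝ)) (𝓝 a2) := by
    have hE := TΦ'.add (tendsto_const_nhds (x := a2) (f := 𝓝[≠] (1:ℝ)))
    rw [zero_add] at hE
    refine hE.congr' ?_
    filter_upwards [evne] with x hx
    have hu : x - 1 ≠ 0 := sub_ne_zero.2 hx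
    field_simp
    ring
  -- second-derivative limit
  have T2 : Tendsto (fun x => (deriv g x - c1 - K * (x-1)) / (x-1)) (𝓝[≠] (1:ℝ)) (𝓝 0) := by
    have hE : Tendsto (fun x =>
        (a1 * ((M x - g x - c1 * (x-1)) / (x-1)^2)
          + ((deriv φ x - a1) / (x-1)) * c1
          + ((deriv φ x - a1) / (x-1)) * ((M x - g x - c1 * (x-1)) / (x-1)^2) * (x-1)
          - c1 * ((φ x - a1 * (x-1)) / (x-1)^2)
          - K * a1
          - K * ((φ x - a1 * (x-1)) / (x-1)^2) * (x-1))
        * ((x-1) / φ x)) (𝓝[≠] (1:ℝ)) (𝓝 0) := by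
      have hsum := (((((TS.const_mul a1).add (TW.mul_const c1)).add
          ((TW.mul TS).mul Tu)).sub (TRr.const_mul c1)).sub
          (tendsto_const_nhds (x := K * a1) (f := 𝓝[≠] (1:ℝ)))).sub ((TRr.const_mul K).mul Tu)
      have hval : a1 * (m2/2 - c2) + a2 * c1 + a2 * (m2/2 - c2) * 0 - c1 * (a2/2)
          - K * a1 - K * (a2/2) * 0 = 0 := by
        rw [hc1def, hc2def, hKdef]
        field_simp
        ring
      have hsum' := hsum.mul Tuφ
      rw [show (a1 * (m2/2 - c2) + a2 * c1 + a2 * (m2/2 - c2) * 0 - c1 * (a2/2)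
          - K * a1 - K * (a2/2) * 0) = 0 from hval, zero_mul] at hsum'
      refine hsum'.congr (fun x => ?_)
      ring
    refine hE.congr' ?_
    filter_upwards [evne, evIoi, evφ] with x hx hxIoi hφx
    have hu : x - 1 ≠ 0 := sub_ne_zero.2 hx
    rw [hdg_eq x hxIoi hx, hgne x hx]
    field_simp
    ring
  have hg''1 : HasDerivAt (deriv g) K 1 := by
    rw [hasDerivAt_iff_isLittleO, hderivg1]
    rw [← nhdsNE_sup_pure, isLittleO_sup]
    constructor
    · rw [isLittleO_iff_tendsto']
      · refine T2.congr (fun x => ?_)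
        simp only [smul_eq_mul]
        ring_nf
      · filter_upwards [evne] with x hx h0
        exact absurd (sub_eq_zero.1 h0) hx
    · rw [isLittleO_pure]
      simp [hderivg1]
  refine ⟨conj1, ?_, hderivg1, hg''1.deriv⟩
  intro x hx
  rcases eq_or_ne x 1 with rfl | hx1
  · exact ⟨hg'1.differentiableAt, hg''1.differentiableAt⟩
  · refine ⟨(hgdx x hx hx1).differentiableAt, ?_⟩
    have hR : DifferentiableAt ℝ
        (fun y => (deriv φ y * M y * φ y - h y * deriv φ y) / (φ y)^2) x := by
      have hnum : DifferentiableAt ℝ (fun y => deriv φ y * M y * φ y - h y * deriv φ y) x :=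
        (((hφ2 x hx).mul (hM1 x hx)).mul (hφ1 x hx)).sub
          (((hhd x hx).differentiableAt).mul (hφ2 x hx))
      have hden : DifferentiableAt ℝ (fun y => (φ y)^2) x := (hφ1 x hx).pow 2
      exact hnum.div hden (pow_ne_zero 2 (φne x hx hx1))
    have hev : deriv g =ᶠ[𝓝 x] (fun y => (deriv φ y * M y * φ y - h y * deriv φ y) / (φ y)^2) := by
      have hmem : {y : ℝ | y ≠ 1} ∩ Ioi 0 ∈ 𝓝 x :=
        (IsOpen.inter isOpen_ne isOpen_Ioi).mem_nhds ⟨hx1, hx⟩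
      filter_upwards [hmem] with y hy using hdg_eq y hy.2 hy.1
    exact (hev.differentiableAt_iff).2 hR
end

section
/- Under the stated hypotheses, the limit as x → 1 of −(A(x)h(x)² − B(x)h(x) + C(x)) / (φ(x)²h(x)²) exists, equals (1/6)·( (M'(1)/M(1))·(φ''(1)/φ'(1)) + (4·M(1)·M''(1) − 3·M'(1)²)/(2·M(1)²) ), and this number is strictly positive; moreover (log(h/φ))'' = −(Ah² − Bh + C)/(φ²h²) on (0,∞). -/
set_option maxHeartbeats 1000000


open Real Set Filter Topology MeasureTheory Asymptotics

lemma key_limit (f f1 f2 : ℝ → ℝ) (α β γ : ℝ)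
    (hf : ∀ᶠ x in 𝓝 (1:ℝ), HasDerivAt f (f1 x) x)
    (hf1 : ∀ᶠ x in 𝓝 (1:ℝ), HasDerivAt f1 (f2 x) x)
    (hf2 : HasDerivAt f2 γ 1)
    (h0 : f 1 = 0) (h1 : f1 1 = α) (h2 : f2 1 = β) (hα : α ≠ 0) :
    Tendsto (fun x => (f2 x * f x - f1 x ^ 2) / f x ^ 2 + 1/(x-1)^2)
      (𝓝[≠] (1:ℝ)) (𝓝 (γ/(3*α) - β^2/(4*α^2))) := by
  have hne : ∀ᶠ x in 𝓝[≠] (1:ℝ), x ≠ 1 := eventually_mem_nhdsWithin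
  set p : ℝ → ℝ := fun x => f x - (α*(x-1) + β*(x-1)^2/2 + γ*(x-1)^3/6) with hp
  set q : ℝ → ℝ := fun x => f1 x - (α + β*(x-1) + γ*(x-1)^2/2) with hq
  set r : ℝ → ℝ := fun x => f2 x - (β + γ*(x-1)) with hr
  -- third remainder
  have g3 : Tendsto (fun x => r x / (x - 1)) (𝓝[≠] (1:ℝ)) (𝓝 0) := by
    have hslope2 : Tendsto (fun x => (f2 x - β) / (x - 1)) (𝓝[≠] (1:ℝ)) (𝓝 γ) := by
      have := hasDerivAt_iff_tendsto_slope.1 hf2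
      refine this.congr (fun x => ?_)
      simp [slope_def_field, div_eq_inv_mul, h2]
    have : Tendsto (fun x => (f2 x - β) / (x - 1) - γ) (𝓝[≠] (1:ℝ)) (𝓝 (γ - γ)) :=
      hslope2.sub tendsto_const_nhds
    rw [sub_self] at this
    refine this.congr' (hne.mono fun x hx => ?_)
    have hxz : x - 1 ≠ 0 := sub_ne_zero.2 hx
    rw [hr]; field_simp; ring
  -- derivative facts for q and p
  have hq' : ∀ᶠ x in 𝓝 (1:ℝ), HasDerivAt q (r x) x := by
    refine hf1.mono fun x hx => ?_
    have hpoly : HasDerivAt (fun y : ℝ => α + β*(y-1) + γ*(y-1)^2/2) (β + γ*(x-1)) x := by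
      have h1' : HasDerivAt (fun y : ℝ => y - 1) 1 x := (hasDerivAt_id x).sub_const 1
      have := ((h1'.const_mul β).const_add α).add (((h1'.pow 2).const_mul γ).div_const 2)
      exact this.congr_deriv (by push_cast; ring)
    exact hx.sub hpoly
  have hp' : ∀ᶠ x in 𝓝 (1:ℝ), HasDerivAt p (q x) x := by
    refine hf.mono fun x hx => ?_
    have h1' : HasDerivAt (fun y : ℝ => y - 1) 1 x := (hasDerivAt_id x).sub_const 1
    have hpoly : HasDerivAt (fun y : ℝ => α*(y-1) + β*(y-1)^2/2 + γ*(y-1)^3/6)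
        (α + β*(x-1) + γ*(x-1)^2/2) x := by
      have := ((h1'.const_mul α).add (((h1'.pow 2).const_mul β).div_const 2)).add
        (((h1'.pow 3).const_mul γ).div_const 6)
      exact this.congr_deriv (by push_cast; ring)
    exact hx.sub hpoly
  have hq0 : q 1 = 0 := by simp [hq, h1]
  have hp0 : p 1 = 0 := by simp [hp, h0]
  have hqc : Tendsto q (𝓝 (1:ℝ)) (𝓝 0) := by
    have : ContinuousAt q 1 := (hq'.self_of_nhds).continuousAt
    simpa [hq0] using this.tendsto
  have hpc : Tendsto p (𝓝 (1:ℝ)) (𝓝 0) := by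
    have : ContinuousAt p 1 := (hp'.self_of_nhds).continuousAt
    simpa [hp0] using this.tendsto
  -- second remainder via L'Hopital
  have g2 : Tendsto (fun x => q x / (x - 1)^2) (𝓝[≠] (1:ℝ)) (𝓝 0) := by
    apply HasDerivAt.lhopital_zero_nhdsNE (f' := r) (g' := fun x => 2*(x-1))
    · exact eventually_nhdsWithin_of_eventually_nhds hq'
    · filter_upwards with x
      have h1' : HasDerivAt (fun y : ℝ => y - 1) 1 x := (hasDerivAt_id x).sub_const 1
      exact (h1'.pow 2).congr_deriv (by push_cast; ring)
    · filter_upwards [hne] with x hx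
      have hxz : x - 1 ≠ 0 := sub_ne_zero.2 hx
      simp [hxz]
    · exact tendsto_nhdsWithin_of_tendsto_nhds hqc
    · have : Tendsto (fun x : ℝ => (x-1)^2) (𝓝 1) (𝓝 0) := by
        have hc : ContinuousAt (fun x : ℝ => (x-1)^2) 1 := by fun_prop
        simpa using hc.tendsto
      exact tendsto_nhdsWithin_of_tendsto_nhds this
    · have h2' := g3.mul_const (1/2 : ℝ)
      rw [zero_mul] at h2'
      refine h2'.congr (fun x => ?_)
      rw [mul_one_div, div_div, mul_comm]
  -- first remainder via L'Hopital
  have g1 : Tendsto (fun x => p x / (x - 1)^3) (𝓝[≠] (1:ℝ)) (𝓝 0) := by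
    apply HasDerivAt.lhopital_zero_nhdsNE (f' := q) (g' := fun x => 3*(x-1)^2)
    · exact eventually_nhdsWithin_of_eventually_nhds hp'
    · filter_upwards with x
      have h1' : HasDerivAt (fun y : ℝ => y - 1) 1 x := (hasDerivAt_id x).sub_const 1
      exact (h1'.pow 3).congr_deriv (by push_cast; ring)
    · filter_upwards [hne] with x hx
      have hxz : x - 1 ≠ 0 := sub_ne_zero.2 hx
      positivity
    · exact tendsto_nhdsWithin_of_tendsto_nhds hpc
    · have : Tendsto (fun x : ℝ => (x-1)^3) (𝓝 1) (𝓝 0) := by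
        have hc : ContinuousAt (fun x : ℝ => (x-1)^3) 1 := by fun_prop
        simpa using hc.tendsto
      exact tendsto_nhdsWithin_of_tendsto_nhds this
    · have h3' := g2.mul_const (1/3 : ℝ)
      rw [zero_mul] at h3'
      refine h3'.congr (fun x => ?_)
      rw [mul_one_div, div_div, mul_comm]
  -- slope of f at 1, and w = (x-1)/f x
  have hslope : Tendsto (fun x => f x / (x - 1)) (𝓝[≠] (1:ℝ)) (𝓝 α) := by
    have := hasDerivAt_iff_tendsto_slope.1 hf.self_of_nhds
    rw [h1] at this
    refine this.congr (fun x => ?_)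
    simp [slope_def_field, div_eq_inv_mul, h0]
  have hfne : ∀ᶠ x in 𝓝[≠] (1:ℝ), f x ≠ 0 := by
    filter_upwards [hslope.eventually_ne hα, hne] with x hx hx1
    intro hfx; apply hx; simp [hfx]
  have hw : Tendsto (fun x => (x-1)/f x) (𝓝[≠] (1:ℝ)) (𝓝 α⁻¹) := by
    have := hslope.inv₀ hα
    refine this.congr (fun x => ?_)
    rw [inv_div]
  -- u tends to 0
  have hu : Tendsto (fun x : ℝ => x - 1) (𝓝[≠] (1:ℝ)) (𝓝 0) := by
    have hc : ContinuousAt (fun x : ℝ => x - 1) 1 := by fun_prop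
    simpa using tendsto_nhdsWithin_of_tendsto_nhds hc.tendsto
  -- the big combination
  have comb : Tendsto (fun x => ((x-1, p x/(x-1)^3), (q x/(x-1)^2, r x/(x-1))))
      (𝓝[≠] (1:ℝ)) (𝓝 ((0, 0), (0, 0))) :=
    (hu.prodMk_nhds g1).prodMk_nhds (g2.prodMk_nhds g3)
  set Φ : (ℝ × ℝ) × (ℝ × ℝ) → ℝ := fun v =>
      (α*γ/3 - β^2/4) - β*γ*v.1.1/6 - γ^2*v.1.1^2/18
      + (β + γ*v.1.1) * v.1.2 * v.1.1
      + v.2.2 * (α + β*v.1.1/2 + γ*v.1.1^2/6)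
      + v.2.2 * v.1.2 * v.1.1^2
      - 2*(α + β*v.1.1 + γ*v.1.1^2/2) * v.2.1
      - v.2.1^2 * v.1.1^2
      + 2*(α + β*v.1.1/2 + γ*v.1.1^2/6) * v.1.2
      + v.1.2^2 * v.1.1^2 with hΦ
  have hΦc : Continuous Φ := by rw [hΦ]; fun_prop
  have hN4 : Tendsto (fun x => Φ ((x-1, p x/(x-1)^3), (q x/(x-1)^2, r x/(x-1))))
      (𝓝[≠] (1:ℝ)) (𝓝 (α*γ/3 - β^2/4)) := by
    have := (hΦc.tendsto ((0,0),(0,0))).comp comb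
    have hv : Φ ((0,0),(0,0)) = α*γ/3 - β^2/4 := by rw [hΦ]; norm_num
    rw [hv] at this
    exact this
  -- final assembly
  have hfinal := hN4.mul (hw.pow 2)
  have hval : (α*γ/3 - β^2/4) * (α⁻¹)^2 = γ/(3*α) - β^2/(4*α^2) := by
    field_simp
  rw [hval] at hfinal
  refine Tendsto.congr' ?_ hfinal
  filter_upwards [hne, hfne] with x hx hfx
  have hxz : x - 1 ≠ 0 := sub_ne_zero.2 hx
  rw [hΦ]
  simp only [hp, hq, hr]
  field_simp
  ring

/-- Claim in the proof of Theorem 1 (with `q = 1`, `A = φ''φ − φ'²`, `B = (φ'M)'φ²`,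
`C = φ²φ'²M²`): the limit as `x → 1` of `−(Ah² − Bh + C)/(φ²h²)` exists, equals the
stated positive number, and `(log (h/φ))'' = −(Ah² − Bh + C)/(φ²h²)` on `(0,∞)`
(away from the point `x = 1`, where both sides agree by continuity). -/
theorem stmt13
    (φ M h : ℝ → ℝ)
    (hφ1 : ∀ x ∈ Ioi (0:ℝ), DifferentiableAt ℝ φ x)
    (hφ2 : ∀ x ∈ Ioi (0:ℝ), DifferentiableAt ℝ (deriv φ) x)
    (hφ3 : ∀ x ∈ Ioi (0:ℝ), DifferentiableAt ℝ (deriv (deriv φ)) x)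
    (hMpos : ∀ x ∈ Ioi (0:ℝ), 0 < M x)
    (hM1 : ∀ x ∈ Ioi (0:ℝ), DifferentiableAt ℝ M x)
    (hM2 : ∀ x ∈ Ioi (0:ℝ), DifferentiableAt ℝ (deriv M) x)
    (hM' : ∀ x ∈ Ioi (0:ℝ), deriv M x < 0)
    (hlogM : ∀ x ∈ Ioi (0:ℝ), 0 ≤ deriv (deriv (fun y => Real.log (M y))) x)
    (hφ' : ∀ x ∈ Ioi (0:ℝ), 0 < deriv φ x)
    (hφint : ∀ x ∈ Ioi (0:ℝ), φ x = ∫ t in (1:ℝ)..x, deriv φ t)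
    (hE1 : ∀ x ∈ Ioi (0:ℝ),
      (deriv φ x) ^ 2 * deriv (deriv φ) x
        + φ x * deriv φ x * deriv (deriv (deriv φ)) x
        - 2 * φ x * (deriv (deriv φ) x) ^ 2 ≤ 0)
    (hh : ∀ x ∈ Ioi (0:ℝ), h x = ∫ t in (1:ℝ)..x, deriv φ t * M t) :
    let A : ℝ → ℝ := fun x => deriv (deriv φ) x * φ x - (deriv φ x) ^ 2
    let B : ℝ → ℝ := fun x => deriv (fun y => deriv φ y * M y) x * (φ x) ^ 2
    let C : ℝ → ℝ := fun x => (φ x) ^ 2 * (deriv φ x) ^ 2 * (M x) ^ 2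
    let g : ℝ → ℝ := fun x => if x = 1 then M 1 else h x / φ x
    let L : ℝ := (1/6) * (deriv M 1 / M 1 * (deriv (deriv φ) 1 / deriv φ 1)
      + (4 * M 1 * deriv (deriv M) 1 - 3 * (deriv M 1) ^ 2) / (2 * (M 1) ^ 2))
    Tendsto (fun x => -(A x * (h x) ^ 2 - B x * h x + C x) / ((φ x) ^ 2 * (h x) ^ 2))
      (𝓝[≠] (1:ℝ)) (𝓝 L) ∧
    0 < L ∧
    (∀ x ∈ Ioi (0:ℝ), x ≠ 1 →
      deriv (deriv (fun y => Real.log (g y))) x =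
        -(A x * (h x) ^ 2 - B x * h x + C x) / ((φ x) ^ 2 * (h x) ^ 2)) := by
  intro A B C g L
  have mem1 : (1:ℝ) ∈ Ioi (0:ℝ) := by norm_num
  -- continuity of the integrand
  have hcontInt : ContinuousOn (fun t => deriv φ t * M t) (Ioi (0:ℝ)) := fun t ht =>
    ((hφ2 t ht).continuousAt.mul (hM1 t ht).continuousAt).continuousWithinAt
  -- FTC: derivative of h
  have hDh : ∀ x ∈ Ioi (0:ℝ), HasDerivAt h (deriv φ x * M x) x := by
    intro x hx
    have hsub : uIcc (1:ℝ) x ⊆ Ioi 0 := by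
      intro t ht
      have h0 : (0:ℝ) < min 1 x := lt_min one_pos hx
      exact lt_of_lt_of_le h0 ht.1
    have hF : HasDerivAt (fun u => ∫ t in (1:ℝ)..u, deriv φ t * M t) (deriv φ x * M x) x := by
      apply intervalIntegral.integral_hasDerivAt_right
      · exact (hcontInt.mono hsub).intervalIntegrable
      · exact hcontInt.stronglyMeasurableAtFilter isOpen_Ioi x hx
      · exact (hφ2 x hx).continuousAt.mul (hM1 x hx).continuousAt
    refine hF.congr_of_eventuallyEq ?_
    filter_upwards [isOpen_Ioi.mem_nhds hx] with y hy
    exact hh y hy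
  have h1 : h 1 = 0 := by rw [hh 1 mem1, intervalIntegral.integral_same]
  have hφ10 : φ 1 = 0 := by rw [hφint 1 mem1, intervalIntegral.integral_same]
  -- sign facts
  have hφmono : StrictMonoOn φ (Ioi (0:ℝ)) := by
    apply strictMonoOn_of_deriv_pos (convex_Ioi 0)
    · exact fun x hx => (hφ1 x hx).continuousAt.continuousWithinAt
    · intro x hx
      rw [interior_Ioi] at hx
      exact hφ' x hx
  have hhmono : StrictMonoOn h (Ioi (0:ℝ)) := by
    apply strictMonoOn_of_deriv_pos (convex_Ioi 0)
    · exact fun x hx => (hDh x hx).continuousAt.continuousWithinAt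
    · intro x hx
      rw [interior_Ioi] at hx
      rw [(hDh x hx).deriv]
      exact mul_pos (hφ' x hx) (hMpos x hx)
  have hφsgn : ∀ x ∈ Ioi (0:ℝ), x ≠ 1 → h x / φ x > 0 ∧ φ x ≠ 0 ∧ h x ≠ 0 := by
    intro x hx hx1
    rcases lt_or_gt_of_ne hx1 with hlt | hgt
    · have hφx : φ x < 0 := by rw [← hφ10]; exact hφmono hx mem1 hlt
      have hhx : h x < 0 := by rw [← h1]; exact hhmono hx mem1 hlt
      exact ⟨div_pos_of_neg_of_neg hhx hφx, ne_of_lt hφx, ne_of_lt hhx⟩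
    · have hφx : 0 < φ x := by rw [← hφ10]; exact hφmono mem1 hx hgt
      have hhx : 0 < h x := by rw [← h1]; exact hhmono mem1 hx hgt
      exact ⟨div_pos hhx hφx, ne_of_gt hφx, ne_of_gt hhx⟩
  -- derivative facts for f1h = φ' * M
  have hDf1h : ∀ x ∈ Ioi (0:ℝ), HasDerivAt (fun y => deriv φ y * M y)
      (deriv (fun y => deriv φ y * M y) x) x :=
    fun x hx => ((hφ2 x hx).mul (hM1 x hx)).hasDerivAt
  have hGev : ∀ x ∈ Ioi (0:ℝ), deriv (fun y => deriv φ y * M y) x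
      = deriv (deriv φ) x * M x + deriv φ x * deriv M x :=
    fun x hx => deriv_mul (hφ2 x hx) (hM1 x hx)
  have hG1 : HasDerivAt (fun x => deriv (deriv φ) x * M x + deriv φ x * deriv M x)
      (deriv (deriv (deriv φ)) 1 * M 1 + deriv (deriv φ) 1 * deriv M 1
        + (deriv (deriv φ) 1 * deriv M 1 + deriv φ 1 * deriv (deriv M) 1)) 1 :=
    ((hφ3 1 mem1).hasDerivAt.mul (hM1 1 mem1).hasDerivAt).add
      ((hφ2 1 mem1).hasDerivAt.mul (hM2 1 mem1).hasDerivAt)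
  have hDf2h : HasDerivAt (fun x => deriv (fun y => deriv φ y * M y) x)
      (deriv (deriv (deriv φ)) 1 * M 1 + deriv (deriv φ) 1 * deriv M 1
        + (deriv (deriv φ) 1 * deriv M 1 + deriv φ 1 * deriv (deriv M) 1)) 1 := by
    refine hG1.congr_of_eventuallyEq ?_
    filter_upwards [isOpen_Ioi.mem_nhds mem1] with y hy using hGev y hy
  -- abbreviations for Taylor data at 1
  have ha : (0:ℝ) < deriv φ 1 := hφ' 1 mem1
  have hm : (0:ℝ) < M 1 := hMpos 1 mem1
  have hαh : deriv φ 1 * M 1 ≠ 0 := (mul_pos ha hm).ne'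
  -- apply key lemma to h
  have Th := key_limit h (fun y => deriv φ y * M y) (fun x => deriv (fun y => deriv φ y * M y) x)
    (deriv φ 1 * M 1) (deriv (deriv φ) 1 * M 1 + deriv φ 1 * deriv M 1)
    (deriv (deriv (deriv φ)) 1 * M 1 + deriv (deriv φ) 1 * deriv M 1
        + (deriv (deriv φ) 1 * deriv M 1 + deriv φ 1 * deriv (deriv M) 1))
    (by filter_upwards [isOpen_Ioi.mem_nhds mem1] with y hy using hDh y hy)
    (by filter_upwards [isOpen_Ioi.mem_nhds mem1] with y hy using hDf1h y hy)
    hDf2h h1 rfl (hGev 1 mem1) hαh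
  -- apply key lemma to φ
  have Tφ := key_limit φ (deriv φ) (deriv (deriv φ)) (deriv φ 1) (deriv (deriv φ) 1)
    (deriv (deriv (deriv φ)) 1)
    (by filter_upwards [isOpen_Ioi.mem_nhds mem1] with y hy using (hφ1 y hy).hasDerivAt)
    (by filter_upwards [isOpen_Ioi.mem_nhds mem1] with y hy using (hφ2 y hy).hasDerivAt)
    (hφ3 1 mem1).hasDerivAt hφ10 rfl rfl ha.ne'
  have Tsub := Th.sub Tφ
  -- identify the limit value
  have hLval : (deriv (deriv (deriv φ)) 1 * M 1 + deriv (deriv φ) 1 * deriv M 1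
        + (deriv (deriv φ) 1 * deriv M 1 + deriv φ 1 * deriv (deriv M) 1))
        / (3 * (deriv φ 1 * M 1))
      - (deriv (deriv φ) 1 * M 1 + deriv φ 1 * deriv M 1) ^ 2 / (4 * (deriv φ 1 * M 1) ^ 2)
      - (deriv (deriv (deriv φ)) 1 / (3 * deriv φ 1)
          - (deriv (deriv φ) 1) ^ 2 / (4 * (deriv φ 1) ^ 2)) = L := by
    simp only [L]
    field_simp
    ring
  refine ⟨?_, ?_, ?_⟩
  · -- part 1: the limit
    rw [← hLval]
    refine Tendsto.congr' ?_ Tsub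
    filter_upwards [eventually_mem_nhdsWithin,
      eventually_nhdsWithin_of_eventually_nhds (isOpen_Ioi.mem_nhds mem1)] with x hx1 hx0
    obtain ⟨hgpos, hφne, hhne⟩ := hφsgn x hx0 hx1
    have hxz : x - 1 ≠ 0 := sub_ne_zero.2 hx1
    simp only [A, B, C]
    field_simp
    ring
  · -- part 2: positivity
    have hb : deriv (deriv φ) 1 ≤ 0 := by
      by_contra hbc
      push_neg at hbc
      have hE := hE1 1 mem1
      rw [hφ10] at hE
      nlinarith [mul_pos (mul_pos ha ha) hbc]
    have hm1 : deriv M 1 < 0 := hM' 1 mem1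
    -- second derivative of log M at 1
    have hlogev : deriv (fun y => Real.log (M y)) =ᶠ[𝓝 (1:ℝ)]
        (fun y => deriv M y / M y) := by
      filter_upwards [isOpen_Ioi.mem_nhds mem1] with y hy
      exact ((hM1 y hy).hasDerivAt.log (hMpos y hy).ne').deriv
    have hQ : HasDerivAt (fun y => deriv M y / M y)
        ((deriv (deriv M) 1 * M 1 - deriv M 1 * deriv M 1) / (M 1) ^ 2) 1 :=
      (hM2 1 mem1).hasDerivAt.div (hM1 1 mem1).hasDerivAt hm.ne'
    have hlog2 : deriv (deriv (fun y => Real.log (M y))) 1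
        = (deriv (deriv M) 1 * M 1 - deriv M 1 * deriv M 1) / (M 1) ^ 2 := by
      rw [hlogev.deriv_eq, hQ.deriv]
    have hX : 0 ≤ deriv (deriv M) 1 * M 1 - deriv M 1 * deriv M 1 := by
      have hlm := hlogM 1 mem1
      rw [hlog2] at hlm
      have h2 := mul_nonneg hlm (le_of_lt (pow_pos hm 2))
      rwa [div_mul_cancel₀] at h2
      positivity
    -- conclude
    have ht1 : 0 ≤ deriv M 1 / M 1 * (deriv (deriv φ) 1 / deriv φ 1) := by
      rw [div_mul_div_comm]
      apply div_nonneg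
      · nlinarith
      · positivity
    have ht2 : 0 < (4 * M 1 * deriv (deriv M) 1 - 3 * (deriv M 1) ^ 2) / (2 * (M 1) ^ 2) := by
      apply div_pos
      · nlinarith [mul_pos (neg_pos.2 hm1) (neg_pos.2 hm1)]
      · positivity
    show 0 < (1/6 : ℝ) * _
    nlinarith [ht1, ht2]
  · -- part 3: second log-derivative formula
    intro x hx hx1
    obtain ⟨hgpos, hφne, hhne⟩ := hφsgn x hx hx1
    have hd1 : ∀ y ∈ Ioi (0:ℝ), y ≠ 1 →
        deriv (fun z => Real.log (g z)) y = deriv φ y * M y / h y - deriv φ y / φ y := by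
      intro y hy hy1
      obtain ⟨hgpos', hφne', hhne'⟩ := hφsgn y hy hy1
      have hdiv : HasDerivAt (fun z => h z / φ z)
          ((deriv φ y * M y * φ y - h y * deriv φ y) / (φ y) ^ 2) y :=
        (hDh y hy).div (hφ1 y hy).hasDerivAt hφne'
      have hlog : HasDerivAt (fun z => Real.log (h z / φ z))
          (((deriv φ y * M y * φ y - h y * deriv φ y) / (φ y) ^ 2) / (h y / φ y)) y :=
        hdiv.log (ne_of_gt hgpos')
      have hgev : (fun z => Real.log (g z)) =ᶠ[𝓝 y] (fun z => Real.log (h z / φ z)) := by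
        filter_upwards [isOpen_ne.mem_nhds hy1] with z hz1
        simp only [g, if_neg hz1]
      rw [hgev.deriv_eq, hlog.deriv]
      field_simp
    have hev2 : deriv (fun z => Real.log (g z)) =ᶠ[𝓝 x]
        (fun y => deriv φ y * M y / h y - deriv φ y / φ y) := by
      filter_upwards [isOpen_Ioi.mem_nhds hx, isOpen_ne.mem_nhds hx1] with y hy hy1
      exact hd1 y hy hy1
    have hD2 : HasDerivAt (fun y => deriv φ y * M y / h y - deriv φ y / φ y)
        ((deriv (fun y => deriv φ y * M y) x * h x
            - deriv φ x * M x * (deriv φ x * M x)) / (h x) ^ 2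
          - (deriv (deriv φ) x * φ x - deriv φ x * deriv φ x) / (φ x) ^ 2) x :=
      ((hDf1h x hx).div (hDh x hx) hhne).sub
        ((hφ2 x hx).hasDerivAt.div (hφ1 x hx).hasDerivAt hφne)
    rw [hev2.deriv_eq, hD2.deriv]
    simp only [A, B, C]
    field_simp
    ring
end

section
/- Let φ(y) = −∫_y^∞ e^{t − e^t} dt, M(y) = e^{y²}, and h(y) = −∫_y^∞ φ'(t)M(t) dt for y ∈ (0,∞). Then (h/φ)' > 0 and (log(h/φ))'' > 0 everywhere on (0,∞). -/
open Real Set Filter Topology MeasureTheory Asymptotics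

noncomputable def fio (t : ℝ) : ℝ := Real.exp (t - Real.exp t) * Real.exp (t ^ 2)
noncomputable def gio (y : ℝ) : ℝ := ∫ t in Ioi y, fio t

lemma fio_pos (t : ℝ) : 0 < fio t := mul_pos (exp_pos _) (exp_pos _)

lemma fio_cont : Continuous fio := by
  unfold fio; fun_prop

lemma fio_le (t : ℝ) (ht : 9 ≤ t) : fio t ≤ Real.exp (-t) := by
  rw [fio, ← Real.exp_add]
  apply Real.exp_le_exp.2
  have h4 : (1 + t/4) ≤ Real.exp (t/4) := by
    have := Real.add_one_le_exp (t/4); linarith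
  have hb : (1 + t/4)^4 ≤ Real.exp t := by
    have h0 : (0:ℝ) ≤ 1 + t/4 := by linarith
    calc (1 + t/4)^4 ≤ (Real.exp (t/4))^4 := by
            exact pow_le_pow_left₀ h0 h4 4
      _ = Real.exp t := by
            rw [← Real.exp_nat_mul]; ring_nf
  nlinarith [hb, mul_nonneg (by linarith : (0:ℝ) ≤ t - 9) (sq_nonneg t),
    mul_nonneg (mul_nonneg (by linarith : (0:ℝ) ≤ t - 9) (by linarith : (0:ℝ) ≤ t)) (by linarith : (0:ℝ) ≤ t)]

lemma fio_integrableOn (y : ℝ) : IntegrableOn fio (Ioi y) := by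
  apply IntegrableOn.mono_set (t := Ioc y 9 ∪ Ioi 9) _ Ioi_subset_Ioc_union_Ioi
  apply IntegrableOn.union
  · exact fio_cont.integrableOn_Ioc
  · apply Integrable.mono' (g := fun x => Real.exp (-1 * x))
    · simpa [IntegrableOn] using exp_neg_integrableOn_Ioi 9 one_pos
    · exact (fio_cont.aestronglyMeasurable).restrict
    · filter_upwards [ae_restrict_mem measurableSet_Ioi] with x hx
      rw [Real.norm_eq_abs, abs_of_pos (fio_pos x)]
      simpa using fio_le x (le_of_lt hx)

lemma gio_pos (y : ℝ) : 0 < gio y := by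
  rw [gio]
  rw [setIntegral_pos_iff_support_of_nonneg_ae]
  · have hsupp : Function.support fio = univ := by
      ext t; simp [Function.mem_support, (fio_pos t).ne']
    rw [hsupp, Set.univ_inter]
    simpa using measure_Ioi_pos (volume : Measure ℝ) y
  · filter_upwards with x using (fio_pos x).le
  · exact fio_integrableOn y

lemma gio_eq (y : ℝ) : gio y = gio 0 - ∫ t in (0:ℝ)..y, fio t := by
  rcases le_or_gt 0 y with hy | hy
  · rw [intervalIntegral.integral_of_le hy, eq_sub_iff_add_eq,
      gio, gio, add_comm,
      ← setIntegral_union (Ioc_disjoint_Ioi le_rfl) measurableSet_Ioi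
        ((fio_integrableOn 0).mono_set Ioc_subset_Ioi_self) (fio_integrableOn y),
      Ioc_union_Ioi_eq_Ioi hy]
  · rw [intervalIntegral.integral_of_ge hy.le,
      sub_neg_eq_add, gio, gio, add_comm,
      ← setIntegral_union (Ioc_disjoint_Ioi le_rfl) measurableSet_Ioi
        ((fio_integrableOn y).mono_set Ioc_subset_Ioi_self) (fio_integrableOn 0),
      Ioc_union_Ioi_eq_Ioi hy.le]

lemma hasDerivAt_gio (y : ℝ) : HasDerivAt gio (-fio y) y := by
  have h1 : HasDerivAt (fun x => ∫ t in (0:ℝ)..x, fio t) (fio y) y := by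
    apply intervalIntegral.integral_hasDerivAt_right
    · exact (fio_cont.intervalIntegrable 0 y)
    · exact fio_cont.stronglyMeasurableAtFilter _ _
    · exact fio_cont.continuousAt
  have h2 : HasDerivAt (fun x => gio 0 - ∫ t in (0:ℝ)..x, fio t) (-fio y) y :=
    (h1.const_sub (gio 0)).congr_deriv (by ring)
  exact h2.congr_of_eventuallyEq (Filter.Eventually.of_forall fun x => gio_eq x)

lemma gio_le (y : ℝ) (hy : 9 ≤ y) : gio y ≤ Real.exp (-y) := by
  have : gio y ≤ ∫ t in Ioi y, Real.exp (-t) := by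
    apply setIntegral_mono_on (fio_integrableOn y)
      (by simpa using exp_neg_integrableOn_Ioi y one_pos) measurableSet_Ioi
    intro x hx
    exact fio_le x (hy.trans (le_of_lt hx))
  rwa [integral_exp_neg_Ioi] at this

lemma gio_tendsto : Tendsto gio atTop (𝓝 0) := by
  have h1 : Tendsto (fun y : ℝ => Real.exp (-y)) atTop (𝓝 0) := by
    simpa using Real.tendsto_exp_neg_atTop_nhds_zero
  apply squeeze_zero' (Filter.Eventually.of_forall fun y => (gio_pos y).le)
    (by filter_upwards [eventually_ge_atTop (9:ℝ)] with y hy using gio_le y hy) h1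

lemma phi_eq (y : ℝ) : (∫ t in Ioi y, Real.exp (t - Real.exp t)) = Real.exp (-Real.exp y) := by
  have hint : IntegrableOn (fun t => Real.exp (t - Real.exp t)) (Ioi y) := by
    apply Integrable.mono' (g := fun x => Real.exp (-1 * x))
    · simpa [IntegrableOn] using exp_neg_integrableOn_Ioi y one_pos
    · exact (Continuous.aestronglyMeasurable (by fun_prop)).restrict
    · filter_upwards with x
      rw [Real.norm_eq_abs, abs_of_pos (exp_pos _), neg_one_mul, Real.exp_le_exp]
      have hsq : Real.exp (x/2) * Real.exp (x/2) = Real.exp x := by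
        rw [← Real.exp_add]; ring_nf
      nlinarith [hsq, Real.add_one_le_exp (x/2), sq_nonneg (x/2 - 1), Real.exp_pos (x/2)]
  have hderiv : ∀ x ∈ Ici y, HasDerivAt (fun t => -Real.exp (-Real.exp t))
      (Real.exp (x - Real.exp x)) x := by
    intro x _
    have : HasDerivAt (fun t => -Real.exp (-Real.exp t))
        (-(Real.exp (-Real.exp x) * -Real.exp x)) x := (((Real.hasDerivAt_exp x).neg).exp.neg)
    convert this using 1
    rw [Real.exp_sub]
    field_simp [Real.exp_neg]
    rw [← Real.exp_add, add_neg_cancel, Real.exp_zero]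
  have htend : Tendsto (fun t => -Real.exp (-Real.exp t)) atTop (𝓝 0) := by
    rw [show (0:ℝ) = -0 by ring]
    apply Tendsto.neg
    exact Real.tendsto_exp_neg_atTop_nhds_zero.comp Real.tendsto_exp_atTop |>.congr (fun x => rfl)
  have := integral_Ioi_of_hasDerivAt_of_tendsto' hderiv hint htend
  rw [this, zero_sub, neg_neg]

noncomputable def aio (y : ℝ) : ℝ := 1 + 2*y - Real.exp y
noncomputable def sio (y : ℝ) : ℝ := Real.sqrt (aio y ^ 2 + 4 * Real.exp y)
noncomputable def rio (y : ℝ) : ℝ := (-aio y + sio y) / 2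

lemma sio_sq (y : ℝ) : sio y ^ 2 = aio y ^ 2 + 4 * Real.exp y := by
  rw [sio, Real.sq_sqrt]; positivity

lemma sio_pos (y : ℝ) : 0 < sio y := by
  rw [sio]; apply Real.sqrt_pos.2; positivity

lemma abs_aio_lt_sio (y : ℝ) : |aio y| < sio y := by
  have h1 := sio_sq y
  have h2 := sio_pos y
  have h3 : |aio y| ^ 2 < sio y ^ 2 := by rw [sq_abs]; nlinarith [Real.exp_pos y]
  exact lt_of_pow_lt_pow_left₀ 2 h2.le h3

lemma rio_pos (y : ℝ) : 0 < rio y := by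
  have := abs_aio_lt_sio y
  have := abs_le.1 (le_of_lt this)
  rw [rio]; rcases abs_lt.1 (abs_aio_lt_sio y) with ⟨h1, h2⟩; linarith

lemma rio_add_aio_pos (y : ℝ) : 0 < rio y + aio y := by
  rw [rio]; rcases abs_lt.1 (abs_aio_lt_sio y) with ⟨h1, h2⟩; linarith

lemma rio_root (y : ℝ) : rio y ^ 2 + aio y * rio y = Real.exp y := by
  have h1 := sio_sq y
  rw [rio]; field_simp; nlinarith [h1]

lemma rio_le_exp (y : ℝ) (hy : 0 ≤ y) : rio y ≤ Real.exp y := by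
  have hroot := rio_root y
  have hr := rio_pos y
  have h1 : 1 ≤ rio y + aio y := by
    have hs := sio_pos y
    have hsq := sio_sq y
    rw [rio]
    rcases le_or_gt (2 - aio y) 0 with h | h
    · linarith
    · have : (2 - aio y)^2 ≤ sio y ^2 := by
        rw [hsq, aio]
        nlinarith [Real.exp_pos y]
      have h2 : 2 - aio y ≤ sio y := by nlinarith
      linarith
  nlinarith

noncomputable def rio' (y : ℝ) : ℝ :=
  ((Real.exp y - 2) + (2 * aio y * (2 - Real.exp y) + 4 * Real.exp y) / (2 * sio y)) / 2

lemma hasDerivAt_aio (y : ℝ) : HasDerivAt aio (2 - Real.exp y) y := by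
  unfold aio
  have h1 : HasDerivAt (fun y : ℝ => 1 + 2*y) 2 y := by
    simpa using ((hasDerivAt_id y).const_mul (2:ℝ)).const_add 1
  exact h1.sub (Real.hasDerivAt_exp y)

lemma hasDerivAt_sio (y : ℝ) :
    HasDerivAt sio ((2 * aio y * (2 - Real.exp y) + 4 * Real.exp y) / (2 * sio y)) y := by
  have hin : HasDerivAt (fun y => aio y ^ 2 + 4 * Real.exp y)
      (2 * aio y * (2 - Real.exp y) + 4 * Real.exp y) y := by
    have h1 := ((hasDerivAt_aio y).pow 2)
    have h2 := (Real.hasDerivAt_exp y).const_mul (4:ℝ)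
    exact (h1.add h2).congr_deriv (by ring)
  have hne : aio y ^ 2 + 4 * Real.exp y ≠ 0 := by positivity
  exact hin.sqrt hne

lemma hasDerivAt_rio (y : ℝ) : HasDerivAt rio (rio' y) y := by
  have := ((hasDerivAt_aio y).neg.add (hasDerivAt_sio y)).div_const 2
  refine this.congr_deriv ?_
  rw [rio']; ring

lemma rio'_lt_exp (y : ℝ) : rio' y < Real.exp y := by
  have hEpos : 0 < Real.exp y := Real.exp_pos y
  have hs := sio_pos y
  have hsq := sio_sq y
  set E := Real.exp y with hE
  have key : aio y * (2 - E) + 2 * E < (E + 2) * sio y := by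
    have hCs : 0 < (E + 2) * sio y := mul_pos (by linarith) hs
    rcases le_or_gt (aio y * (2 - E) + 2 * E) 0 with h | h
    · exact h.trans_lt hCs
    · have hsq2 : (E+2)^2 * sio y ^ 2 = (E+2)^2 * (aio y^2 + 4*E) := by rw [hsq]
      have hXs : (aio y * (2 - E) + 2 * E)^2 < ((E+2) * sio y)^2 := by
        nlinarith [hsq2, mul_nonneg hEpos.le (sq_nonneg (4 * aio y + E - 2)),
          mul_pos hEpos (show (0:ℝ) < (E+2)^2 by positivity)]
      exact lt_of_pow_lt_pow_left₀ 2 hCs.le hXs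
  rw [rio']
  rw [div_lt_iff₀ (by norm_num : (0:ℝ) < 2)]
  have h2 : (2 * aio y * (2 - E) + 4 * E) / (2 * sio y) < E + 2 := by
    rw [div_lt_iff₀ (by positivity)]
    nlinarith [key, mul_pos hs (show (0:ℝ) < E + 2 by linarith)]
  linarith

lemma hasDerivAt_fio (y : ℝ) : HasDerivAt fio (aio y * fio y) y := by
  have h1 : HasDerivAt (fun t : ℝ => Real.exp (t - Real.exp t))
      ((1 - Real.exp y) * Real.exp (y - Real.exp y)) y := by
    have := ((hasDerivAt_id y).sub (Real.hasDerivAt_exp y)).exp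
    simpa [mul_comm] using this
  have h2 : HasDerivAt (fun t : ℝ => Real.exp (t ^ 2)) (2 * y * Real.exp (y ^ 2)) y := by
    have := ((hasDerivAt_pow 2 y)).exp
    simpa [mul_comm] using this
  have := h1.mul h2
  refine this.congr_deriv ?_
  rw [fio, aio]; ring

noncomputable def Dio (y : ℝ) : ℝ := gio y - fio y / rio y

lemma hasDerivAt_Dio (y : ℝ) :
    HasDerivAt Dio (-(fio y * (Real.exp y - rio' y)) / rio y ^ 2) y := by
  have hne : rio y ≠ 0 := (rio_pos y).ne'
  have h1 := (hasDerivAt_gio y).sub (((hasDerivAt_fio y).div (hasDerivAt_rio y)) hne)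
  refine h1.congr_deriv ?_
  symm
  have hroot := rio_root y
  field_simp
  linear_combination (fio y) * hroot

lemma deriv_Dio_neg (y : ℝ) : deriv Dio y < 0 := by
  rw [(hasDerivAt_Dio y).deriv]
  have h1 : 0 < fio y * (Real.exp y - rio' y) :=
    mul_pos (fio_pos y) (sub_pos.2 (rio'_lt_exp y))
  have h2 : (0:ℝ) < rio y ^ 2 := pow_pos (rio_pos y) 2
  exact div_neg_of_neg_of_pos (neg_neg_iff_pos.2 h1) h2

lemma one_le_rio (y : ℝ) (hy : 9 ≤ y) : 1 ≤ rio y := by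
  have h1 : Real.exp y ≥ 2*y + 3 := by
    have h2 := Real.add_one_le_exp (y/2)
    have hsq : Real.exp (y/2) * Real.exp (y/2) = Real.exp y := by
      rw [← Real.exp_add]; ring_nf
    nlinarith [sq_nonneg (y/2 - 3)]
  have hs := sio_pos y
  rw [rio, aio]
  linarith

lemma Dio_tendsto : Tendsto Dio atTop (𝓝 0) := by
  have h1 : Tendsto (fun y : ℝ => Real.exp (-y)) atTop (𝓝 0) := by
    simpa using Real.tendsto_exp_neg_atTop_nhds_zero
  have h1n : Tendsto (fun y : ℝ => -Real.exp (-y)) atTop (𝓝 0) := by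
    simpa using h1.neg
  apply tendsto_of_tendsto_of_tendsto_of_le_of_le' h1n h1
  · filter_upwards [eventually_ge_atTop (9:ℝ)] with y hy
    rw [Dio]
    have hfr : fio y / rio y ≤ fio y := by
      rw [div_le_iff₀ (rio_pos y)]
      nlinarith [fio_pos y, one_le_rio y hy]
    have := fio_le y hy
    have := gio_pos y
    linarith
  · filter_upwards [eventually_ge_atTop (9:ℝ)] with y hy
    rw [Dio]
    have h2 : 0 < fio y / rio y := div_pos (fio_pos y) (rio_pos y)
    have := gio_le y hy
    linarith

lemma Dio_strictAnti : StrictAnti Dio :=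
  strictAnti_of_deriv_neg deriv_Dio_neg

lemma Dio_pos (y : ℝ) : 0 < Dio y := by
  have h1 : Dio (y + 1) < Dio y := Dio_strictAnti (by linarith)
  have h2 : 0 ≤ Dio (y + 1) := by
    apply le_of_tendsto Dio_tendsto
    filter_upwards [eventually_ge_atTop (y + 1)] with x hx
    exact Dio_strictAnti.antitone hx
  linarith

lemma key_ineq (y : ℝ) : fio y < rio y * gio y := by
  have hD := Dio_pos y
  rw [Dio, sub_pos, div_lt_iff₀ (rio_pos y)] at hD
  linarith [hD]

lemma Eg_ineq (y : ℝ) (hy : 0 ≤ y) : fio y < Real.exp y * gio y := by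
  have h1 := key_ineq y
  have h2 := rio_le_exp y hy
  nlinarith [gio_pos y]

lemma main_ineq2 (y : ℝ) :
    aio y * fio y * gio y + fio y ^ 2 < Real.exp y * gio y ^ 2 := by
  have hexpand : Real.exp y * gio y ^ 2 - aio y * fio y * gio y - fio y ^ 2
      = (rio y * gio y - fio y) * (rio y * gio y + fio y + aio y * gio y) := by
    linear_combination (-(gio y ^ 2)) * (rio_root y)
  have h1 : 0 < rio y * gio y - fio y := sub_pos.2 (key_ineq y)
  have h2 : 0 < rio y * gio y + fio y + aio y * gio y := by
    have := mul_pos (rio_add_aio_pos y) (gio_pos y)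
    nlinarith [fio_pos y]
  nlinarith [mul_pos h1 h2]

/-- Final auxiliary example of the paper: with `φ(y) = −∫ʸ^∞ e^{t−eᵗ} dt`,
`M(y) = e^{y²}` and `h(y) = −∫ʸ^∞ φ'(t)M(t) dt = −∫ʸ^∞ e^{t−eᵗ}e^{t²} dt`,
one has `(h/φ)' > 0` and `(log (h/φ))'' > 0` on `(0,∞)`. -/
theorem stmt19 :
    let φ : ℝ → ℝ := fun y => -∫ t in Ioi y, Real.exp (t - Real.exp t)
    let M : ℝ → ℝ := fun y => Real.exp (y ^ 2)
    let h : ℝ → ℝ := fun y => -∫ t in Ioi y, Real.exp (t - Real.exp t) * M t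
    ∀ y ∈ Ioi (0:ℝ),
      0 < deriv (fun x => h x / φ x) y ∧
      0 < deriv (deriv (fun x => Real.log (h x / φ x))) y := by
  intro φ M h y hy
  have hy0 : (0:ℝ) < y := hy
  have hquot : (fun x => h x / φ x) = fun x => gio x * Real.exp (Real.exp x) := by
    funext x
    have hφ : φ x = -Real.exp (-Real.exp x) := by
      show -(∫ t in Ioi x, Real.exp (t - Real.exp t)) = _
      rw [phi_eq]
    have hh : h x = -gio x := rfl
    rw [hφ, hh, neg_div_neg_eq, Real.exp_neg]
    field_simp
  constructor
  · rw [hquot]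
    have hD : HasDerivAt (fun x => gio x * Real.exp (Real.exp x))
        (-fio y * Real.exp (Real.exp y) + gio y * (Real.exp (Real.exp y) * Real.exp y)) y :=
      (hasDerivAt_gio y).mul (Real.hasDerivAt_exp y).exp
    rw [hD.deriv]
    nlinarith [Eg_ineq y hy0.le, Real.exp_pos (Real.exp y)]
  · have hlog : (fun x => Real.log (h x / φ x)) = fun x => Real.log (gio x) + Real.exp x := by
      funext x
      rw [show h x / φ x = gio x * Real.exp (Real.exp x) from congrFun hquot x,
        Real.log_mul (gio_pos x).ne' (Real.exp_ne_zero _), Real.log_exp]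
    have hd1 : deriv (fun x => Real.log (gio x) + Real.exp x)
        = fun x => -fio x / gio x + Real.exp x := by
      funext x
      exact (((hasDerivAt_gio x).log (gio_pos x).ne').add (Real.hasDerivAt_exp x)).deriv
    rw [hlog, hd1]
    have hD2 : HasDerivAt (fun x => -fio x / gio x + Real.exp x)
        (-((aio y * fio y * gio y - fio y * -fio y) / gio y ^ 2) + Real.exp y) y := by
      have h4 := ((hasDerivAt_fio y).div (hasDerivAt_gio y) (gio_pos y).ne').neg.add
        (Real.hasDerivAt_exp y)
      exact (h4.congr_deriv (by ring)).congr_of_eventuallyEq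
        (Filter.Eventually.of_forall fun x => by simp only [Pi.add_apply, Pi.neg_apply, Pi.div_apply]; ring)
    rw [hD2.deriv]
    have hg2 : (0:ℝ) < gio y ^ 2 := pow_pos (gio_pos y) 2
    have h3 : (aio y * fio y * gio y - fio y * -fio y) / gio y ^ 2 < Real.exp y := by
      rw [div_lt_iff₀ hg2]
      nlinarith [main_ineq2 y]
    linarith
end
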